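/- arXiv:2001.00158 — 15 statements merged into one kernel-verified Lean document; each statement's English description precedes it below -/
import Mathlib

section
/- Let q = 2^m and let U be the set of u in GF(q^2) with u^{q+1} = 1. For any two distinct elements u1, u2 of U, the element a = u1*u2/(u1^2 + u2^2) lies in GF(q) and has absolute trace Tr_{GF(q)/GF(2)}(a) = 1. -/
/-- Let `q = 2^m` and let `U` be the set of `u` in `GF(q^2)` with `u^(q+1) = 1`.
For any two distinct `u1 u2 ∈ U`, `a = u1*u2/(u1^2+u2^2)` lies in `GF(q)`
(i.e. `a^q = a`) and its absolute trace `∑_{i<m} a^(2^i)` equals `1`. -/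
theorem stmt_0 (m : ℕ) (hm : 0 < m) (F : Type*) [Field F] [Fintype F]
    (hF : Fintype.card F = 2 ^ (2 * m))
    (u1 u2 : F) (h1 : u1 ^ (2 ^ m + 1) = 1) (h2 : u2 ^ (2 ^ m + 1) = 1)
    (hne : u1 ≠ u2) :
    (u1 * u2 / (u1 ^ 2 + u2 ^ 2)) ^ (2 ^ m) = u1 * u2 / (u1 ^ 2 + u2 ^ 2) ∧
    ∑ i ∈ Finset.range m, (u1 * u2 / (u1 ^ 2 + u2 ^ 2)) ^ (2 ^ i) = 1 := by
  -- characteristic 2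
  haveI hchar : CharP F 2 := by
    set p := ringChar F with hp
    haveI hpf : Fact p.Prime := ⟨CharP.char_is_prime F p⟩
    obtain ⟨n, hcard⟩ := FiniteField.card F p
    have hdvd : p ∣ 2 := by
      have : p ∣ 2 ^ (2 * m) := by
        rw [← hF, hcard.2]
        exact dvd_pow_self p n.ne_zero
      exact Nat.Prime.dvd_of_dvd_pow hpf.out this
    have hp2 : p = 2 := (Nat.prime_dvd_prime_iff_eq hpf.out Nat.prime_two).mp hdvd
    rw [← hp2]
    exact ringChar.charP F
  haveI : Fact (Nat.Prime 2) := ⟨Nat.prime_two⟩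
  have h20 : (2 : F) = 0 := CharTwo.two_eq_zero
  have h1ne : u1 ≠ 0 := by
    intro h; rw [h] at h1; simp at h1
  have h2ne : u2 ≠ 0 := by
    intro h; rw [h] at h2; simp at h2
  have hs : u1 + u2 ≠ 0 := by
    intro h
    exact hne (CharTwo.add_eq_iff_eq_add.mp h |>.trans (zero_add u2))
  set x : F := u1 / (u1 + u2) with hx
  have hx1 : x + 1 = u2 / (u1 + u2) := by
    rw [hx, div_add_one hs]
    congr 1
    linear_combination u1 * h20
  -- a = x^2 + x
  have ha : u1 * u2 / (u1 ^ 2 + u2 ^ 2) = x ^ 2 + x := by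
    rw [← CharTwo.add_sq]
    have h' : x ^ 2 + x = x * (x + 1) := by ring
    rw [h', hx1, hx, div_mul_div_comm, ← sq]
  -- u^q = u⁻¹
  have hq1 : u1 ^ (2 ^ m) = u1⁻¹ :=
    eq_inv_of_mul_eq_one_left (by rw [← pow_succ]; exact h1)
  have hq2 : u2 ^ (2 ^ m) = u2⁻¹ :=
    eq_inv_of_mul_eq_one_left (by rw [← pow_succ]; exact h2)
  -- x^q = x + 1
  have hxq : x ^ (2 ^ m) = x + 1 := by
    rw [hx, div_pow, add_pow_char_pow, hq1, hq2, hx1]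
    rw [div_eq_div_iff (by
      intro h
      apply hs
      have : u1 * u2 * (u1⁻¹ + u2⁻¹) = 0 := by rw [h, mul_zero]
      rw [mul_add] at this
      field_simp at this
      linear_combination this) hs]
    field_simp
    ring
  rw [ha]
  constructor
  · -- a^q = a
    rw [add_pow_char_pow, ← pow_mul, mul_comm 2 (2 ^ m), pow_mul, hxq]
    rw [CharTwo.add_sq]
    linear_combination h20
  · -- trace
    have key : ∀ i, (x ^ 2 + x) ^ (2 ^ i) = x ^ (2 ^ (i + 1)) - x ^ (2 ^ i) := by
      intro i
      rw [CharTwo.sub_eq_add, add_pow_char_pow, ← pow_mul, mul_comm 2 (2 ^ i), ← pow_succ]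
    calc ∑ i ∈ Finset.range m, (x ^ 2 + x) ^ (2 ^ i)
        = ∑ i ∈ Finset.range m, (x ^ (2 ^ (i + 1)) - x ^ (2 ^ i)) := by
          exact Finset.sum_congr rfl fun i _ => key i
      _ = x ^ (2 ^ m) - x ^ (2 ^ 0) := Finset.sum_range_sub (fun i => x ^ (2 ^ i)) m
      _ = 1 := by rw [hxq, pow_zero, pow_one]; ring
end

section
/- Let q = 2^m and let U be the group of (q+1)-st roots of unity in GF(q^2). For any four pairwise distinct elements u1, u2, u3, u4 of U, the sum u1 + u2 + u3 + u4 is nonzero. -/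
lemma aux_pairprod {F : Type*} [Field F] (q : ℕ)
    (h2 : (2 : F) = 0)
    (frob : ∀ a b : F, (a + b) ^ q = a ^ q + b ^ q)
    (a b c d : F) (ha : a ^ (q + 1) = 1) (hb : b ^ (q + 1) = 1)
    (hc : c ^ (q + 1) = 1) (hd : d ^ (q + 1) = 1)
    (hab : a ≠ b) (hsum : a + b = c + d) : a * b = c * d := by
  have hna : a ≠ 0 := by
    intro h; rw [h, zero_pow (Nat.succ_ne_zero q)] at ha; exact one_ne_zero ha.symm
  have hnb : b ≠ 0 := by
    intro h; rw [h, zero_pow (Nat.succ_ne_zero q)] at hb; exact one_ne_zero hb.symm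
  have hnc : c ≠ 0 := by
    intro h; rw [h, zero_pow (Nat.succ_ne_zero q)] at hc; exact one_ne_zero hc.symm
  have hnd : d ≠ 0 := by
    intro h; rw [h, zero_pow (Nat.succ_ne_zero q)] at hd; exact one_ne_zero hd.symm
  have ea : a ^ q = a⁻¹ := by
    apply eq_inv_of_mul_eq_one_left; rw [pow_succ] at ha; exact ha
  have eb : b ^ q = b⁻¹ := by
    apply eq_inv_of_mul_eq_one_left; rw [pow_succ] at hb; exact hb
  have ec : c ^ q = c⁻¹ := by
    apply eq_inv_of_mul_eq_one_left; rw [pow_succ] at hc; exact hc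
  have ed : d ^ q = d⁻¹ := by
    apply eq_inv_of_mul_eq_one_left; rw [pow_succ] at hd; exact hd
  have hab0 : a + b ≠ 0 := by
    intro h
    apply hab
    linear_combination h - b * h2
  have key : (a⁻¹ + b⁻¹) * (a + b) = (c⁻¹ + d⁻¹) * (c + d) := by
    rw [← ea, ← eb, ← ec, ← ed, ← frob, ← frob, hsum]
  rw [← hsum] at key
  have key2 : a⁻¹ + b⁻¹ = c⁻¹ + d⁻¹ := mul_right_cancel₀ hab0 key
  field_simp at key2
  -- key2 : (b + a) * (c * d) = (d + c) * (a * b)  (up to normal form)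
  have hcd0 : c + d ≠ 0 := hsum ▸ hab0
  apply mul_left_cancel₀ hab0
  calc (a + b) * (a * b) = (d + c) * (a * b) := by rw [hsum]; ring_nf
    _ = (b + a) * (c * d) := by linear_combination key2.symm
    _ = (a + b) * (c * d) := by ring



/-- For four pairwise distinct `(q+1)`-st roots of unity in `GF(q^2)`, `q = 2^m`,
their sum is nonzero. -/
theorem stmt_1 (m : ℕ) (hm : 0 < m) (F : Type*) [Field F] [Fintype F]
    (hF : Fintype.card F = 2 ^ (2 * m))
    (u1 u2 u3 u4 : F)
    (h1 : u1 ^ (2 ^ m + 1) = 1) (h2 : u2 ^ (2 ^ m + 1) = 1)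
    (h3 : u3 ^ (2 ^ m + 1) = 1) (h4 : u4 ^ (2 ^ m + 1) = 1)
    (h12 : u1 ≠ u2) (h13 : u1 ≠ u3) (h14 : u1 ≠ u4)
    (h23 : u2 ≠ u3) (h24 : u2 ≠ u4) (h34 : u3 ≠ u4) :
    u1 + u2 + u3 + u4 ≠ 0 := by
  -- characteristic 2
  obtain ⟨p, hcp⟩ := CharP.exists F
  haveI := hcp
  haveI hp : Fact p.Prime := ⟨CharP.char_is_prime F p⟩
  obtain ⟨n, hn⟩ := FiniteField.card F p
  have hp2 : p = 2 := by
    have hdvd : p ∣ 2 ^ (2 * m) := by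
      rw [← hF, hn.2]; exact dvd_pow_self p (PNat.ne_zero n)
    have := (Nat.Prime.dvd_of_dvd_pow hp.out hdvd)
    exact (Nat.prime_dvd_prime_iff_eq hp.out Nat.prime_two).mp this
  subst hp2
  haveI : CharP F 2 := hcp
  have htwo : (2 : F) = 0 := by
    exact_mod_cast (CharP.cast_eq_zero F 2)
  have frob : ∀ a b : F, (a + b) ^ (2 ^ m) = a ^ (2 ^ m) + b ^ (2 ^ m) := by
    intro a b; exact add_pow_char_pow ..
  intro hsum
  have hA : u1 + u2 = u3 + u4 := by linear_combination hsum - (u3 + u4) * htwo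
  have hB : u1 + u3 = u2 + u4 := by linear_combination hsum - (u2 + u4) * htwo
  have hP : u1 * u2 = u3 * u4 :=
    aux_pairprod (2 ^ m) htwo frob u1 u2 u3 u4 h1 h2 h3 h4 h12 hA
  have hQ : u1 * u3 = u2 * u4 :=
    aux_pairprod (2 ^ m) htwo frob u1 u3 u2 u4 h1 h3 h2 h4 h13 hB
  have hn2 : u2 ≠ 0 := by
    intro h; rw [h, zero_pow (Nat.succ_ne_zero _)] at h2; exact one_ne_zero h2.symm
  have hn3 : u3 ≠ 0 := by
    intro h; rw [h, zero_pow (Nat.succ_ne_zero _)] at h3; exact one_ne_zero h3.symm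
  have hsq : u1 ^ 2 = u4 ^ 2 := by
    have h23' : u2 * u3 ≠ 0 := mul_ne_zero hn2 hn3
    apply mul_right_cancel₀ h23'
    linear_combination u1 * u3 * hP + u3 * u4 * hQ
  apply h14
  have : (u1 + u4) ^ 2 = 0 := by linear_combination hsq + u1 * u4 * htwo + u4 ^ 2 * htwo
  have h0 : u1 + u4 = 0 := by
    exact pow_eq_zero_iff (n := 2) (by norm_num) |>.mp this
  linear_combination h0 - u4 * htwo
end

section
/- Let q = 2^m with m even, and let U be the group of (q+1)-st roots of unity in GF(q^2). For any three pairwise distinct elements u1, u2, u3 of U, the sum u1 + u2 + u3 is nonzero. -/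
/-- For `q = 2^m` with `m` even, the sum of three pairwise distinct `(q+1)`-st
roots of unity in `GF(q^2)` is nonzero. -/
theorem stmt_2 (m : ℕ) (hm : 0 < m) (hme : Even m) (F : Type*) [Field F] [Fintype F]
    (hF : Fintype.card F = 2 ^ (2 * m))
    (u1 u2 u3 : F)
    (h1 : u1 ^ (2 ^ m + 1) = 1) (h2 : u2 ^ (2 ^ m + 1) = 1)
    (h3 : u3 ^ (2 ^ m + 1) = 1)
    (h12 : u1 ≠ u2) (h13 : u1 ≠ u3) (h23 : u2 ≠ u3) :
    u1 + u2 + u3 ≠ 0 := by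
  intro hsum
  -- characteristic 2
  obtain ⟨p, hp⟩ := CharP.exists F
  haveI := hp
  haveI : Fact p.Prime := ⟨CharP.char_is_prime F p⟩
  obtain ⟨n, hcard⟩ := FiniteField.card F p
  have hp2 : p = 2 := by
    have hdvd : p ∣ 2 ^ (2 * m) := by
      rw [← hF, hcard.2]
      exact dvd_pow_self p n.pos.ne'
    have := (Fact.out : p.Prime).dvd_of_dvd_pow hdvd
    exact ((Nat.prime_dvd_prime_iff_eq (Fact.out : p.Prime) Nat.prime_two).mp this)
  subst hp2
  haveI : CharP F 2 := hp
  have hchar2 : (2 : F) = 0 := CharP.cast_eq_zero F 2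
  -- u3 ≠ 0
  have hu3 : u3 ≠ 0 := by
    intro h; rw [h, zero_pow (Nat.succ_ne_zero _)] at h3; exact zero_ne_one h3
  set a : F := u1 * u3⁻¹ with ha
  have ha1 : a ^ (2 ^ m + 1) = 1 := by
    rw [ha, mul_pow, inv_pow, h1, h3, inv_one, one_mul]
  have hane : a ≠ 1 := by
    intro h
    apply h13
    field_simp [ha] at h
    rw [ha] at h; exact (mul_inv_eq_one₀ hu3).mp h
  have hu2 : u2 = u1 + u3 := by
    have : u2 + u2 = 0 := by
      have : (2 : F) * u2 = 0 := by rw [hchar2, zero_mul]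
      linear_combination this
    linear_combination this - hsum
  have hb : a + 1 = u2 * u3⁻¹ := by
    rw [ha, hu2, add_mul]
    field_simp
  have hb1 : (a + 1) ^ (2 ^ m + 1) = 1 := by
    rw [hb, mul_pow, inv_pow, h2, h3, inv_one, one_mul]
  -- Frobenius
  have hfrob : (a + 1) ^ (2 ^ m) = a ^ (2 ^ m) + 1 := by
    rw [add_pow_char_pow, one_pow]
  have hs1 : a ^ (2 ^ m) * a = 1 := by
    rw [pow_succ] at ha1; exact ha1
  have hs2 : (a ^ (2 ^ m) + 1) * (a + 1) = 1 := by
    rw [pow_succ, hfrob] at hb1; exact hb1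
  -- deduce a^2 = a + 1, hence a^3 = 1
  have hsa : a ^ (2 ^ m) + a = 1 := by
    linear_combination hs2 - hs1 - hchar2
  have ha2 : a ^ 2 = a + 1 := by
    have : a ^ (2 ^ m) = 1 + a := by linear_combination hsa - (hchar2 * a)
    have h' : (1 + a) * a = 1 := by rw [← this]; exact hs1
    linear_combination h' - hchar2 * a
  have ha3 : a ^ 3 = 1 := by
    have : a ^ 3 = a ^ 2 * a := by ring
    rw [this, ha2]
    linear_combination ha2 + hchar2 * a
  -- order of a divides gcd(3, 2^m+1) = 1
  have hd3 : orderOf a ∣ 3 := orderOf_dvd_of_pow_eq_one ha3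
  have hdq : orderOf a ∣ 2 ^ m + 1 := orderOf_dvd_of_pow_eq_one ha1
  have hnd : ¬ (3 ∣ 2 ^ m + 1) := by
    obtain ⟨k, rfl⟩ := hme
    have h4 : 2 ^ (k + k) % 3 = 1 := by
      have : 2 ^ (k + k) = 4 ^ k := by
        rw [← two_mul, pow_mul]; norm_num
      rw [this, Nat.pow_mod]
      simp
    omega
  have hcop : Nat.Coprime 3 (2 ^ m + 1) :=
    (Nat.Prime.coprime_iff_not_dvd (by norm_num)).mpr hnd
  have h1' : orderOf a ∣ 1 := hcop ▸ Nat.dvd_gcd hd3 hdq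
  have : a = 1 := orderOf_eq_one_iff.mp (Nat.dvd_one.mp h1')
  exact hane this
end

section
/- Let q = 2^m with m even, and let U be the group of (q+1)-st roots of unity in GF(q^2). For any three pairwise distinct elements u1, u2, u3 of U, with s1 = u1+u2+u3 and s2 = u1u2+u2u3+u3u1, one has s1^2 + s2 ≠ 0. -/
/-- For `q = 2^m`, `m` even, and pairwise distinct `(q+1)`-st roots of unity
`u1, u2, u3` in `GF(q^2)`: `s1^2 + s2 ≠ 0`. -/
theorem stmt_5 (m : ℕ) (hm : 0 < m) (hme : Even m) (F : Type*) [Field F] [Fintype F]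
    (hF : Fintype.card F = 2 ^ (2 * m))
    (u1 u2 u3 : F)
    (h1 : u1 ^ (2 ^ m + 1) = 1) (h2 : u2 ^ (2 ^ m + 1) = 1)
    (h3 : u3 ^ (2 ^ m + 1) = 1)
    (h12 : u1 ≠ u2) (h13 : u1 ≠ u3) (h23 : u2 ≠ u3) :
    (u1 + u2 + u3) ^ 2 + (u1 * u2 + u2 * u3 + u3 * u1) ≠ 0 := by
  -- characteristic 2
  haveI hchar : CharP F 2 := by
    obtain ⟨n, hp, hcard⟩ := FiniteField.card F (ringChar F)
    have h2 : ringChar F = 2 := by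
      have : ringChar F ∣ 2 ^ (2 * m) := hF ▸ hcard ▸ dvd_pow_self _ n.2.ne'
      exact (Nat.prime_dvd_prime_iff_eq hp Nat.prime_two).mp (hp.dvd_of_dvd_pow this)
    exact h2 ▸ ringChar.charP F
  haveI : Fact (Nat.Prime 2) := ⟨Nat.prime_two⟩
  have htwo : (2 : F) = 0 := by exact_mod_cast CharP.cast_eq_zero F 2
  intro h0
  set a := u1 + u3 with ha
  set b := u2 + u3 with hb
  have haz : a ≠ 0 := by
    rw [ha, ← CharTwo.sub_eq_add]; exact sub_ne_zero.mpr h13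
  have hbz : b ≠ 0 := by
    rw [hb, ← CharTwo.sub_eq_add]; exact sub_ne_zero.mpr h23
  -- the relation a^2 + ab + b^2 = 0, hence a^3 = b^3
  have habc : a ^ 2 + a * b + b ^ 2 = 0 := by
    rw [ha, hb]
    linear_combination h0 + (u3 ^ 2 - u1 * u2) * htwo
  have hab3 : a ^ 3 = b ^ 3 := by linear_combination (a - b) * habc
  -- 2^m = 3*j + 1 since m is even
  obtain ⟨k, hk⟩ := hme
  have hmod : 2 ^ m % 3 = 1 := by
    have : 2 ^ m = 4 ^ k := by
      rw [hk, pow_add, ← pow_two, ← pow_mul, mul_comm]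
      norm_num [pow_mul]
    rw [this, Nat.pow_mod]; norm_num
  obtain ⟨j, hj⟩ : ∃ j, 2 ^ m = 3 * j + 1 :=
    ⟨2 ^ m / 3, by omega⟩
  -- Frobenius relations: a^(2^m) * (u1*u3) = a, b^(2^m) * (u2*u3) = b
  have h1' : u1 ^ (2 ^ m) * u1 = 1 := by rw [← pow_succ]; exact h1
  have h2' : u2 ^ (2 ^ m) * u2 = 1 := by rw [← pow_succ]; exact h2
  have h3' : u3 ^ (2 ^ m) * u3 = 1 := by rw [← pow_succ]; exact h3
  have haq : a ^ (2 ^ m) * (u1 * u3) = a := by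
    rw [ha, add_pow_char_pow]
    linear_combination u3 * h1' + u1 * h3'
  have hbq : b ^ (2 ^ m) * (u2 * u3) = b := by
    rw [hb, add_pow_char_pow]
    linear_combination u3 * h2' + u2 * h3'
  -- rewrite using 2^m = 3j+1 and a^3 = b^3
  have haq' : (b ^ 3) ^ j * (u1 * u3) * a = a := by
    have : a ^ (2 ^ m) = (b ^ 3) ^ j * a := by
      rw [hj, pow_succ, pow_mul, hab3]
    rw [this] at haq; linear_combination haq
  have hbq' : (b ^ 3) ^ j * (u2 * u3) * b = b := by
    have : b ^ (2 ^ m) = (b ^ 3) ^ j * b := by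
      rw [hj, pow_succ, pow_mul]
    rw [this] at hbq; linear_combination hbq
  have e1 : (b ^ 3) ^ j * (u1 * u3) = 1 := by
    have := mul_right_cancel₀ haz (haq'.trans (one_mul a).symm)
    exact this
  have e2 : (b ^ 3) ^ j * (u2 * u3) = 1 := by
    have := mul_right_cancel₀ hbz (hbq'.trans (one_mul b).symm)
    exact this
  have hbj : (b ^ 3) ^ j ≠ 0 := pow_ne_zero _ (pow_ne_zero _ hbz)
  have hu3 : u3 ≠ 0 := by
    intro h; rw [h, zero_pow (by positivity)] at h3; exact zero_ne_one h3
  have : u1 * u3 = u2 * u3 := mul_left_cancel₀ hbj (e1.trans e2.symm)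
  exact h12 (mul_right_cancel₀ hu3 this)
end

section
/- Let q = 2^m with m even, and let U be the group of (q+1)-st roots of unity in GF(q^2). For any three pairwise distinct elements u1, u2, u3 of U, with s1 = u1+u2+u3, s2 = u1u2+u2u3+u3u1, s3 = u1u2u3, one has s2^2 + s1*s3 ≠ 0. -/
/-- For `q = 2^m`, `m` even, and pairwise distinct `(q+1)`-st roots of unity
`u1, u2, u3` in `GF(q^2)`: `s2^2 + s1*s3 ≠ 0`. -/
theorem stmt_6 (m : ℕ) (hm : 0 < m) (hme : Even m) (F : Type*) [Field F] [Fintype F]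
    (hF : Fintype.card F = 2 ^ (2 * m))
    (u1 u2 u3 : F)
    (h1 : u1 ^ (2 ^ m + 1) = 1) (h2 : u2 ^ (2 ^ m + 1) = 1)
    (h3 : u3 ^ (2 ^ m + 1) = 1)
    (h12 : u1 ≠ u2) (h13 : u1 ≠ u3) (h23 : u2 ≠ u3) :
    (u1 * u2 + u2 * u3 + u3 * u1) ^ 2 + (u1 + u2 + u3) * (u1 * u2 * u3) ≠ 0 := by
  -- characteristic 2
  have htwo : (2 : F) = 0 := by
    have hc := FiniteField.cast_card_eq_zero F
    rw [hF] at hc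
    push_cast at hc
    have hmm : 2 * m ≠ 0 := by positivity
    exact (pow_eq_zero_iff hmm).mp hc
  have hring : ringChar F = 2 := by
    have hp : Nat.Prime (ringChar F) := CharP.char_is_prime F (ringChar F)
    have hdvd : ringChar F ∣ 2 := (ringChar.spec F 2).mp (by push_cast; exact htwo)
    exact (Nat.prime_dvd_prime_iff_eq hp Nat.prime_two).mp hdvd
  haveI : CharP F 2 := hring ▸ ringChar.charP F
  haveI : Fact (Nat.Prime 2) := ⟨Nat.prime_two⟩
  -- nonvanishing of the uᵢ
  have hne : ∀ u : F, u ^ (2 ^ m + 1) = 1 → u ≠ 0 := by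
    intro u hu h0
    rw [h0, zero_pow (by positivity)] at hu
    exact zero_ne_one hu
  have hu1 := hne u1 h1
  have hu2 := hne u2 h2
  have hu3 := hne u3 h3
  -- Frobenius: uᵢ ^ (2^m) = uᵢ⁻¹
  have hfr : ∀ u : F, u ≠ 0 → u ^ (2 ^ m + 1) = 1 → u ^ (2 ^ m) = u⁻¹ := by
    intro u hu0 hu
    rw [pow_succ] at hu
    field_simp
    exact hu
  have hf1 := hfr u1 hu1 h1
  have hf2 := hfr u2 hu2 h2
  have hf3 := hfr u3 hu3 h3
  intro hcontra
  set s1 := u1 + u2 + u3 with hs1def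
  set s2 := u1 * u2 + u2 * u3 + u3 * u1 with hs2def
  set s3 := u1 * u2 * u3 with hs3def
  have hs3 : s3 ≠ 0 := by simp [hs3def, hu1, hu2, hu3]
  have hE : s2 ^ 2 = s1 * s3 := by linear_combination hcontra - s1 * s3 * htwo
  -- Frobenius images of the symmetric functions
  have hadd : ∀ a b : F, (a + b) ^ 2 ^ m = a ^ 2 ^ m + b ^ 2 ^ m := fun a b =>
    add_pow_char_pow a b 2 m
  have e1 : s1 ^ 2 ^ m = s2 * s3⁻¹ := by
    rw [hs1def, hadd, hadd, hf1, hf2, hf3]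
    field_simp
    ring
  have e2 : s2 ^ 2 ^ m = s1 * s3⁻¹ := by
    rw [hs2def, hadd, hadd, mul_pow, mul_pow, mul_pow, hf1, hf2, hf3]
    field_simp
    ring
  have e3 : s3 ^ 2 ^ m = s3⁻¹ := by
    rw [hs3def, mul_pow, mul_pow, hf1, hf2, hf3]
    field_simp
  -- Frobenius of hE gives s1^2 = s2
  have hEq : (s2 ^ 2 ^ m) ^ 2 = s1 ^ 2 ^ m * s3 ^ 2 ^ m := by
    have := congrArg (· ^ 2 ^ m) hE
    simpa [mul_pow, ← pow_mul, Nat.mul_comm] using this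
  rw [e1, e2, e3] at hEq
  have hs12 : s1 ^ 2 = s2 := by
    apply mul_right_cancel₀ (pow_ne_zero 2 (inv_ne_zero hs3))
    linear_combination hEq
  -- each uᵢ is a root of x^3 + s1 x^2 + s2 x + s3
  have r1 : u1 ^ 3 + s1 * u1 ^ 2 + s2 * u1 + s3 = 0 := by
    rw [hs1def, hs2def, hs3def]
    linear_combination (u1 * (u1 + u2) * (u1 + u3)) * htwo
  have r2 : u2 ^ 3 + s1 * u2 ^ 2 + s2 * u2 + s3 = 0 := by
    rw [hs1def, hs2def, hs3def]
    linear_combination (u2 * (u2 + u1) * (u2 + u3)) * htwo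
  by_cases hs1 : s1 = 0
  · -- s2 = 0 too, so u1³ = s3 = u2³; then u1/u2 is a nontrivial cube root of 1
    have hs2 : s2 = 0 := by rw [← hs12, hs1]; ring
    rw [hs1, hs2] at r1 r2
    have c1 : u1 ^ 3 = s3 := by linear_combination r1 - s3 * htwo
    have c2 : u2 ^ 3 = s3 := by linear_combination r2 - s3 * htwo
    set w := u1 * u2⁻¹ with hw
    have hw3 : w ^ 3 = 1 := by
      rw [hw, mul_pow, inv_pow, c1, c2]
      exact mul_inv_cancel₀ hs3
    have hwq : w ^ (2 ^ m + 1) = 1 := by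
      rw [hw, mul_pow, h1, inv_pow, h2]
      simp
    have hd3 : orderOf w ∣ 3 := orderOf_dvd_of_pow_eq_one hw3
    have hdq : orderOf w ∣ 2 ^ m + 1 := orderOf_dvd_of_pow_eq_one hwq
    have hcop : Nat.gcd 3 (2 ^ m + 1) = 1 := by
      obtain ⟨k, hk⟩ := hme
      have h4 : 4 ^ k % 3 = 1 := by
        rw [Nat.pow_mod]; simp
      have hpow : 2 ^ m = 4 ^ k := by
        rw [hk, show (4:ℕ) = 2^2 by norm_num, ← pow_mul]; ring_nf
      have : ¬ (3 ∣ 2 ^ m + 1) := by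
        rw [hpow]; omega
      exact (Nat.Prime.coprime_iff_not_dvd Nat.prime_three).mpr this
    have hone : orderOf w = 1 :=
      Nat.eq_one_of_dvd_one (hcop ▸ Nat.dvd_gcd hd3 hdq)
    have hw1 : w = 1 := orderOf_eq_one_iff.mp hone
    rw [hw, mul_inv_eq_one₀ hu2] at hw1
    exact h12 hw1
  · -- s3 = s1³, s2 = s1², the cubic is (x+s1)³, so u1 = s1 = u2
    have hs3e : s3 = s1 ^ 3 := by
      have h4 : s1 * s1 ^ 3 = s1 * s3 := by
        rw [← hE, ← hs12]; ring
      exact (mul_left_cancel₀ hs1 h4).symm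
    have hc : ∀ u : F, u ^ 3 + s1 * u ^ 2 + s2 * u + s3 = 0 → u = s1 := by
      intro u hr
      rw [← hs12, hs3e] at hr
      have h30 : (u + s1) ^ 3 = 0 := by
        linear_combination hr + (u ^ 2 * s1 + u * s1 ^ 2) * htwo
      have h0 : u + s1 = 0 := (pow_eq_zero_iff (by norm_num)).mp h30
      linear_combination h0 - s1 * htwo
    exact h12 ((hc u1 r1).trans (hc u2 r2).symm)
end

section
/- Let q = 2^m, let U be the group of (q+1)-st roots of unity in GF(q^2), and let u1,...,u5 be elements of U (with u1, u2, u3 pairwise distinct) such that the second elementary symmetric polynomial σ_{5,2}(u1,...,u5) = 0. Then with s1 = u1+u2+u3, s2 = u1u2+u2u3+u3u1, s3 = u1u2u3, one has (s1^2 + s2)(u4 + u5) = s1*s2 + s3 and (s1^2 + s2)*u4*u5 = s2^2 + s1*s3. -/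
/-- If `u1, …, u5` are `(q+1)`-st roots of unity in `GF(q^2)` (`q = 2^m`), `u1, u2, u3`
pairwise distinct, with `σ_{5,2}(u1,…,u5) = 0`, then
`(s1^2+s2)(u4+u5) = s1*s2+s3` and `(s1^2+s2)·u4·u5 = s2^2+s1*s3`. -/
theorem stmt_7 (m : ℕ) (hm : 0 < m) (F : Type*) [Field F] [Fintype F]
    (hF : Fintype.card F = 2 ^ (2 * m))
    (u1 u2 u3 u4 u5 : F)
    (h1 : u1 ^ (2 ^ m + 1) = 1) (h2 : u2 ^ (2 ^ m + 1) = 1)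
    (h3 : u3 ^ (2 ^ m + 1) = 1) (h4 : u4 ^ (2 ^ m + 1) = 1)
    (h5 : u5 ^ (2 ^ m + 1) = 1)
    (h12 : u1 ≠ u2) (h13 : u1 ≠ u3) (h23 : u2 ≠ u3)
    (hsigma : u1 * u2 + u1 * u3 + u1 * u4 + u1 * u5 + u2 * u3 + u2 * u4 + u2 * u5
        + u3 * u4 + u3 * u5 + u4 * u5 = 0) :
    ((u1 + u2 + u3) ^ 2 + (u1 * u2 + u2 * u3 + u3 * u1)) * (u4 + u5)
        = (u1 + u2 + u3) * (u1 * u2 + u2 * u3 + u3 * u1) + u1 * u2 * u3 ∧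
    ((u1 + u2 + u3) ^ 2 + (u1 * u2 + u2 * u3 + u3 * u1)) * (u4 * u5)
        = (u1 * u2 + u2 * u3 + u3 * u1) ^ 2 + (u1 + u2 + u3) * (u1 * u2 * u3) := by
  have hc2 : (2 : F) = 0 := by
    have hc := FiniteField.cast_card_eq_zero F
    rw [hF] at hc
    push_cast at hc
    exact pow_eq_zero_iff (by positivity) |>.mp hc
  haveI : CharP F 2 := by
    have hd : ringChar F ∣ 2 := ringChar.dvd (by exact_mod_cast hc2)
    have hp : (ringChar F).Prime := CharP.char_is_prime F (ringChar F)
    have he : ringChar F = 2 := (Nat.prime_dvd_prime_iff_eq hp Nat.prime_two).mp hd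
    rw [← he]; exact ringChar.charP F
  have hq1 : u1 * u1 ^ (2 ^ m) = 1 := by rw [← pow_succ']; exact h1
  have hq2 : u2 * u2 ^ (2 ^ m) = 1 := by rw [← pow_succ']; exact h2
  have hq3 : u3 * u3 ^ (2 ^ m) = 1 := by rw [← pow_succ']; exact h3
  have hq4 : u4 * u4 ^ (2 ^ m) = 1 := by rw [← pow_succ']; exact h4
  have hq5 : u5 * u5 ^ (2 ^ m) = 1 := by rw [← pow_succ']; exact h5
  have hfr := congrArg (· ^ (2 ^ m)) hsigma
  simp only [add_pow_char_pow, mul_pow, zero_pow (pow_ne_zero m two_ne_zero)] at hfr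
  have he3 : u1*u2*u3 + u1*u2*u4 + u1*u2*u5 + u1*u3*u4 + u1*u3*u5 + u1*u4*u5
      + u2*u3*u4 + u2*u3*u5 + u2*u4*u5 + u3*u4*u5 = 0 := by
    linear_combination (u1*u2*u3*u4*u5) * hfr - ((u3*u4*u5*(u1*u1^(2^m)))*hq2 + (u3*u4*u5)*hq1 + (u2*u4*u5*(u1*u1^(2^m)))*hq3 + (u2*u4*u5)*hq1 + (u2*u3*u5*(u1*u1^(2^m)))*hq4 + (u2*u3*u5)*hq1 + (u2*u3*u4*(u1*u1^(2^m)))*hq5 + (u2*u3*u4)*hq1 + (u1*u4*u5*(u2*u2^(2^m)))*hq3 + (u1*u4*u5)*hq2 + (u1*u3*u5*(u2*u2^(2^m)))*hq4 + (u1*u3*u5)*hq2 + (u1*u3*u4*(u2*u2^(2^m)))*hq5 + (u1*u3*u4)*hq2 + (u1*u2*u5*(u3*u3^(2^m)))*hq4 + (u1*u2*u5)*hq3 + (u1*u2*u4*(u3*u3^(2^m)))*hq5 + (u1*u2*u4)*hq3 + (u1*u2*u3*(u4*u4^(2^m)))*hq5 + (u1*u2*u3)*hq4)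
  have heq1 : u1*u2 + u2*u3 + u3*u1 + (u1+u2+u3)*(u4+u5) + u4*u5 = 0 := by
    linear_combination hsigma
  have heq2 : u1*u2*u3 + (u1*u2 + u2*u3 + u3*u1)*(u4+u5) + (u1+u2+u3)*(u4*u5) = 0 := by
    linear_combination he3
  constructor
  · linear_combination (u1+u2+u3) * heq1 + heq2 + ((-1)*u3*u4*u5 + (-1)*u2*u4*u5 + (-1)*u2*u3^2 + (-1)*u2^2*u3 + (-1)*u1*u4*u5 + (-1)*u1*u3^2 + (-4)*u1*u2*u3 + (-1)*u1*u2^2 + (-1)*u1^2*u3 + (-1)*u1^2*u2) * hc2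
  · linear_combination (u1*u2+u2*u3+u3*u1) * heq1 + (u1+u2+u3) * heq2 + ((-1)*u2*u3^2*u5 + (-1)*u2*u3^2*u4 + (-1)*u2^2*u3*u5 + (-1)*u2^2*u3*u4 + (-1)*u2^2*u3^2 + (-1)*u1*u3^2*u5 + (-1)*u1*u3^2*u4 + (-3)*u1*u2*u3*u5 + (-3)*u1*u2*u3*u4 + (-3)*u1*u2*u3^2 + (-1)*u1*u2^2*u5 + (-1)*u1*u2^2*u4 + (-3)*u1*u2^2*u3 + (-1)*u1^2*u3*u5 + (-1)*u1^2*u3*u4 + (-1)*u1^2*u3^2 + (-1)*u1^2*u2*u5 + (-1)*u1^2*u2*u4 + (-3)*u1^2*u2*u3 + (-1)*u1^2*u2^2) * hc2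
end

section
/- Let q = 2^m with m odd, m ≥ 3, and let U be the group of (q+1)-st roots of unity in GF(q^2). For any five pairwise distinct elements u1,...,u5 of U, the second elementary symmetric polynomial σ_{5,2}(u1,...,u5) = Σ_{i<j} u_i u_j is nonzero. -/
theorem charF (m : ℕ) (F : Type*) [Field F] [Fintype F] (hF : Fintype.card F = 2 ^ (2*m)) :
    CharP F 2 := by
  obtain ⟨p, hpi⟩ := CharP.exists F
  haveI := hpi
  obtain ⟨n, hp, hcard⟩ := FiniteField.card F p
  have h2 : p = 2 := by
    have hdvd : p ∣ 2 ^ (2*m) := by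
      rw [← hF, hcard]; exact dvd_pow_self p n.2.ne'
    exact (Nat.prime_dvd_prime_iff_eq hp Nat.prime_two).mp (hp.dvd_of_dvd_pow hdvd)
  rwa [h2] at hpi

theorem cube_inj (m k : ℕ) (hmk : m + 1 = 2*(k+1)) (F : Type*) [Field F]
    (x y : F) (hx : x ^ (2^m) = x) (hy : y ^ (2^m) = y) (h : x^3 = y^3) : x = y := by
  rcases eq_or_ne x 0 with rfl | hx0
  · have h0 : y^3 = 0 := by rw [← h]; ring
    rw [(pow_eq_zero_iff (three_ne_zero)).mp h0]
  rcases eq_or_ne y 0 with rfl | hy0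
  · exact absurd ((pow_eq_zero_iff three_ne_zero).mp (h.trans (by ring))) hx0
  have h3dvd : 3 ∣ 4^(k+1) - 1 := by
    have : 4^(k+1) % 3 = 1 := by rw [Nat.pow_mod]; norm_num
    omega
  obtain ⟨s, hs⟩ := h3dvd
  have h4 : (4:ℕ)^(k+1) = 2^(m+1) := by rw [hmk, pow_mul]; norm_num
  have h1 : 1 ≤ 2^m := Nat.one_le_two_pow
  have hs3 : 3*s = 2*(2^m - 1) + 1 := by
    have h2 : 2^(m+1) = 2*2^m := by rw [pow_succ]; ring
    omega
  have key : ∀ z : F, z ≠ 0 → z ^ (2^m) = z → z ^ (3*s) = z := by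
    intro z hz0 hz
    have hpow1 : z ^ (2^m - 1) = 1 := by
      have he : 2^m - 1 + 1 = 2^m := by omega
      have hh : z ^ (2^m - 1) * z = z := by
        rw [← pow_succ, he, hz]
      have := mul_right_cancel₀ hz0 (hh.trans (one_mul z).symm)
      exact this
    calc z ^ (3*s) = (z ^ (2^m - 1))^2 * z := by rw [hs3]; ring
    _ = z := by rw [hpow1]; ring
  calc x = x ^ (3*s) := (key x hx0 hx).symm
  _ = (x^3)^s := by rw [pow_mul]
  _ = (y^3)^s := by rw [h]
  _ = y ^ (3*s) := by rw [pow_mul]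
  _ = y := key y hy0 hy

theorem lemQ (F : Type*) [Field F] (htwo : (2:F) = 0)
    (E al ga z1 z2 z3 z4 : F) (hE : E ≠ 0)
    (h12 : z1 ≠ z2) (h13 : z1 ≠ z3) (h14 : z1 ≠ z4)
    (h23 : z2 ≠ z3) (h24 : z2 ≠ z4) (h34 : z3 ≠ z4)
    (r1 : E*z1^4 + al*z1^3 + ga = 0) (r2 : E*z2^4 + al*z2^3 + ga = 0)
    (r3 : E*z3^4 + al*z3^3 + ga = 0) (r4 : E*z4^4 + al*z4^3 + ga = 0)
    (hc2 : ((z1+z2)*(z3+z4))^3 = ((z1+z3)*(z2+z4))^3 → (z1+z2)*(z3+z4) = (z1+z3)*(z2+z4))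
    (hc3 : ((z1+z2)*(z3+z4))^3 = ((z1+z4)*(z2+z3))^3 → (z1+z2)*(z3+z4) = (z1+z4)*(z2+z3)) :
    False := by
  have hne : ∀ x y : F, x ≠ y → x + y ≠ 0 := by
    intro x y hxy h
    exact hxy (by linear_combination h - y*htwo)
  have hSm12 : (z1+z2) * (E*(z1+z2)^3 + al*((z1+z2)^2 + z1*z2)) = 0 := by
    linear_combination (1:F) * r1 + (1:F) * r2 + (2*E*z1^3*z2 + 3*E*z1^2*z2^2 + 2*E*z1*z2^3 + 2*al*z1^2*z2 + 2*al*z1*z2^2 + (-1)*ga) * htwo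
  have hSm13 : (z1+z3) * (E*(z1+z3)^3 + al*((z1+z3)^2 + z1*z3)) = 0 := by
    linear_combination (1:F) * r1 + (1:F) * r3 + (2*E*z1^3*z3 + 3*E*z1^2*z3^2 + 2*E*z1*z3^3 + 2*al*z1^2*z3 + 2*al*z1*z3^2 + (-1)*ga) * htwo
  have hSm14 : (z1+z4) * (E*(z1+z4)^3 + al*((z1+z4)^2 + z1*z4)) = 0 := by
    linear_combination (1:F) * r1 + (1:F) * r4 + (2*E*z1^3*z4 + 3*E*z1^2*z4^2 + 2*E*z1*z4^3 + 2*al*z1^2*z4 + 2*al*z1*z4^2 + (-1)*ga) * htwo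
  have hSm23 : (z2+z3) * (E*(z2+z3)^3 + al*((z2+z3)^2 + z2*z3)) = 0 := by
    linear_combination (1:F) * r2 + (1:F) * r3 + (2*E*z2^3*z3 + 3*E*z2^2*z3^2 + 2*E*z2*z3^3 + 2*al*z2^2*z3 + 2*al*z2*z3^2 + (-1)*ga) * htwo
  have hSm24 : (z2+z4) * (E*(z2+z4)^3 + al*((z2+z4)^2 + z2*z4)) = 0 := by
    linear_combination (1:F) * r2 + (1:F) * r4 + (2*E*z2^3*z4 + 3*E*z2^2*z4^2 + 2*E*z2*z4^3 + 2*al*z2^2*z4 + 2*al*z2*z4^2 + (-1)*ga) * htwo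
  have hSm34 : (z3+z4) * (E*(z3+z4)^3 + al*((z3+z4)^2 + z3*z4)) = 0 := by
    linear_combination (1:F) * r3 + (1:F) * r4 + (2*E*z3^3*z4 + 3*E*z3^2*z4^2 + 2*E*z3*z4^3 + 2*al*z3^2*z4 + 2*al*z3*z4^2 + (-1)*ga) * htwo
  have S12 := (mul_eq_zero.mp hSm12).resolve_left (hne _ _ h12)
  have S13 := (mul_eq_zero.mp hSm13).resolve_left (hne _ _ h13)
  have S14 := (mul_eq_zero.mp hSm14).resolve_left (hne _ _ h14)
  have S23 := (mul_eq_zero.mp hSm23).resolve_left (hne _ _ h23)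
  have S24 := (mul_eq_zero.mp hSm24).resolve_left (hne _ _ h24)
  have S34 := (mul_eq_zero.mp hSm34).resolve_left (hne _ _ h34)
  have hTm234 : (z2+z3) * (E*(z2^2+z3^2+z4^2+z2*z3+z2*z4+z3*z4) + al*(z2+z3+z4)) = 0 := by
    linear_combination (1:F) * S24 + (1:F) * S34 + (E*z2^2*z3 + (-1)*E*z2^2*z4 + E*z2*z3^2 + E*z2*z3*z4 + (-1)*E*z2*z4^2 + (-1)*E*z3^2*z4 + (-1)*E*z3*z4^2 + (-1)*E*z4^3 + al*z2*z3 + (-1)*al*z2*z4 + (-1)*al*z3*z4 + (-1)*al*z4^2) * htwo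
  have hTm134 : (z1+z3) * (E*(z1^2+z3^2+z4^2+z1*z3+z1*z4+z3*z4) + al*(z1+z3+z4)) = 0 := by
    linear_combination (1:F) * S14 + (1:F) * S34 + (E*z1^2*z3 + (-1)*E*z1^2*z4 + E*z1*z3^2 + E*z1*z3*z4 + (-1)*E*z1*z4^2 + (-1)*E*z3^2*z4 + (-1)*E*z3*z4^2 + (-1)*E*z4^3 + al*z1*z3 + (-1)*al*z1*z4 + (-1)*al*z3*z4 + (-1)*al*z4^2) * htwo
  have T234 := (mul_eq_zero.mp hTm234).resolve_left (hne _ _ h23)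
  have T134 := (mul_eq_zero.mp hTm134).resolve_left (hne _ _ h13)
  have hHm : (z1+z2) * (E*(z1+z2+z3+z4) + al) = 0 := by
    linear_combination (1:F) * T234 + (1:F) * T134 + (E*z1*z2 + (-1)*E*z3^2 + (-1)*E*z3*z4 + (-1)*E*z4^2 + (-1)*al*z3 + (-1)*al*z4) * htwo
  have H := (mul_eq_zero.mp hHm).resolve_left (hne _ _ h12)
  have hA12 : al*(z1*z2) = (z1+z2)^2*(E*(z3+z4)) := by
    linear_combination (-1:F) * S12 + (z1^2 + 2*z1*z2 + z2^2) * H + ((-1)*E*z1^2*z3 + (-1)*E*z1^2*z4 + (-2)*E*z1*z2*z3 + (-2)*E*z1*z2*z4 + (-1)*E*z2^2*z3 + (-1)*E*z2^2*z4 + al*z1*z2) * htwo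
  have hA34 : al*(z3*z4) = (z3+z4)^2*(E*(z1+z2)) := by
    linear_combination (-1:F) * S34 + (z3^2 + 2*z3*z4 + z4^2) * H + ((-1)*E*z1*z3^2 + (-2)*E*z1*z3*z4 + (-1)*E*z1*z4^2 + (-1)*E*z2*z3^2 + (-2)*E*z2*z3*z4 + (-1)*E*z2*z4^2 + al*z3*z4) * htwo
  have hA13 : al*(z1*z3) = (z1+z3)^2*(E*(z2+z4)) := by
    linear_combination (-1:F) * S13 + (z1^2 + 2*z1*z3 + z3^2) * H + ((-1)*E*z1^2*z2 + (-1)*E*z1^2*z4 + (-2)*E*z1*z2*z3 + (-2)*E*z1*z3*z4 + (-1)*E*z2*z3^2 + (-1)*E*z3^2*z4 + al*z1*z3) * htwo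
  have hA24 : al*(z2*z4) = (z2+z4)^2*(E*(z1+z3)) := by
    linear_combination (-1:F) * S24 + (z2^2 + 2*z2*z4 + z4^2) * H + ((-1)*E*z1*z2^2 + (-2)*E*z1*z2*z4 + (-1)*E*z1*z4^2 + (-1)*E*z2^2*z3 + (-2)*E*z2*z3*z4 + (-1)*E*z3*z4^2 + al*z2*z4) * htwo
  have hA14 : al*(z1*z4) = (z1+z4)^2*(E*(z2+z3)) := by
    linear_combination (-1:F) * S14 + (z1^2 + 2*z1*z4 + z4^2) * H + ((-1)*E*z1^2*z2 + (-1)*E*z1^2*z3 + (-2)*E*z1*z2*z4 + (-2)*E*z1*z3*z4 + (-1)*E*z2*z4^2 + (-1)*E*z3*z4^2 + al*z1*z4) * htwo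
  have hA23 : al*(z2*z3) = (z2+z3)^2*(E*(z1+z4)) := by
    linear_combination (-1:F) * S23 + (z2^2 + 2*z2*z3 + z3^2) * H + ((-1)*E*z1*z2^2 + (-2)*E*z1*z2*z3 + (-1)*E*z1*z3^2 + (-1)*E*z2^2*z4 + (-2)*E*z2*z3*z4 + (-1)*E*z3^2*z4 + al*z2*z3) * htwo
  have hM12 : E^2*(((z1+z2)*(z3+z4))^3) = al^2*(z1*z2*z3*z4) := by
    linear_combination ((-1)*al*z3*z4) * hA12 + ((-1)*E*z1^2*z3 + (-1)*E*z1^2*z4 + (-2)*E*z1*z2*z3 + (-2)*E*z1*z2*z4 + (-1)*E*z2^2*z3 + (-1)*E*z2^2*z4) * hA34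
  have hM13 : E^2*(((z1+z3)*(z2+z4))^3) = al^2*(z1*z2*z3*z4) := by
    linear_combination ((-1)*al*z2*z4) * hA13 + ((-1)*E*z1^2*z2 + (-1)*E*z1^2*z4 + (-2)*E*z1*z2*z3 + (-2)*E*z1*z3*z4 + (-1)*E*z2*z3^2 + (-1)*E*z3^2*z4) * hA24
  have hM14 : E^2*(((z1+z4)*(z2+z3))^3) = al^2*(z1*z2*z3*z4) := by
    linear_combination ((-1)*al*z2*z3) * hA14 + ((-1)*E*z1^2*z2 + (-1)*E*z1^2*z3 + (-2)*E*z1*z2*z4 + (-2)*E*z1*z3*z4 + (-1)*E*z2*z4^2 + (-1)*E*z3*z4^2) * hA23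
  have hE2 : E^2 ≠ 0 := pow_ne_zero 2 hE
  have hD2 := hc2 (mul_left_cancel₀ hE2 (hM12.trans hM13.symm))
  have hD3 := hc3 (mul_left_cancel₀ hE2 (hM12.trans hM14.symm))
  have hsum : (z1+z2)*(z3+z4) + (z1+z3)*(z2+z4) + (z1+z4)*(z2+z3) = 0 := by
    linear_combination (z1*z2 + z1*z3 + z1*z4 + z2*z3 + z2*z4 + z3*z4) * htwo
  have hD0 : (z1+z2)*(z3+z4) = 0 := by
    linear_combination (1:F) * hsum + (1:F) * hD2 + (1:F) * hD3 + ((-1)*z1*z3 + (-1)*z1*z4 + (-1)*z2*z3 + (-1)*z2*z4) * htwo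
  rcases mul_eq_zero.mp hD0 with h | h
  · exact hne _ _ h12 h
  · exact hne _ _ h34 h

set_option maxHeartbeats 2000000 in
theorem key (m : ℕ) (F : Type*) [Field F] [CharP F 2] (htwo : (2:F) = 0)
    (cubeI : ∀ x y : F, x ^ (2^m) = x → y ^ (2^m) = y → x^3 = y^3 → x = y)
    (u1 u2 u3 u4 u5 : F)
    (hU1 : u1 ^ (2^m+1) = 1) (hU2 : u2 ^ (2^m+1) = 1) (hU3 : u3 ^ (2^m+1) = 1)
    (hU4 : u4 ^ (2^m+1) = 1) (hU5 : u5 ^ (2^m+1) = 1)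
    (h12 : u1 ≠ u2) (h13 : u1 ≠ u3) (h14 : u1 ≠ u4) (h15 : u1 ≠ u5)
    (h23 : u2 ≠ u3) (h24 : u2 ≠ u4) (h25 : u2 ≠ u5)
    (h34 : u3 ≠ u4) (h35 : u3 ≠ u5) (h45 : u4 ≠ u5)
    (hn1 : u1 ≠ 1) (hn2 : u2 ≠ 1) (hn3 : u3 ≠ 1) (hn4 : u4 ≠ 1)
    (a b c : F)
    (ha : a = u1+u2+u3+u4+u5)
    (hb : b = u1*u2*u3*u4 + u1*u2*u3*u5 + u1*u2*u4*u5 + u1*u3*u4*u5 + u2*u3*u4*u5)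
    (hc : c = u1*u2*u3*u4*u5)
    (hS2 : u1*u2 + u1*u3 + u1*u4 + u1*u5 + u2*u3 + u2*u4 + u2*u5 + u3*u4 + u3*u5 + u4*u5 = 0)
    (hS3 : u1*u2*u3 + u1*u2*u4 + u1*u2*u5 + u1*u3*u4 + u1*u3*u5 + u1*u4*u5
      + u2*u3*u4 + u2*u3*u5 + u2*u4*u5 + u3*u4*u5 = 0) :
    False := by
  have hne : ∀ x y : F, x ≠ y → x + y ≠ 0 := by
    intro x y hxy h
    exact hxy (by linear_combination h - y*htwo)
  have hnz : ∀ x : F, x ^ (2^m+1) = 1 → x ≠ 0 := by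
    intro x hx h
    rw [h, zero_pow (by positivity : 2^m+1 ≠ 0)] at hx
    exact zero_ne_one hx
  have hnz1 := hnz u1 hU1
  have hnz2 := hnz u2 hU2
  have hnz3 := hnz u3 hU3
  have hnz4 := hnz u4 hU4
  have hnz5 := hnz u5 hU5
  have hc0 : c ≠ 0 := by
    rw [hc]
    exact mul_ne_zero (mul_ne_zero (mul_ne_zero (mul_ne_zero hnz1 hnz2) hnz3) hnz4) hnz5
  have vinj : ∀ uA uB vA vB : F, vA*(uA+1) = uA → vB*(uB+1) = uB → vA = vB → uA = uB := by
    intro uA uB vA vB hA hB he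
    have h0 : (vA - 1)*(uA - uB) = 0 := by linear_combination hA - hB - (1+uB)*he
    rcases mul_eq_zero.mp h0 with h | h
    · have hv1 : vA = 1 := by linear_combination h
      have : (1:F) = 0 := by linear_combination hA - (uA+1)*hv1
      exact absurd this one_ne_zero
    · linear_combination h
  have hvq : ∀ u v : F, u ≠ 1 → u ^ (2^m+1) = 1 → v*(u+1) = u → v ^ (2^m) = v + 1 := by
    intro u v hu1 hU hv
    have hu0 : u ≠ 0 := hnz u hU
    have hw : u^(2^m) * u = 1 := by rw [← pow_succ]; exact hU
    have hrel1 : v^(2^m) * (u^(2^m)+1) = u^(2^m) := by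
      have h := congrArg (fun t : F => t^(2^m)) hv
      simp only [mul_pow] at h
      rwa [add_pow_char_pow, one_pow] at h
    have hw1 : u^(2^m) + 1 ≠ 0 := by
      intro h
      have h1 : u^(2^m) = 1 := by linear_combination h - htwo
      rw [h1, one_mul] at hw
      exact hu1 hw
    have hfin : (v^(2^m) - (v+1)) * ((u^(2^m)+1) * u) = 0 := by
      linear_combination (u) * hrel1 + (-1:F) * hv + ((-1)*v) * hw + ((-1)*u) * htwo
    rcases mul_eq_zero.mp hfin with h | h
    · linear_combination h
    · exact absurd h (mul_ne_zero hw1 hu0)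
  have madd1 : ∀ x y : F, x^(2^m) = x+1 → y^(2^m) = y+1 → (x+y)^(2^m) = x+y := by
    intro x y hx hy
    rw [add_pow_char_pow, hx, hy]
    linear_combination htwo
  have madd : ∀ x y : F, x^(2^m) = x → y^(2^m) = y → (x+y)^(2^m) = x+y := by
    intro x y hx hy
    rw [add_pow_char_pow, hx, hy]
  have mmul : ∀ x y : F, x^(2^m) = x → y^(2^m) = y → (x*y)^(2^m) = x*y := by
    intro x y hx hy
    rw [mul_pow, hx, hy]
  have hden1 : u1 + 1 ≠ 0 := fun h => hn1 (by linear_combination h - htwo)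
  have hden2 : u2 + 1 ≠ 0 := fun h => hn2 (by linear_combination h - htwo)
  have hden3 : u3 + 1 ≠ 0 := fun h => hn3 (by linear_combination h - htwo)
  have hden4 : u4 + 1 ≠ 0 := fun h => hn4 (by linear_combination h - htwo)
  obtain ⟨v1, hv1⟩ : ∃ v : F, v*(u1+1) = u1 := ⟨u1/(u1+1), by field_simp⟩
  obtain ⟨v2, hv2⟩ : ∃ v : F, v*(u2+1) = u2 := ⟨u2/(u2+1), by field_simp⟩
  obtain ⟨v3, hv3⟩ : ∃ v : F, v*(u3+1) = u3 := ⟨u3/(u3+1), by field_simp⟩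
  obtain ⟨v4, hv4⟩ : ∃ v : F, v*(u4+1) = u4 := ⟨u4/(u4+1), by field_simp⟩
  have hvq1 := hvq u1 v1 hn1 hU1 hv1
  have hvq2 := hvq u2 v2 hn2 hU2 hv2
  have hvq3 := hvq u3 v3 hn3 hU3 hv3
  have hvq4 := hvq u4 v4 hn4 hU4 hv4
  have hvne12 : v1 ≠ v2 := fun h => h12 (vinj u1 u2 v1 v2 hv1 hv2 h)
  have hvne13 : v1 ≠ v3 := fun h => h13 (vinj u1 u3 v1 v3 hv1 hv3 h)
  have hvne14 : v1 ≠ v4 := fun h => h14 (vinj u1 u4 v1 v4 hv1 hv4 h)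
  have hvne23 : v2 ≠ v3 := fun h => h23 (vinj u2 u3 v2 v3 hv2 hv3 h)
  have hvne24 : v2 ≠ v4 := fun h => h24 (vinj u2 u4 v2 v4 hv2 hv4 h)
  have hvne34 : v3 ≠ v4 := fun h => h34 (vinj u3 u4 v3 v4 hv3 hv4 h)
  have f1 : u1^5 + a*u1^4 + b*u1 + c = 0 := by linear_combination (u1^4) * ha + (u1) * hb + (1) * hc + ((-1)*u1^3) * hS2 + (u1^2) * hS3 + (u1^5 + u1^4*u2 + u1^4*u3 + u1^4*u4 + u1^4*u5 + u1*u2*u3*u4*u5) * htwo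
  have f2 : u2^5 + a*u2^4 + b*u2 + c = 0 := by linear_combination (u2^4) * ha + (u2) * hb + (1) * hc + ((-1)*u2^3) * hS2 + (u2^2) * hS3 + (u1*u2^4 + u1*u2*u3*u4*u5 + u2^5 + u2^4*u3 + u2^4*u4 + u2^4*u5) * htwo
  have f3 : u3^5 + a*u3^4 + b*u3 + c = 0 := by linear_combination (u3^4) * ha + (u3) * hb + (1) * hc + ((-1)*u3^3) * hS2 + (u3^2) * hS3 + (u1*u2*u3*u4*u5 + u1*u3^4 + u2*u3^4 + u3^5 + u3^4*u4 + u3^4*u5) * htwo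
  have f4 : u4^5 + a*u4^4 + b*u4 + c = 0 := by linear_combination (u4^4) * ha + (u4) * hb + (1) * hc + ((-1)*u4^3) * hS2 + (u4^2) * hS3 + (u1*u2*u3*u4*u5 + u1*u4^4 + u2*u4^4 + u3*u4^4 + u4^5 + u4^4*u5) * htwo
  have f5 : u5^5 + a*u5^4 + b*u5 + c = 0 := by linear_combination (u5^4) * ha + (u5) * hb + (1) * hc + ((-1)*u5^3) * hS2 + (u5^2) * hS3 + (u1*u2*u3*u4*u5 + u1*u5^4 + u2*u5^4 + u3*u5^4 + u4*u5^4 + u5^5) * htwo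
  by_cases hu5 : u5 = 1
  · -- case 2 : u5 = 1
    have hE0 : 1 + a + b + c = 0 := by linear_combination (1:F) * ha + (1:F) * hb + (1:F) * hc + (-1:F) * hS2 + (-1:F) * hS3 + (1 + u1 + u1*u2 + u1*u2*u3 + u1*u2*u3*u4 + u1*u2*u4 + u1*u3 + u1*u3*u4 + u1*u4 + u2 + u2*u3 + u2*u3*u4 + u2*u4 + u3 + u3*u4 + u4) * hu5 + (1 + u1 + u1*u2 + u1*u2*u3 + u1*u2*u3*u4 + u1*u2*u4 + u1*u3 + u1*u3*u4 + u1*u4 + u2 + u2*u3 + u2*u3*u4 + u2*u4 + u3 + u3*u4 + u4) * htwo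
    have R'1 : (a+c)*v1^4 + (b+c)*v1 + c = 0 := by linear_combination ((v1+1)^5) * f1 + ((-450) + 280*a + (-160)*a*u1 + 80*a*u1^2 + (-31)*a*u1^3 + (-26)*a*u1^3*v1 + (-16)*a*u1^3*v1^2 + (-6)*a*u1^3*v1^3 + (-1)*a*u1^3*v1^4 + 49*a*u1^2*v1 + 23*a*u1^2*v1^2 + 7*a*u1^2*v1^3 + a*u1^2*v1^4 + (-80)*a*u1*v1 + (-31)*a*u1*v1^2 + (-8)*a*u1*v1^3 + (-1)*a*u1*v1^4 + 120*a*v1 + 40*a*v1^2 + 9*a*v1^3 + a*v1^4 + (-31)*b + (-26)*b*v1 + (-16)*b*v1^2 + (-6)*b*v1^3 + (-1)*b*v1^4 + 280*u1 + (-160)*u1^2 + 80*u1^3 + (-31)*u1^4 + (-26)*u1^4*v1 + (-16)*u1^4*v1^2 + (-6)*u1^4*v1^3 + (-1)*u1^4*v1^4 + 49*u1^3*v1 + 23*u1^3*v1^2 + 7*u1^3*v1^3 + u1^3*v1^4 + (-80)*u1^2*v1 + (-31)*u1^2*v1^2 + (-8)*u1^2*v1^3 + (-1)*u1^2*v1^4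 + 120*u1*v1 + 40*u1*v1^2 + 9*u1*v1^3 + u1*v1^4 + (-170)*v1 + (-50)*v1^2 + (-10)*v1^3 + (-1)*v1^4) * hv1 + ((-1)*v1^5) * hE0 + (140*a*u1 + (-80)*a*u1^2 + 40*a*u1^3 + (-16)*a*u1^4 + (-140)*a*v1 + (-60)*a*v1^2 + (-20)*a*v1^3 + (-4)*a*v1^4 + (-16)*b*u1 + 16*b*v1 + 13*b*v1^2 + 8*b*v1^3 + 3*b*v1^4 + b*v1^5 + (-2)*c*v1 + (-5)*c*v1^2 + (-5)*c*v1^3 + (-2)*c*v1^4 + (-225)*u1 + 140*u1^2 + (-80)*u1^3 + 40*u1^4 + (-16)*u1^5 + 225*v1 + 85*v1^2 + 25*v1^3 + 5*v1^4 + v1^5) * htwo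
    have R'2 : (a+c)*v2^4 + (b+c)*v2 + c = 0 := by linear_combination ((v2+1)^5) * f2 + ((-450) + 280*a + (-160)*a*u2 + 80*a*u2^2 + (-31)*a*u2^3 + (-26)*a*u2^3*v2 + (-16)*a*u2^3*v2^2 + (-6)*a*u2^3*v2^3 + (-1)*a*u2^3*v2^4 + 49*a*u2^2*v2 + 23*a*u2^2*v2^2 + 7*a*u2^2*v2^3 + a*u2^2*v2^4 + (-80)*a*u2*v2 + (-31)*a*u2*v2^2 + (-8)*a*u2*v2^3 + (-1)*a*u2*v2^4 + 120*a*v2 + 40*a*v2^2 + 9*a*v2^3 + a*v2^4 + (-31)*b + (-26)*b*v2 + (-16)*b*v2^2 + (-6)*b*v2^3 + (-1)*b*v2^4 + 280*u2 + (-160)*u2^2 + 80*u2^3 + (-31)*u2^4 + (-26)*u2^4*v2 + (-16)*u2^4*v2^2 + (-6)*u2^4*v2^3 + (-1)*u2^4*v2^4 + 49*u2^3*v2 + 23*u2^3*v2^2 + 7*u2^3*v2^3 + u2^3*v2^4 + (-80)*u2^2*v2 + (-31)*u2^2*v2^2 + (-8)*u2^2*v2^3 + (-1)*u2^2*v2^4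 + 120*u2*v2 + 40*u2*v2^2 + 9*u2*v2^3 + u2*v2^4 + (-170)*v2 + (-50)*v2^2 + (-10)*v2^3 + (-1)*v2^4) * hv2 + ((-1)*v2^5) * hE0 + (140*a*u2 + (-80)*a*u2^2 + 40*a*u2^3 + (-16)*a*u2^4 + (-140)*a*v2 + (-60)*a*v2^2 + (-20)*a*v2^3 + (-4)*a*v2^4 + (-16)*b*u2 + 16*b*v2 + 13*b*v2^2 + 8*b*v2^3 + 3*b*v2^4 + b*v2^5 + (-2)*c*v2 + (-5)*c*v2^2 + (-5)*c*v2^3 + (-2)*c*v2^4 + (-225)*u2 + 140*u2^2 + (-80)*u2^3 + 40*u2^4 + (-16)*u2^5 + 225*v2 + 85*v2^2 + 25*v2^3 + 5*v2^4 + v2^5) * htwo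
    have R'3 : (a+c)*v3^4 + (b+c)*v3 + c = 0 := by linear_combination ((v3+1)^5) * f3 + ((-450) + 280*a + (-160)*a*u3 + 80*a*u3^2 + (-31)*a*u3^3 + (-26)*a*u3^3*v3 + (-16)*a*u3^3*v3^2 + (-6)*a*u3^3*v3^3 + (-1)*a*u3^3*v3^4 + 49*a*u3^2*v3 + 23*a*u3^2*v3^2 + 7*a*u3^2*v3^3 + a*u3^2*v3^4 + (-80)*a*u3*v3 + (-31)*a*u3*v3^2 + (-8)*a*u3*v3^3 + (-1)*a*u3*v3^4 + 120*a*v3 + 40*a*v3^2 + 9*a*v3^3 + a*v3^4 + (-31)*b + (-26)*b*v3 + (-16)*b*v3^2 + (-6)*b*v3^3 + (-1)*b*v3^4 + 280*u3 + (-160)*u3^2 + 80*u3^3 + (-31)*u3^4 + (-26)*u3^4*v3 + (-16)*u3^4*v3^2 + (-6)*u3^4*v3^3 + (-1)*u3^4*v3^4 + 49*u3^3*v3 + 23*u3^3*v3^2 + 7*u3^3*v3^3 + u3^3*v3^4 + (-80)*u3^2*v3 + (-31)*u3^2*v3^2 + (-8)*u3^2*v3^3 + (-1)*u3^2*v3^4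 + 120*u3*v3 + 40*u3*v3^2 + 9*u3*v3^3 + u3*v3^4 + (-170)*v3 + (-50)*v3^2 + (-10)*v3^3 + (-1)*v3^4) * hv3 + ((-1)*v3^5) * hE0 + (140*a*u3 + (-80)*a*u3^2 + 40*a*u3^3 + (-16)*a*u3^4 + (-140)*a*v3 + (-60)*a*v3^2 + (-20)*a*v3^3 + (-4)*a*v3^4 + (-16)*b*u3 + 16*b*v3 + 13*b*v3^2 + 8*b*v3^3 + 3*b*v3^4 + b*v3^5 + (-2)*c*v3 + (-5)*c*v3^2 + (-5)*c*v3^3 + (-2)*c*v3^4 + (-225)*u3 + 140*u3^2 + (-80)*u3^3 + 40*u3^4 + (-16)*u3^5 + 225*v3 + 85*v3^2 + 25*v3^3 + 5*v3^4 + v3^5) * htwo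
    have Gm12 : (v1+v2) * ((a+c)*(v1+v2)^3 + (b+c)) = 0 := by linear_combination R'1 + R'2 + (2*a*v1^3*v2 + 3*a*v1^2*v2^2 + 2*a*v1*v2^3 + (-1)*c + 2*c*v1^3*v2 + 3*c*v1^2*v2^2 + 2*c*v1*v2^3) * htwo
    have Gm13 : (v1+v3) * ((a+c)*(v1+v3)^3 + (b+c)) = 0 := by linear_combination R'1 + R'3 + (2*a*v1^3*v3 + 3*a*v1^2*v3^2 + 2*a*v1*v3^3 + (-1)*c + 2*c*v1^3*v3 + 3*c*v1^2*v3^2 + 2*c*v1*v3^3) * htwo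
    have G12 := (mul_eq_zero.mp Gm12).resolve_left (hne _ _ hvne12)
    have G13 := (mul_eq_zero.mp Gm13).resolve_left (hne _ _ hvne13)
    by_cases hA : a + c = 0
    · have hB : b + c = 0 := by linear_combination G12 - (v1+v2)^3 * hA
      have hC : c = 0 := by linear_combination R'1 - v1^4 * hA - v1 * hB
      exact hc0 hC
    · have hAd : (a+c)*((v1+v2)^3 - (v1+v3)^3) = 0 := by linear_combination G12 - G13
      have h3 : (v1+v2)^3 = (v1+v3)^3 :=
        sub_eq_zero.mp ((mul_eq_zero.mp hAd).resolve_left hA)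
      have heq := cubeI (v1+v2) (v1+v3) (madd1 v1 v2 hvq1 hvq2) (madd1 v1 v3 hvq1 hvq3) h3
      have hv23 : v2 = v3 := by linear_combination heq
      exact h23 (vinj u2 u3 v2 v3 hv2 hv3 hv23)
  · -- case 1 : u5 ≠ 1
    have hn5 : u5 ≠ 1 := hu5
    have hden5 : u5 + 1 ≠ 0 := fun h => hn5 (by linear_combination h - htwo)
    obtain ⟨v5, hv5⟩ : ∃ v : F, v*(u5+1) = u5 := ⟨u5/(u5+1), by field_simp⟩
    have hvq5 := hvq u5 v5 hn5 hU5 hv5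
    have hvne15 : v1 ≠ v5 := fun h => h15 (vinj u1 u5 v1 v5 hv1 hv5 h)
    have hvne25 : v2 ≠ v5 := fun h => h25 (vinj u2 u5 v2 v5 hv2 hv5 h)
    have hvne35 : v3 ≠ v5 := fun h => h35 (vinj u3 u5 v3 v5 hv3 hv5 h)
    have hvne45 : v4 ≠ v5 := fun h => h45 (vinj u4 u5 v4 v5 hv4 hv5 h)
    have hEprod : 1+a+b+c = (1+u1)*(1+u2)*(1+u3)*(1+u4)*(1+u5) := by linear_combination (1) * ha + (1) * hb + (1) * hc + ((-1)) * hS2 + ((-1)) * hS3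
    have hEne : (1:F)+a+b+c ≠ 0 := by
      rw [hEprod]
      exact mul_ne_zero (mul_ne_zero (mul_ne_zero (mul_ne_zero
        (hne 1 u1 (fun h => hn1 h.symm)) (hne 1 u2 (fun h => hn2 h.symm)))
        (hne 1 u3 (fun h => hn3 h.symm))) (hne 1 u4 (fun h => hn4 h.symm)))
        (hne 1 u5 (fun h => hn5 h.symm))
    have R1 : (1+a+b+c)*v1^5 + (a+c)*v1^4 + (b+c)*v1 + c = 0 := by linear_combination ((v1+1)^5) * f1 + ((-450) + 280*a + (-160)*a*u1 + 80*a*u1^2 + (-31)*a*u1^3 + (-26)*a*u1^3*v1 + (-16)*a*u1^3*v1^2 + (-6)*a*u1^3*v1^3 + (-1)*a*u1^3*v1^4 + 49*a*u1^2*v1 + 23*a*u1^2*v1^2 + 7*a*u1^2*v1^3 + a*u1^2*v1^4 + (-80)*a*u1*v1 + (-31)*a*u1*v1^2 + (-8)*a*u1*v1^3 + (-1)*a*u1*v1^4 + 120*a*v1 + 40*a*v1^2 + 9*a*v1^3 + a*v1^4 + (-31)*b + (-26)*b*v1 + (-16)*b*v1^2 + (-6)*b*v1^3 + (-1)*b*v1^4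 + 280*u1 + (-160)*u1^2 + 80*u1^3 + (-31)*u1^4 + (-26)*u1^4*v1 + (-16)*u1^4*v1^2 + (-6)*u1^4*v1^3 + (-1)*u1^4*v1^4 + 49*u1^3*v1 + 23*u1^3*v1^2 + 7*u1^3*v1^3 + u1^3*v1^4 + (-80)*u1^2*v1 + (-31)*u1^2*v1^2 + (-8)*u1^2*v1^3 + (-1)*u1^2*v1^4 + 120*u1*v1 + 40*u1*v1^2 + 9*u1*v1^3 + u1*v1^4 + (-170)*v1 + (-50)*v1^2 + (-10)*v1^3 + (-1)*v1^4) * hv1 + (140*a*u1 + (-80)*a*u1^2 + 40*a*u1^3 + (-16)*a*u1^4 + (-140)*a*v1 + (-60)*a*v1^2 + (-20)*a*v1^3 + (-4)*a*v1^4 + (-16)*b*u1 + 16*b*v1 + 13*b*v1^2 + 8*b*v1^3 + 3*b*v1^4 + b*v1^5 + (-2)*c*v1 + (-5)*c*v1^2 + (-5)*c*v1^3 + (-2)*c*v1^4 + (-225)*u1 + 140*u1^2 + (-80)*u1^3 + 40*u1^4 + (-16)*u1^5 + 225*v1 + 85*v1^2 + 25*v1^3 + 5*v1^4 + v1^5)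 * htwo
    have R2 : (1+a+b+c)*v2^5 + (a+c)*v2^4 + (b+c)*v2 + c = 0 := by linear_combination ((v2+1)^5) * f2 + ((-450) + 280*a + (-160)*a*u2 + 80*a*u2^2 + (-31)*a*u2^3 + (-26)*a*u2^3*v2 + (-16)*a*u2^3*v2^2 + (-6)*a*u2^3*v2^3 + (-1)*a*u2^3*v2^4 + 49*a*u2^2*v2 + 23*a*u2^2*v2^2 + 7*a*u2^2*v2^3 + a*u2^2*v2^4 + (-80)*a*u2*v2 + (-31)*a*u2*v2^2 + (-8)*a*u2*v2^3 + (-1)*a*u2*v2^4 + 120*a*v2 + 40*a*v2^2 + 9*a*v2^3 + a*v2^4 + (-31)*b + (-26)*b*v2 + (-16)*b*v2^2 + (-6)*b*v2^3 + (-1)*b*v2^4 + 280*u2 + (-160)*u2^2 + 80*u2^3 + (-31)*u2^4 + (-26)*u2^4*v2 + (-16)*u2^4*v2^2 + (-6)*u2^4*v2^3 + (-1)*u2^4*v2^4 + 49*u2^3*v2 + 23*u2^3*v2^2 + 7*u2^3*v2^3 + u2^3*v2^4 + (-80)*u2^2*v2 + (-31)*u2^2*v2^2 + (-8)*u2^2*v2^3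 + (-1)*u2^2*v2^4 + 120*u2*v2 + 40*u2*v2^2 + 9*u2*v2^3 + u2*v2^4 + (-170)*v2 + (-50)*v2^2 + (-10)*v2^3 + (-1)*v2^4) * hv2 + (140*a*u2 + (-80)*a*u2^2 + 40*a*u2^3 + (-16)*a*u2^4 + (-140)*a*v2 + (-60)*a*v2^2 + (-20)*a*v2^3 + (-4)*a*v2^4 + (-16)*b*u2 + 16*b*v2 + 13*b*v2^2 + 8*b*v2^3 + 3*b*v2^4 + b*v2^5 + (-2)*c*v2 + (-5)*c*v2^2 + (-5)*c*v2^3 + (-2)*c*v2^4 + (-225)*u2 + 140*u2^2 + (-80)*u2^3 + 40*u2^4 + (-16)*u2^5 + 225*v2 + 85*v2^2 + 25*v2^3 + 5*v2^4 + v2^5) * htwo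
    have R3 : (1+a+b+c)*v3^5 + (a+c)*v3^4 + (b+c)*v3 + c = 0 := by linear_combination ((v3+1)^5) * f3 + ((-450) + 280*a + (-160)*a*u3 + 80*a*u3^2 + (-31)*a*u3^3 + (-26)*a*u3^3*v3 + (-16)*a*u3^3*v3^2 + (-6)*a*u3^3*v3^3 + (-1)*a*u3^3*v3^4 + 49*a*u3^2*v3 + 23*a*u3^2*v3^2 + 7*a*u3^2*v3^3 + a*u3^2*v3^4 + (-80)*a*u3*v3 + (-31)*a*u3*v3^2 + (-8)*a*u3*v3^3 + (-1)*a*u3*v3^4 + 120*a*v3 + 40*a*v3^2 + 9*a*v3^3 + a*v3^4 + (-31)*b + (-26)*b*v3 + (-16)*b*v3^2 + (-6)*b*v3^3 + (-1)*b*v3^4 + 280*u3 + (-160)*u3^2 + 80*u3^3 + (-31)*u3^4 + (-26)*u3^4*v3 + (-16)*u3^4*v3^2 + (-6)*u3^4*v3^3 + (-1)*u3^4*v3^4 + 49*u3^3*v3 + 23*u3^3*v3^2 + 7*u3^3*v3^3 + u3^3*v3^4 + (-80)*u3^2*v3 + (-31)*u3^2*v3^2 + (-8)*u3^2*v3^3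 + (-1)*u3^2*v3^4 + 120*u3*v3 + 40*u3*v3^2 + 9*u3*v3^3 + u3*v3^4 + (-170)*v3 + (-50)*v3^2 + (-10)*v3^3 + (-1)*v3^4) * hv3 + (140*a*u3 + (-80)*a*u3^2 + 40*a*u3^3 + (-16)*a*u3^4 + (-140)*a*v3 + (-60)*a*v3^2 + (-20)*a*v3^3 + (-4)*a*v3^4 + (-16)*b*u3 + 16*b*v3 + 13*b*v3^2 + 8*b*v3^3 + 3*b*v3^4 + b*v3^5 + (-2)*c*v3 + (-5)*c*v3^2 + (-5)*c*v3^3 + (-2)*c*v3^4 + (-225)*u3 + 140*u3^2 + (-80)*u3^3 + 40*u3^4 + (-16)*u3^5 + 225*v3 + 85*v3^2 + 25*v3^3 + 5*v3^4 + v3^5) * htwo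
    have R4 : (1+a+b+c)*v4^5 + (a+c)*v4^4 + (b+c)*v4 + c = 0 := by linear_combination ((v4+1)^5) * f4 + ((-450) + 280*a + (-160)*a*u4 + 80*a*u4^2 + (-31)*a*u4^3 + (-26)*a*u4^3*v4 + (-16)*a*u4^3*v4^2 + (-6)*a*u4^3*v4^3 + (-1)*a*u4^3*v4^4 + 49*a*u4^2*v4 + 23*a*u4^2*v4^2 + 7*a*u4^2*v4^3 + a*u4^2*v4^4 + (-80)*a*u4*v4 + (-31)*a*u4*v4^2 + (-8)*a*u4*v4^3 + (-1)*a*u4*v4^4 + 120*a*v4 + 40*a*v4^2 + 9*a*v4^3 + a*v4^4 + (-31)*b + (-26)*b*v4 + (-16)*b*v4^2 + (-6)*b*v4^3 + (-1)*b*v4^4 + 280*u4 + (-160)*u4^2 + 80*u4^3 + (-31)*u4^4 + (-26)*u4^4*v4 + (-16)*u4^4*v4^2 + (-6)*u4^4*v4^3 + (-1)*u4^4*v4^4 + 49*u4^3*v4 + 23*u4^3*v4^2 + 7*u4^3*v4^3 + u4^3*v4^4 + (-80)*u4^2*v4 + (-31)*u4^2*v4^2 + (-8)*u4^2*v4^3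 + (-1)*u4^2*v4^4 + 120*u4*v4 + 40*u4*v4^2 + 9*u4*v4^3 + u4*v4^4 + (-170)*v4 + (-50)*v4^2 + (-10)*v4^3 + (-1)*v4^4) * hv4 + (140*a*u4 + (-80)*a*u4^2 + 40*a*u4^3 + (-16)*a*u4^4 + (-140)*a*v4 + (-60)*a*v4^2 + (-20)*a*v4^3 + (-4)*a*v4^4 + (-16)*b*u4 + 16*b*v4 + 13*b*v4^2 + 8*b*v4^3 + 3*b*v4^4 + b*v4^5 + (-2)*c*v4 + (-5)*c*v4^2 + (-5)*c*v4^3 + (-2)*c*v4^4 + (-225)*u4 + 140*u4^2 + (-80)*u4^3 + 40*u4^4 + (-16)*u4^5 + 225*v4 + 85*v4^2 + 25*v4^3 + 5*v4^4 + v4^5) * htwo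
    have R5 : (1+a+b+c)*v5^5 + (a+c)*v5^4 + (b+c)*v5 + c = 0 := by linear_combination ((v5+1)^5) * f5 + ((-450) + 280*a + (-160)*a*u5 + 80*a*u5^2 + (-31)*a*u5^3 + (-26)*a*u5^3*v5 + (-16)*a*u5^3*v5^2 + (-6)*a*u5^3*v5^3 + (-1)*a*u5^3*v5^4 + 49*a*u5^2*v5 + 23*a*u5^2*v5^2 + 7*a*u5^2*v5^3 + a*u5^2*v5^4 + (-80)*a*u5*v5 + (-31)*a*u5*v5^2 + (-8)*a*u5*v5^3 + (-1)*a*u5*v5^4 + 120*a*v5 + 40*a*v5^2 + 9*a*v5^3 + a*v5^4 + (-31)*b + (-26)*b*v5 + (-16)*b*v5^2 + (-6)*b*v5^3 + (-1)*b*v5^4 + 280*u5 + (-160)*u5^2 + 80*u5^3 + (-31)*u5^4 + (-26)*u5^4*v5 + (-16)*u5^4*v5^2 + (-6)*u5^4*v5^3 + (-1)*u5^4*v5^4 + 49*u5^3*v5 + 23*u5^3*v5^2 + 7*u5^3*v5^3 + u5^3*v5^4 + (-80)*u5^2*v5 + (-31)*u5^2*v5^2 + (-8)*u5^2*v5^3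 + (-1)*u5^2*v5^4 + 120*u5*v5 + 40*u5*v5^2 + 9*u5*v5^3 + u5*v5^4 + (-170)*v5 + (-50)*v5^2 + (-10)*v5^3 + (-1)*v5^4) * hv5 + (140*a*u5 + (-80)*a*u5^2 + 40*a*u5^3 + (-16)*a*u5^4 + (-140)*a*v5 + (-60)*a*v5^2 + (-20)*a*v5^3 + (-4)*a*v5^4 + (-16)*b*u5 + 16*b*v5 + 13*b*v5^2 + 8*b*v5^3 + 3*b*v5^4 + b*v5^5 + (-2)*c*v5 + (-5)*c*v5^2 + (-5)*c*v5^3 + (-2)*c*v5^4 + (-225)*u5 + 140*u5^2 + (-80)*u5^3 + 40*u5^4 + (-16)*u5^5 + 225*v5 + 85*v5^2 + 25*v5^3 + 5*v5^4 + v5^5) * htwo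
    have rQm2 : (v2+v1) * ((1+a+b+c)*(v2+v1)^4 + ((1+a+b+c)*v1 + (a+c))*(v2+v1)^3 + ((1+a+b+c)*v1^4 + (b+c))) = 0 := by linear_combination R2 + R1 + (a*v1^5 + 5*a*v1^4*v2 + 2*a*v1^3*v2 + 8*a*v1^3*v2^2 + 3*a*v1^2*v2^2 + 7*a*v1^2*v2^3 + 2*a*v1*v2^3 + 3*a*v1*v2^4 + b*v1^5 + 5*b*v1^4*v2 + 8*b*v1^3*v2^2 + 7*b*v1^2*v2^3 + 3*b*v1*v2^4 + (-1)*c + c*v1^5 + 5*c*v1^4*v2 + 2*c*v1^3*v2 + 8*c*v1^3*v2^2 + 3*c*v1^2*v2^2 + 7*c*v1^2*v2^3 + 2*c*v1*v2^3 + 3*c*v1*v2^4 + v1^5 + 5*v1^4*v2 + 8*v1^3*v2^2 + 7*v1^2*v2^3 + 3*v1*v2^4) * htwo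
    have rQm3 : (v3+v1) * ((1+a+b+c)*(v3+v1)^4 + ((1+a+b+c)*v1 + (a+c))*(v3+v1)^3 + ((1+a+b+c)*v1^4 + (b+c))) = 0 := by linear_combination R3 + R1 + (a*v1^5 + 5*a*v1^4*v3 + 2*a*v1^3*v3 + 8*a*v1^3*v3^2 + 3*a*v1^2*v3^2 + 7*a*v1^2*v3^3 + 2*a*v1*v3^3 + 3*a*v1*v3^4 + b*v1^5 + 5*b*v1^4*v3 + 8*b*v1^3*v3^2 + 7*b*v1^2*v3^3 + 3*b*v1*v3^4 + (-1)*c + c*v1^5 + 5*c*v1^4*v3 + 2*c*v1^3*v3 + 8*c*v1^3*v3^2 + 3*c*v1^2*v3^2 + 7*c*v1^2*v3^3 + 2*c*v1*v3^3 + 3*c*v1*v3^4 + v1^5 + 5*v1^4*v3 + 8*v1^3*v3^2 + 7*v1^2*v3^3 + 3*v1*v3^4) * htwo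
    have rQm4 : (v4+v1) * ((1+a+b+c)*(v4+v1)^4 + ((1+a+b+c)*v1 + (a+c))*(v4+v1)^3 + ((1+a+b+c)*v1^4 + (b+c))) = 0 := by linear_combination R4 + R1 + (a*v1^5 + 5*a*v1^4*v4 + 2*a*v1^3*v4 + 8*a*v1^3*v4^2 + 3*a*v1^2*v4^2 + 7*a*v1^2*v4^3 + 2*a*v1*v4^3 + 3*a*v1*v4^4 + b*v1^5 + 5*b*v1^4*v4 + 8*b*v1^3*v4^2 + 7*b*v1^2*v4^3 + 3*b*v1*v4^4 + (-1)*c + c*v1^5 + 5*c*v1^4*v4 + 2*c*v1^3*v4 + 8*c*v1^3*v4^2 + 3*c*v1^2*v4^2 + 7*c*v1^2*v4^3 + 2*c*v1*v4^3 + 3*c*v1*v4^4 + v1^5 + 5*v1^4*v4 + 8*v1^3*v4^2 + 7*v1^2*v4^3 + 3*v1*v4^4) * htwo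
    have rQm5 : (v5+v1) * ((1+a+b+c)*(v5+v1)^4 + ((1+a+b+c)*v1 + (a+c))*(v5+v1)^3 + ((1+a+b+c)*v1^4 + (b+c))) = 0 := by linear_combination R5 + R1 + (a*v1^5 + 5*a*v1^4*v5 + 2*a*v1^3*v5 + 8*a*v1^3*v5^2 + 3*a*v1^2*v5^2 + 7*a*v1^2*v5^3 + 2*a*v1*v5^3 + 3*a*v1*v5^4 + b*v1^5 + 5*b*v1^4*v5 + 8*b*v1^3*v5^2 + 7*b*v1^2*v5^3 + 3*b*v1*v5^4 + (-1)*c + c*v1^5 + 5*c*v1^4*v5 + 2*c*v1^3*v5 + 8*c*v1^3*v5^2 + 3*c*v1^2*v5^2 + 7*c*v1^2*v5^3 + 2*c*v1*v5^3 + 3*c*v1*v5^4 + v1^5 + 5*v1^4*v5 + 8*v1^3*v5^2 + 7*v1^2*v5^3 + 3*v1*v5^4) * htwo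
    have rQ2 := (mul_eq_zero.mp rQm2).resolve_left (hne _ _ (fun h => hvne12.symm (by linear_combination h)))
    have rQ3 := (mul_eq_zero.mp rQm3).resolve_left (hne _ _ (fun h => hvne13.symm (by linear_combination h)))
    have rQ4 := (mul_eq_zero.mp rQm4).resolve_left (hne _ _ (fun h => hvne14.symm (by linear_combination h)))
    have rQ5 := (mul_eq_zero.mp rQm5).resolve_left (hne _ _ (fun h => hvne15.symm (by linear_combination h)))
    have hz23 : v2+v1 ≠ v3+v1 := fun h => hvne23 (by linear_combination h)
    have hz24 : v2+v1 ≠ v4+v1 := fun h => hvne24 (by linear_combination h)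
    have hz25 : v2+v1 ≠ v5+v1 := fun h => hvne25 (by linear_combination h)
    have hz34 : v3+v1 ≠ v4+v1 := fun h => hvne34 (by linear_combination h)
    have hz35 : v3+v1 ≠ v5+v1 := fun h => hvne35 (by linear_combination h)
    have hz45 : v4+v1 ≠ v5+v1 := fun h => hvne45 (by linear_combination h)
    have mz2 : (v2+v1)^(2^m) = v2+v1 := madd1 v2 v1 hvq2 hvq1
    have mz3 : (v3+v1)^(2^m) = v3+v1 := madd1 v3 v1 hvq3 hvq1
    have mz4 : (v4+v1)^(2^m) = v4+v1 := madd1 v4 v1 hvq4 hvq1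
    have mz5 : (v5+v1)^(2^m) = v5+v1 := madd1 v5 v1 hvq5 hvq1
    have hcA : (((v2+v1)+(v3+v1))*((v4+v1)+(v5+v1)))^3 = (((v2+v1)+(v4+v1))*((v3+v1)+(v5+v1)))^3 →
        ((v2+v1)+(v3+v1))*((v4+v1)+(v5+v1)) = ((v2+v1)+(v4+v1))*((v3+v1)+(v5+v1)) :=
      fun h => cubeI _ _ (mmul _ _ (madd _ _ mz2 mz3) (madd _ _ mz4 mz5))
        (mmul _ _ (madd _ _ mz2 mz4) (madd _ _ mz3 mz5)) h
    have hcB : (((v2+v1)+(v3+v1))*((v4+v1)+(v5+v1)))^3 = (((v2+v1)+(v5+v1))*((v3+v1)+(v4+v1)))^3 →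
        ((v2+v1)+(v3+v1))*((v4+v1)+(v5+v1)) = ((v2+v1)+(v5+v1))*((v3+v1)+(v4+v1)) :=
      fun h => cubeI _ _ (mmul _ _ (madd _ _ mz2 mz3) (madd _ _ mz4 mz5))
        (mmul _ _ (madd _ _ mz2 mz5) (madd _ _ mz3 mz4)) h
    exact lemQ F htwo (1+a+b+c) ((1+a+b+c)*v1 + (a+c)) ((1+a+b+c)*v1^4 + (b+c))
      (v2+v1) (v3+v1) (v4+v1) (v5+v1) hEne hz23 hz24 hz25 hz34 hz35 hz45
      rQ2 rQ3 rQ4 rQ5 hcA hcB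

set_option maxHeartbeats 1000000 in
/-- For `q = 2^m` with `m` odd, `m ≥ 3`, and five pairwise distinct `(q+1)`-st roots
of unity in `GF(q^2)`, the elementary symmetric polynomial `σ_{5,2}` is nonzero. -/
theorem stmt_8 (m : ℕ) (hm : 3 ≤ m) (hmo : Odd m) (F : Type*) [Field F] [Fintype F]
    (hF : Fintype.card F = 2 ^ (2 * m))
    (u1 u2 u3 u4 u5 : F)
    (h1 : u1 ^ (2 ^ m + 1) = 1) (h2 : u2 ^ (2 ^ m + 1) = 1)
    (h3 : u3 ^ (2 ^ m + 1) = 1) (h4 : u4 ^ (2 ^ m + 1) = 1)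
    (h5 : u5 ^ (2 ^ m + 1) = 1)
    (h12 : u1 ≠ u2) (h13 : u1 ≠ u3) (h14 : u1 ≠ u4) (h15 : u1 ≠ u5)
    (h23 : u2 ≠ u3) (h24 : u2 ≠ u4) (h25 : u2 ≠ u5)
    (h34 : u3 ≠ u4) (h35 : u3 ≠ u5) (h45 : u4 ≠ u5) :
    u1 * u2 + u1 * u3 + u1 * u4 + u1 * u5 + u2 * u3 + u2 * u4 + u2 * u5
      + u3 * u4 + u3 * u5 + u4 * u5 ≠ 0 := by
  intro hS2
  haveI hchar : CharP F 2 := charF m F hF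
  have htwo : (2:F) = 0 := by exact_mod_cast CharP.cast_eq_zero F 2
  obtain ⟨k, hk⟩ := hmo
  have hmk : m + 1 = 2*(k+1) := by omega
  have cubeI : ∀ x y : F, x ^ (2^m) = x → y ^ (2^m) = y → x^3 = y^3 → x = y :=
    fun x y hx hy h => cube_inj m k hmk F x y hx hy h
  have hfr : (u1 * u2 + u1 * u3 + u1 * u4 + u1 * u5 + u2 * u3 + u2 * u4 + u2 * u5
      + u3 * u4 + u3 * u5 + u4 * u5)^(2^m) = 0 := by
    rw [hS2]
    exact zero_pow (by positivity)
  simp only [add_pow_char_pow, mul_pow] at hfr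
  -- hfr : sum of u_i^(2^m)*u_j^(2^m) = 0
  obtain ⟨w1, hw1⟩ : ∃ w : F, u1^(2^m) = w := ⟨_, rfl⟩
  obtain ⟨w2, hw2⟩ : ∃ w : F, u2^(2^m) = w := ⟨_, rfl⟩
  obtain ⟨w3, hw3⟩ : ∃ w : F, u3^(2^m) = w := ⟨_, rfl⟩
  obtain ⟨w4, hw4⟩ : ∃ w : F, u4^(2^m) = w := ⟨_, rfl⟩
  obtain ⟨w5, hw5⟩ : ∃ w : F, u5^(2^m) = w := ⟨_, rfl⟩
  rw [hw1, hw2, hw3, hw4, hw5] at hfr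
  have h10 := hfr
  have hq1 : w1 * u1 = 1 := by rw [← hw1, ← pow_succ]; exact h1
  have hq2 : w2 * u2 = 1 := by rw [← hw2, ← pow_succ]; exact h2
  have hq3 : w3 * u3 = 1 := by rw [← hw3, ← pow_succ]; exact h3
  have hq4 : w4 * u4 = 1 := by rw [← hw4, ← pow_succ]; exact h4
  have hq5 : w5 * u5 = 1 := by rw [← hw5, ← pow_succ]; exact h5
  have hS3 : u1*u2*u3 + u1*u2*u4 + u1*u2*u5 + u1*u3*u4 + u1*u3*u5 + u1*u4*u5
      + u2*u3*u4 + u2*u3*u5 + u2*u4*u5 + u3*u4*u5 = 0 := by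
    linear_combination (u1*u2*u3*u4*u5) * h10 + ((-1)*u2*u3*u4*u5*w2 + (-1)*u2*u3*u4*u5*w3 + (-1)*u2*u3*u4*u5*w4 + (-1)*u2*u3*u4*u5*w5) * hq1 + ((-1)*u1*u3*u4*u5*w3 + (-1)*u1*u3*u4*u5*w4 + (-1)*u1*u3*u4*u5*w5 + (-1)*u3*u4*u5) * hq2 + ((-1)*u1*u2*u4*u5*w4 + (-1)*u1*u2*u4*u5*w5 + (-1)*u1*u4*u5 + (-1)*u2*u4*u5) * hq3 + ((-1)*u1*u2*u3*u5*w5 + (-1)*u1*u2*u5 + (-1)*u1*u3*u5 + (-1)*u2*u3*u5) * hq4 + ((-1)*u1*u2*u3 + (-1)*u1*u2*u4 + (-1)*u1*u3*u4 + (-1)*u2*u3*u4) * hq5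
  by_cases e1 : u1 = 1
  · exact key m F htwo cubeI u2 u3 u4 u5 u1 h2 h3 h4 h5 h1 h23 h24 h25 (Ne.symm h12) h34 h35 (Ne.symm h13) h45 (Ne.symm h14) (Ne.symm h15) (fun h => h12 (e1.trans h.symm)) (fun h => h13 (e1.trans h.symm)) (fun h => h14 (e1.trans h.symm)) (fun h => h15 (e1.trans h.symm)) (u2+u3+u4+u5+u1) (u2*u3*u4*u5 + u2*u3*u4*u1 + u2*u3*u5*u1 + u2*u4*u5*u1 + u3*u4*u5*u1) (u2*u3*u4*u5*u1) rfl rfl rfl (by linear_combination hS2) (by linear_combination hS3)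
  by_cases e2 : u2 = 1
  · exact key m F htwo cubeI u1 u3 u4 u5 u2 h1 h3 h4 h5 h2 h13 h14 h15 h12 h34 h35 (Ne.symm h23) h45 (Ne.symm h24) (Ne.symm h25) (fun h => h12 (h.trans e2.symm)) (fun h => h23 (e2.trans h.symm)) (fun h => h24 (e2.trans h.symm)) (fun h => h25 (e2.trans h.symm)) (u1+u3+u4+u5+u2) (u1*u3*u4*u5 + u1*u3*u4*u2 + u1*u3*u5*u2 + u1*u4*u5*u2 + u3*u4*u5*u2) (u1*u3*u4*u5*u2) rfl rfl rfl (by linear_combination hS2) (by linear_combination hS3)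
  by_cases e3 : u3 = 1
  · exact key m F htwo cubeI u1 u2 u4 u5 u3 h1 h2 h4 h5 h3 h12 h14 h15 h13 h24 h25 h23 h45 (Ne.symm h34) (Ne.symm h35) (fun h => h13 (h.trans e3.symm)) (fun h => h23 (h.trans e3.symm)) (fun h => h34 (e3.trans h.symm)) (fun h => h35 (e3.trans h.symm)) (u1+u2+u4+u5+u3) (u1*u2*u4*u5 + u1*u2*u4*u3 + u1*u2*u5*u3 + u1*u4*u5*u3 + u2*u4*u5*u3) (u1*u2*u4*u5*u3) rfl rfl rfl (by linear_combination hS2) (by linear_combination hS3)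
  by_cases e4 : u4 = 1
  · exact key m F htwo cubeI u1 u2 u3 u5 u4 h1 h2 h3 h5 h4 h12 h13 h15 h14 h23 h25 h24 h35 h34 (Ne.symm h45) (fun h => h14 (h.trans e4.symm)) (fun h => h24 (h.trans e4.symm)) (fun h => h34 (h.trans e4.symm)) (fun h => h45 (e4.trans h.symm)) (u1+u2+u3+u5+u4) (u1*u2*u3*u5 + u1*u2*u3*u4 + u1*u2*u5*u4 + u1*u3*u5*u4 + u2*u3*u5*u4) (u1*u2*u3*u5*u4) rfl rfl rfl (by linear_combination hS2) (by linear_combination hS3)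
  by_cases e5 : u5 = 1
  · exact key m F htwo cubeI u1 u2 u3 u4 u5 h1 h2 h3 h4 h5 h12 h13 h14 h15 h23 h24 h25 h34 h35 h45 (fun h => h15 (h.trans e5.symm)) (fun h => h25 (h.trans e5.symm)) (fun h => h35 (h.trans e5.symm)) (fun h => h45 (h.trans e5.symm)) (u1+u2+u3+u4+u5) (u1*u2*u3*u4 + u1*u2*u3*u5 + u1*u2*u4*u5 + u1*u3*u4*u5 + u2*u3*u4*u5) (u1*u2*u3*u4*u5) rfl rfl rfl (by linear_combination hS2) (by linear_combination hS3)
  exact key m F htwo cubeI u1 u2 u3 u4 u5 h1 h2 h3 h4 h5 h12 h13 h14 h15 h23 h24 h25 h34 h35 h45 e1 e2 e3 e4 (u1+u2+u3+u4+u5) (u1*u2*u3*u4 + u1*u2*u3*u5 + u1*u2*u4*u5 + u1*u3*u4*u5 + u2*u3*u4*u5) (u1*u2*u3*u4*u5) rfl rfl rfl (by linear_combination hS2) (by linear_combination hS3)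
end

section
/- Let q = 2^m and let U be the group of (q+1)-st roots of unity in GF(q^2). Let u1, u2, u3 be pairwise distinct elements of U such that with s1, s2, s3 the elementary symmetric polynomials, the products (s1^2+s2)(s1*s2+s3)(s2^2+s1*s3) ≠ 0. Set a = (s1*s2+s3)/(s1^2+s2) and b = (s2^2+s1*s3)/(s1^2+s2). Then b ∈ U, b/a^2 ∈ GF(q), and Tr_{GF(q)/GF(2)}(b/a^2) ≡ 1 + m (mod 2). -/
/-- For pairwise distinct `(q+1)`-st roots of unity `u1, u2, u3` in `GF(q^2)`, `q = 2^m`,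
with `(s1^2+s2)(s1*s2+s3)(s2^2+s1*s3) ≠ 0`, set `a = (s1*s2+s3)/(s1^2+s2)` and
`b = (s2^2+s1*s3)/(s1^2+s2)`. Then `b ∈ U_{q+1}`, `b/a^2 ∈ GF(q)` (i.e. it is fixed
by `x ↦ x^q`), and `Tr_{GF(q)/GF(2)}(b/a^2) ≡ 1 + m (mod 2)`. -/
theorem stmt_9 (m : ℕ) (hm : 0 < m) (F : Type*) [Field F] [Fintype F]
    (hF : Fintype.card F = 2 ^ (2 * m))
    (u1 u2 u3 : F)
    (h1 : u1 ^ (2 ^ m + 1) = 1) (h2 : u2 ^ (2 ^ m + 1) = 1)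
    (h3 : u3 ^ (2 ^ m + 1) = 1)
    (h12 : u1 ≠ u2) (h13 : u1 ≠ u3) (h23 : u2 ≠ u3)
    (s1 s2 s3 a b : F)
    (hs1 : s1 = u1 + u2 + u3) (hs2 : s2 = u1 * u2 + u2 * u3 + u3 * u1)
    (hs3 : s3 = u1 * u2 * u3)
    (hnz : (s1 ^ 2 + s2) * (s1 * s2 + s3) * (s2 ^ 2 + s1 * s3) ≠ 0)
    (ha : a = (s1 * s2 + s3) / (s1 ^ 2 + s2))
    (hb : b = (s2 ^ 2 + s1 * s3) / (s1 ^ 2 + s2)) :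
    b ^ (2 ^ m + 1) = 1 ∧
    (b / a ^ 2) ^ (2 ^ m) = b / a ^ 2 ∧
    ∑ i ∈ Finset.range m, (b / a ^ 2) ^ (2 ^ i) = if Even m then 1 else 0 := by
  haveI hf2 : Fact (Nat.Prime 2) := ⟨Nat.prime_two⟩
  haveI hchar : CharP F 2 := by
    haveI := ringChar.charP F
    obtain ⟨n, hp, hc⟩ := FiniteField.card F (ringChar F)
    have h2' : ringChar F = 2 := by
      have hd : ringChar F ∣ 2 ^ (2 * m) := by
        rw [← hF, hc]; exact dvd_pow_self _ n.pos.ne'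
      exact (Nat.prime_dvd_prime_iff_eq hp Nat.prime_two).mp (hp.dvd_of_dvd_pow hd)
    rw [← h2']; exact ringChar.charP F
  have htwo : (2 : F) = 0 := CharTwo.two_eq_zero
  have hu1 : u1 ≠ 0 := by
    intro h; rw [h, zero_pow (by positivity)] at h1; exact one_ne_zero h1.symm
  have hu2 : u2 ≠ 0 := by
    intro h; rw [h, zero_pow (by positivity)] at h2; exact one_ne_zero h2.symm
  have hu3 : u3 ≠ 0 := by
    intro h; rw [h, zero_pow (by positivity)] at h3; exact one_ne_zero h3.symm
  subst hs1 hs2 hs3 ha hb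
  have hD : ((u1 + u2 + u3) ^ 2 + (u1 * u2 + u2 * u3 + u3 * u1)) ≠ 0 := by
    intro h; apply hnz; rw [h]; ring
  have hN1 : ((u1 + u2 + u3) * (u1 * u2 + u2 * u3 + u3 * u1) + u1 * u2 * u3) ≠ 0 := by
    intro h; apply hnz; rw [h]; ring
  have hN2 : ((u1 * u2 + u2 * u3 + u3 * u1) ^ 2 + (u1 + u2 + u3) * (u1 * u2 * u3)) ≠ 0 := by
    intro h; apply hnz; rw [h]; ring
  have hprod : u1 * u2 * u3 ≠ 0 := mul_ne_zero (mul_ne_zero hu1 hu2) hu3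
  have hprod2 : (u1 * u2 * u3) ^ 2 ≠ 0 := pow_ne_zero 2 hprod
  have hφ : ∀ x : F, x ^ 2 ^ m = iterateFrobenius F 2 m x := fun x => rfl
  have hx1 : iterateFrobenius F 2 m u1 * u1 = 1 := by rw [← hφ, ← pow_succ]; exact h1
  have hx2 : iterateFrobenius F 2 m u2 * u2 = 1 := by rw [← hφ, ← pow_succ]; exact h2
  have hx3 : iterateFrobenius F 2 m u3 * u3 = 1 := by rw [← hφ, ← pow_succ]; exact h3
  -- Frobenius images (cleared forms)
  have eD : ((u1 + u2 + u3) ^ 2 + (u1 * u2 + u2 * u3 + u3 * u1)) ^ 2 ^ m * (u1 * u2 * u3) ^ 2 = ((u1 * u2 + u2 * u3 + u3 * u1) ^ 2 + (u1 + u2 + u3) * (u1 * u2 * u3)) := by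
    rw [hφ]; simp only [map_add, map_mul, map_pow]
    linear_combination (u2 ^ 2 * u3 ^ 2 + 3 * (iterateFrobenius F 2 m u3) * u1 * u2 ^ 2 * u3 ^ 2 + 3 * (iterateFrobenius F 2 m u2) * u1 * u2 ^ 2 * u3 ^ 2 + (iterateFrobenius F 2 m u1) * u1 * u2 ^ 2 * u3 ^ 2) * hx1 + (3 * u1 * u2 * u3 ^ 2 + u1 ^ 2 * u3 ^ 2 + 3 * (iterateFrobenius F 2 m u3) * u1 ^ 2 * u2 * u3 ^ 2 + (iterateFrobenius F 2 m u2) * u1 ^ 2 * u2 * u3 ^ 2) * hx2 + (3 * u1 * u2 ^ 2 * u3 + 3 * u1 ^ 2 * u2 * u3 + u1 ^ 2 * u2 ^ 2 + (iterateFrobenius F 2 m u3) * u1 ^ 2 * u2 ^ 2 * u3) * hx3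
  have eN1 : ((u1 + u2 + u3) * (u1 * u2 + u2 * u3 + u3 * u1) + u1 * u2 * u3) ^ 2 ^ m * (u1 * u2 * u3) ^ 2 = ((u1 + u2 + u3) * (u1 * u2 + u2 * u3 + u3 * u1) + u1 * u2 * u3) := by
    rw [hφ]; simp only [map_add, map_mul, map_pow]
    linear_combination ((iterateFrobenius F 2 m u3) * u2 ^ 2 * u3 ^ 2 + (iterateFrobenius F 2 m u3) ^ 2 * u1 * u2 ^ 2 * u3 ^ 2 + (iterateFrobenius F 2 m u2) * u2 ^ 2 * u3 ^ 2 + 4 * (iterateFrobenius F 2 m u2) * (iterateFrobenius F 2 m u3) * u1 * u2 ^ 2 * u3 ^ 2 + (iterateFrobenius F 2 m u2) ^ 2 * u1 * u2 ^ 2 * u3 ^ 2 + (iterateFrobenius F 2 m u1) * (iterateFrobenius F 2 m u3) * u1 * u2 ^ 2 * u3 ^ 2 + (iterateFrobenius F 2 m u1) * (iterateFrobenius F 2 m u2) * u1 * u2 ^ 2 * u3 ^ 2) * hx1 + (u2 * u3 ^ 2 + u1 * u3 ^ 2 + 4 * (iterateFrobenius F 2 m u3) * u1 * u2 * u3 ^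 2 + (iterateFrobenius F 2 m u3) * u1 ^ 2 * u3 ^ 2 + (iterateFrobenius F 2 m u3) ^ 2 * u1 ^ 2 * u2 * u3 ^ 2 + (iterateFrobenius F 2 m u2) * u1 * u2 * u3 ^ 2 + (iterateFrobenius F 2 m u2) * (iterateFrobenius F 2 m u3) * u1 ^ 2 * u2 * u3 ^ 2) * hx2 + (u2 ^ 2 * u3 + 4 * u1 * u2 * u3 + u1 * u2 ^ 2 + u1 ^ 2 * u3 + u1 ^ 2 * u2 + (iterateFrobenius F 2 m u3) * u1 * u2 ^ 2 * u3 + (iterateFrobenius F 2 m u3) * u1 ^ 2 * u2 * u3) * hx3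
  have eN2 : ((u1 * u2 + u2 * u3 + u3 * u1) ^ 2 + (u1 + u2 + u3) * (u1 * u2 * u3)) ^ 2 ^ m * (u1 * u2 * u3) ^ 2 = ((u1 + u2 + u3) ^ 2 + (u1 * u2 + u2 * u3 + u3 * u1)) := by
    rw [hφ]; simp only [map_add, map_mul, map_pow]
    linear_combination ((iterateFrobenius F 2 m u3) ^ 2 * u2 ^ 2 * u3 ^ 2 + 3 * (iterateFrobenius F 2 m u2) * (iterateFrobenius F 2 m u3) * u2 ^ 2 * u3 ^ 2 + 3 * (iterateFrobenius F 2 m u2) * (iterateFrobenius F 2 m u3) ^ 2 * u1 * u2 ^ 2 * u3 ^ 2 + (iterateFrobenius F 2 m u2) ^ 2 * u2 ^ 2 * u3 ^ 2 + 3 * (iterateFrobenius F 2 m u2) ^ 2 * (iterateFrobenius F 2 m u3) * u1 * u2 ^ 2 * u3 ^ 2 + (iterateFrobenius F 2 m u1) * (iterateFrobenius F 2 m u3) ^ 2 * u1 * u2 ^ 2 * u3 ^ 2 + 3 * (iterateFrobenius F 2 m u1) * (iterateFrobenius F 2 m u2) * (iterateFrobenius F 2 m u3) * u1 * u2 ^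 2 * u3 ^ 2 + (iterateFrobenius F 2 m u1) * (iterateFrobenius F 2 m u2) ^ 2 * u1 * u2 ^ 2 * u3 ^ 2) * hx1 + (u3 ^ 2 + 3 * (iterateFrobenius F 2 m u3) * u2 * u3 ^ 2 + 3 * (iterateFrobenius F 2 m u3) * u1 * u3 ^ 2 + 3 * (iterateFrobenius F 2 m u3) ^ 2 * u1 * u2 * u3 ^ 2 + (iterateFrobenius F 2 m u3) ^ 2 * u1 ^ 2 * u3 ^ 2 + (iterateFrobenius F 2 m u2) * u2 * u3 ^ 2 + 3 * (iterateFrobenius F 2 m u2) * (iterateFrobenius F 2 m u3) * u1 * u2 * u3 ^ 2 + (iterateFrobenius F 2 m u2) * (iterateFrobenius F 2 m u3) ^ 2 * u1 ^ 2 * u2 * u3 ^ 2) * hx2 + (3 * u2 * u3 + u2 ^ 2 + 3 * u1 * u3 + 3 * u1 * u2 + u1 ^ 2 + (iterateFrobenius F 2 m u3) * u2 ^ 2 * u3 + 3 * (iterateFrobenius F 2 m u3) * u1 * u2 * u3 + (iterateFrobenius F 2 m u3) * u1 ^ 2 * u3) * hx3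
  have eP : (u1 * u2 ^ 2 + u2 * u3 ^ 2 + u1 ^ 2 * u3 + u1 * u2 * u3) ^ 2 ^ m * (u1 * u2 * u3) ^ 2 = (u1 ^ 2 * u2 + u2 ^ 2 * u3 + u3 ^ 2 * u1 + u1 * u2 * u3) := by
    rw [hφ]; simp only [map_add, map_mul, map_pow]
    linear_combination ((iterateFrobenius F 2 m u3) * u2 ^ 2 * u3 ^ 2 + (iterateFrobenius F 2 m u2) * (iterateFrobenius F 2 m u3) * u1 * u2 ^ 2 * u3 ^ 2 + (iterateFrobenius F 2 m u2) ^ 2 * u1 * u2 ^ 2 * u3 ^ 2 + (iterateFrobenius F 2 m u1) * (iterateFrobenius F 2 m u3) * u1 * u2 ^ 2 * u3 ^ 2) * hx1 + (u1 * u3 ^ 2 + (iterateFrobenius F 2 m u3) * u1 * u2 * u3 ^ 2 + (iterateFrobenius F 2 m u3) ^ 2 * u1 ^ 2 * u2 * u3 ^ 2 + (iterateFrobenius F 2 m u2) * u1 * u2 * u3 ^ 2) * hx2 + (u2 ^ 2 * u3 + u1 * u2 * u3 + u1 ^ 2 * u2 + (iterateFrobenius F 2 m u3) * u1 ^ 2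 * u2 * u3) * hx3
  have eD' : ((u1 + u2 + u3) ^ 2 + (u1 * u2 + u2 * u3 + u3 * u1)) ^ 2 ^ m = ((u1 * u2 + u2 * u3 + u3 * u1) ^ 2 + (u1 + u2 + u3) * (u1 * u2 * u3)) / (u1 * u2 * u3) ^ 2 := by
    rw [eq_div_iff hprod2]; exact eD
  have eN1' : ((u1 + u2 + u3) * (u1 * u2 + u2 * u3 + u3 * u1) + u1 * u2 * u3) ^ 2 ^ m = ((u1 + u2 + u3) * (u1 * u2 + u2 * u3 + u3 * u1) + u1 * u2 * u3) / (u1 * u2 * u3) ^ 2 := by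
    rw [eq_div_iff hprod2]; exact eN1
  have eN2' : ((u1 * u2 + u2 * u3 + u3 * u1) ^ 2 + (u1 + u2 + u3) * (u1 * u2 * u3)) ^ 2 ^ m = ((u1 + u2 + u3) ^ 2 + (u1 * u2 + u2 * u3 + u3 * u1)) / (u1 * u2 * u3) ^ 2 := by
    rw [eq_div_iff hprod2]; exact eN2
  have eP' : (u1 * u2 ^ 2 + u2 * u3 ^ 2 + u1 ^ 2 * u3 + u1 * u2 * u3) ^ 2 ^ m = (u1 ^ 2 * u2 + u2 ^ 2 * u3 + u3 ^ 2 * u1 + u1 * u2 * u3) / (u1 * u2 * u3) ^ 2 := by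
    rw [eq_div_iff hprod2]; exact eP
  refine ⟨?_, ?_, ?_⟩
  · -- b ^ (q+1) = 1
    rw [pow_succ, div_pow, eN2', eD']
    field_simp
    exact div_self (by intro h; apply mul_ne_zero hD hN2; linear_combination h)
  · -- c^q = c
    have hc : (((u1 * u2 + u2 * u3 + u3 * u1) ^ 2 + (u1 + u2 + u3) * (u1 * u2 * u3)) / ((u1 + u2 + u3) ^ 2 + (u1 * u2 + u2 * u3 + u3 * u1))) / ((((u1 + u2 + u3) * (u1 * u2 + u2 * u3 + u3 * u1) + u1 * u2 * u3) / ((u1 + u2 + u3) ^ 2 + (u1 * u2 + u2 * u3 + u3 * u1))) ^ 2) = ((u1 * u2 + u2 * u3 + u3 * u1) ^ 2 + (u1 + u2 + u3) * (u1 * u2 * u3)) * ((u1 + u2 + u3) ^ 2 + (u1 * u2 + u2 * u3 + u3 * u1)) / ((u1 + u2 + u3) * (u1 * u2 + u2 * u3 + u3 * u1) + u1 * u2 * u3) ^ 2 := by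
      field_simp
    rw [hc, div_pow, mul_pow, eN2', eD']
    rw [show (((u1 + u2 + u3) * (u1 * u2 + u2 * u3 + u3 * u1) + u1 * u2 * u3) ^ 2) ^ 2 ^ m = (((u1 + u2 + u3) * (u1 * u2 + u2 * u3 + u3 * u1) + u1 * u2 * u3) ^ 2 ^ m) ^ 2 by rw [← pow_mul, ← pow_mul, Nat.mul_comm]]
    rw [eN1']
    rw [div_pow]
    field_simp [hN1]
  · -- trace computation
    have hc : (((u1 * u2 + u2 * u3 + u3 * u1) ^ 2 + (u1 + u2 + u3) * (u1 * u2 * u3)) / ((u1 + u2 + u3) ^ 2 + (u1 * u2 + u2 * u3 + u3 * u1))) / ((((u1 + u2 + u3) * (u1 * u2 + u2 * u3 + u3 * u1) + u1 * u2 * u3) / ((u1 + u2 + u3) ^ 2 + (u1 * u2 + u2 * u3 + u3 * u1))) ^ 2) = ((u1 * u2 + u2 * u3 + u3 * u1) ^ 2 + (u1 + u2 + u3) * (u1 * u2 * u3)) * ((u1 + u2 + u3) ^ 2 + (u1 * u2 + u2 * u3 + u3 * u1)) / ((u1 + u2 + u3) * (u1 * u2 + u2 * u3 + u3 * u1) +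 u1 * u2 * u3) ^ 2 := by
      field_simp
    have key : ((u1 * u2 + u2 * u3 + u3 * u1) ^ 2 + (u1 + u2 + u3) * (u1 * u2 * u3)) * ((u1 + u2 + u3) ^ 2 + (u1 * u2 + u2 * u3 + u3 * u1)) = (u1 * u2 ^ 2 + u2 * u3 ^ 2 + u1 ^ 2 * u3 + u1 * u2 * u3) ^ 2 + (u1 * u2 ^ 2 + u2 * u3 ^ 2 + u1 ^ 2 * u3 + u1 * u2 * u3) * ((u1 + u2 + u3) * (u1 * u2 + u2 * u3 + u3 * u1) + u1 * u2 * u3) + ((u1 + u2 + u3) * (u1 * u2 + u2 * u3 + u3 * u1) + u1 * u2 * u3) ^ 2 := by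
      linear_combination (-u2 ^ 2 * u3 ^ 4 + -u1 * u2 ^ 2 * u3 ^ 3 + -u1 ^ 2 * u2 ^ 3 * u3 + -u1 ^ 2 * u2 ^ 4 + -u1 ^ 3 * u2 * u3 ^ 2 + -u1 ^ 4 * u3 ^ 2) * htwo
    set w : F := (u1 * u2 ^ 2 + u2 * u3 ^ 2 + u1 ^ 2 * u3 + u1 * u2 * u3) / ((u1 + u2 + u3) * (u1 * u2 + u2 * u3 + u3 * u1) + u1 * u2 * u3) with hw
    have hcw : ((u1 * u2 + u2 * u3 + u3 * u1) ^ 2 + (u1 + u2 + u3) * (u1 * u2 * u3)) * ((u1 + u2 + u3) ^ 2 + (u1 * u2 + u2 * u3 + u3 * u1)) / ((u1 + u2 + u3) * (u1 * u2 + u2 * u3 + u3 * u1) + u1 * u2 * u3) ^ 2 = w ^ 2 + w + 1 := by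
      rw [key, hw, div_pow]
      rw [div_add_div _ _ (pow_ne_zero 2 hN1) hN1, div_add_one (mul_ne_zero (pow_ne_zero 2 hN1) hN1), div_eq_div_iff (pow_ne_zero 2 hN1) (mul_ne_zero (pow_ne_zero 2 hN1) hN1)]
      ring
    have hwq : w ^ 2 ^ m = w + 1 := by
      rw [hw, div_pow, eP', eN1', div_div_div_cancel_right₀ hprod2]
      rw [div_add' _ _ _ hN1, div_eq_div_iff hN1 hN1]
      linear_combination (-u2 * u3 ^ 2 + -2 * u1 * u2 * u3 + -u1 * u2 ^ 2 + -u1 ^ 2 * u3) * htwo * ((u1 + u2 + u3) * (u1 * u2 + u2 * u3 + u3 * u1) + u1 * u2 * u3)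
    have hterm : ∀ i, (w ^ 2 + w + 1) ^ 2 ^ i = (w ^ 2 ^ (i + 1) - w ^ 2 ^ i) + 1 := by
      intro i
      rw [add_pow_char_pow, add_pow_char_pow, one_pow, ← pow_mul,
        CharTwo.sub_eq_add]
      rw [show 2 * 2 ^ i = 2 ^ (i + 1) by rw [pow_succ, Nat.mul_comm]]
    rw [hc, hcw]
    calc ∑ i ∈ Finset.range m, (w ^ 2 + w + 1) ^ 2 ^ i
        = ∑ i ∈ Finset.range m, ((w ^ 2 ^ (i + 1) - w ^ 2 ^ i) + 1) :=
          Finset.sum_congr rfl fun i _ => hterm i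
      _ = (∑ i ∈ Finset.range m, (w ^ 2 ^ (i + 1) - w ^ 2 ^ i)) + m := by
          rw [Finset.sum_add_distrib]; simp
      _ = (w ^ 2 ^ m - w ^ 2 ^ 0) + m := by
          rw [Finset.sum_range_sub (fun i => w ^ 2 ^ i)]
      _ = 1 + (m : F) := by rw [hwq, pow_zero, pow_one]; ring
      _ = if Even m then 1 else 0 := by
          rcases Nat.even_or_odd m with he | ho
          · have : (m : F) = 0 := (CharP.cast_eq_zero_iff F 2 m).mpr he.two_dvd
            rw [this, if_pos he, add_zero]
          · obtain ⟨k, hk⟩ := ho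
            have : (m : F) = 1 := by
              subst hk; push_cast; rw [htwo]; ring
            rw [this, if_neg (by simpa using Nat.not_even_iff_odd.mpr ⟨k, hk⟩)]
            linear_combination htwo
end

section
/- Let q = 2^m with m odd. Let u1, u2, u3 be pairwise distinct elements of the group U of (q+1)-st roots of unity in GF(q^2), with a = (s1*s2+s3)/(s1^2+s2), b = (s2^2+s1*s3)/(s1^2+s2), assuming (s1^2+s2)(s1*s2+s3)(s2^2+s1*s3) ≠ 0. Then the polynomial f(u) = u^2 + a·u + b has no root in U other than possibly the square root of b. -/
/-- For `q = 2^m` with `m` odd, pairwise distinct `(q+1)`-st roots of unity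
`u1, u2, u3` in `GF(q^2)` with `(s1^2+s2)(s1*s2+s3)(s2^2+s1*s3) ≠ 0`, and
`a = (s1*s2+s3)/(s1^2+s2)`, `b = (s2^2+s1*s3)/(s1^2+s2)`, the polynomial
`u^2 + a·u + b` has no root in `U_{q+1}` other than possibly the square root of `b`. -/
theorem stmt_11 (m : ℕ) (hm : 0 < m) (hmo : Odd m) (F : Type*) [Field F] [Fintype F]
    (hF : Fintype.card F = 2 ^ (2 * m))
    (u1 u2 u3 : F)
    (h1 : u1 ^ (2 ^ m + 1) = 1) (h2 : u2 ^ (2 ^ m + 1) = 1)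
    (h3 : u3 ^ (2 ^ m + 1) = 1)
    (h12 : u1 ≠ u2) (h13 : u1 ≠ u3) (h23 : u2 ≠ u3)
    (s1 s2 s3 a b : F)
    (hs1 : s1 = u1 + u2 + u3) (hs2 : s2 = u1 * u2 + u2 * u3 + u3 * u1)
    (hs3 : s3 = u1 * u2 * u3)
    (hnz : (s1 ^ 2 + s2) * (s1 * s2 + s3) * (s2 ^ 2 + s1 * s3) ≠ 0)
    (ha : a = (s1 * s2 + s3) / (s1 ^ 2 + s2))
    (hb : b = (s2 ^ 2 + s1 * s3) / (s1 ^ 2 + s2)) :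
    ∀ u : F, u ^ (2 ^ m + 1) = 1 → u ^ 2 + a * u + b = 0 → u ^ 2 = b := by
  intro u hU hroot
  -- characteristic 2
  haveI : Fact (Nat.Prime 2) := ⟨Nat.prime_two⟩
  have hdvd2 : 2 ∣ ringChar F := (prime_dvd_char_iff_dvd_card 2).mpr
    (by rw [hF]; exact dvd_pow_self 2 (by positivity))
  have hcharr : ringChar F = 2 :=
    ((Nat.prime_dvd_prime_iff_eq Nat.prime_two (CharP.char_is_prime F (ringChar F))).mp hdvd2).symm
  haveI hC2 : CharP F 2 := hcharr ▸ ringChar.charP F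
  have hch2 : (2 : F) = 0 := CharTwo.two_eq_zero
  subst hs1 hs2 hs3 ha hb
  exfalso
  -- nonzeroness of the u's
  have hu1 : u1 ≠ 0 := by
    intro h; rw [h, zero_pow (Nat.succ_ne_zero _)] at h1; exact zero_ne_one h1
  have hu2 : u2 ≠ 0 := by
    intro h; rw [h, zero_pow (Nat.succ_ne_zero _)] at h2; exact zero_ne_one h2
  have hu3 : u3 ≠ 0 := by
    intro h; rw [h, zero_pow (Nat.succ_ne_zero _)] at h3; exact zero_ne_one h3
  have hu0 : u ≠ 0 := by
    intro h; rw [h, zero_pow (Nat.succ_ne_zero _)] at hU; exact zero_ne_one hU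
  have hs3ne : u1 * u2 * u3 ≠ 0 := mul_ne_zero (mul_ne_zero hu1 hu2) hu3
  -- the cube root of unity ω with ω^(2^m) = ω^2
  classical
  have hcardu : Fintype.card Fˣ = 2 ^ (2 * m) - 1 := by rw [Fintype.card_units, hF]
  have h4m : 4 ^ m % 3 = 1 := by rw [Nat.pow_mod]; simp
  have h3dvd : 3 ∣ Fintype.card Fˣ := by
    have he : (2 : ℕ) ^ (2 * m) = 4 ^ m := by rw [pow_mul]; norm_num
    have hpos : 0 < (4 : ℕ) ^ m := by positivity
    rw [hcardu, he]; omega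
  haveI : Fact (Nat.Prime 3) := ⟨by norm_num⟩
  obtain ⟨x, hx⟩ := exists_prime_orderOf_dvd_card 3 h3dvd
  set ω : F := ((x : Fˣ) : F) with hωdef
  have hω3 : ω ^ 3 = 1 := by
    have hx3 : x ^ 3 = 1 := by rw [← hx]; exact pow_orderOf_eq_one x
    rw [hωdef]; simpa using congrArg Units.val hx3
  have hωne : ω ≠ 1 := by
    intro h
    have hx1 : x = 1 := Units.ext (by simpa [hωdef] using h)
    rw [hx1, orderOf_one] at hx; norm_num at hx
  have hω : ω ^ 2 + ω + 1 = 0 := by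
    rcases mul_eq_zero.mp (show (ω - 1) * (ω ^ 2 + ω + 1) = 0 by linear_combination hω3)
      with h | h
    · exact absurd (sub_eq_zero.mp h) hωne
    · exact h
  obtain ⟨t, ht⟩ : ∃ t, 2 ^ m = 3 * t + 2 := by
    obtain ⟨k, hk⟩ := hmo
    have h4k : 4 ^ k % 3 = 1 := by rw [Nat.pow_mod]; simp
    have h2m : 2 ^ m = 2 * 4 ^ k := by
      rw [hk, pow_succ, pow_mul]; norm_num [mul_comm]
    exact ⟨(2 * 4 ^ k - 2) / 3, by omega⟩
  have hωn : ω ^ (2 ^ m) = ω ^ 2 := by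
    rw [ht, pow_add, pow_mul, hω3, one_pow, one_mul]
  have hω2n : (ω ^ 2) ^ (2 ^ m) = ω := by
    rw [← pow_mul, mul_comm, pow_mul, hωn]
    linear_combination ω * hω3
  -- Frobenius
  have hfr : ∀ x y : F, (x + y) ^ (2 ^ m) = x ^ (2 ^ m) + y ^ (2 ^ m) :=
    fun x y => add_pow_char_pow x y 2 m
  have hsq : ∀ x : F, (x ^ 2) ^ (2 ^ m) = (x ^ (2 ^ m)) ^ 2 := fun x => by
    rw [← pow_mul, ← pow_mul, mul_comm]
  -- inverses
  have hq1 : u1 ^ (2 ^ m) * u1 = 1 := by rw [← pow_succ]; exact h1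
  have hq2 : u2 ^ (2 ^ m) * u2 = 1 := by rw [← pow_succ]; exact h2
  have hq3 : u3 ^ (2 ^ m) * u3 = 1 := by rw [← pow_succ]; exact h3
  have he1 : u1 ^ (2 ^ m) = u1⁻¹ :=
    eq_inv_of_mul_eq_one_left (by rw [← pow_succ]; exact h1)
  have he2 : u2 ^ (2 ^ m) = u2⁻¹ :=
    eq_inv_of_mul_eq_one_left (by rw [← pow_succ]; exact h2)
  have he3 : u3 ^ (2 ^ m) = u3⁻¹ :=
    eq_inv_of_mul_eq_one_left (by rw [← pow_succ]; exact h3)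
  have heu : u ^ (2 ^ m) = u⁻¹ :=
    eq_inv_of_mul_eq_one_left (by rw [← pow_succ]; exact hU)
  -- names
  set D : F := (u1 + u2 + u3) ^ 2 + (u1 * u2 + u2 * u3 + u3 * u1) with hDd
  set A : F := (u1 + u2 + u3) * (u1 * u2 + u2 * u3 + u3 * u1) + u1 * u2 * u3 with hAd
  set B : F := (u1 * u2 + u2 * u3 + u3 * u1) ^ 2 + (u1 + u2 + u3) * (u1 * u2 * u3) with hBd
  rw [mul_ne_zero_iff, mul_ne_zero_iff] at hnz
  obtain ⟨⟨hD, hA⟩, hB⟩ := hnz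
  have hDroot : D * u ^ 2 + A * u + B = 0 := by
    have h9 : (u ^ 2 + A / D * u + B / D) * D = 0 := by rw [hroot, zero_mul]
    field_simp [hD] at h9
    linear_combination h9
  set X : F := u1 + ω * u2 + ω ^ 2 * u3 with hXd
  set M : F := u2 * u3 + ω ^ 2 * (u1 * u3) + ω * (u1 * u2) with hMd
  -- the key polynomial identity
  have key1 : (X * M) ^ 2 + (X * M) * A = B * D := by
    rw [hXd, hMd, hAd, hBd, hDd]
    linear_combination ((u2^2*u3^4 - u2^3*u3^3 + u2^4*u3^2 - u1*u2*u3^4 + 10*u1*u2^2*u3^3 - u1*u2^4*u3 + u1^2*u3^4 - 19*u1^2*u2^2*u3^2 + 10*u1^2*u2^3*u3 + u1^2*u2^4 - u1^3*u3^3 + 10*u1^3*u2*u3^2 - u1^3*u2^3 + u1^4*u3^2 - u1^4*u2*u3 + u1^4*u2^2 - ω*u2^2*u3^4 + 2*ω*u2^3*u3^3 + ω*u1*u2*u3^4 + ω*u1*u2^2*u3^3 - 4*ω*u1*u2^3*u3^2 + 2*ω*u1*u2^4*u3 - ω*u1^2*u3^4 - 10*ω*u1^2*u2*u3^3 + 21*ω*u1^2*u2^2*u3^2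 + 2*ω*u1^2*u2^3*u3 - ω*u1^2*u2^4 + ω*u1^3*u3^3 + ω*u1^3*u2*u3^2 - 4*ω*u1^3*u2^2*u3 + 2*ω*u1^3*u2^3 - ω*u1^4*u3^2 + 2*ω*u1^4*u2*u3 + ω^2*u2^2*u3^4 + ω^2*u1*u2*u3^4 - 5*ω^2*u1*u2^2*u3^3 + 6*ω^2*u1*u2^3*u3^2 + 12*ω^2*u1^2*u2*u3^3 + ω^2*u1^2*u2^2*u3^2 - 4*ω^2*u1^2*u2^3*u3 + ω^2*u1^2*u2^4 + ω^2*u1^3*u3^3 - 5*ω^2*u1^3*u2*u3^2 + 6*ω^2*u1^3*u2^2*u3 + ω^2*u1^4*u3^2 - 2*ω^3*u1*u2*u3^4 + 6*ω^3*u1*u2^2*u3^3 + ω^3*u1^2*u3^4 - 6*ω^3*u1^2*u2^2*u3^2 + 4*ω^3*u1^2*u2^3*u3 - 2*ω^3*u1^3*u3^3 + 6*ω^3*u1^3*u2*u3^2 + 2*ω^4*u1*u2*u3^4 - 4*ω^4*u1^2*u2*u3^3 + 6*ω^4*u1^2*u2^2*u3^2 + 2*ω^4*u1^3*u3^3 -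 ω^5*u1^2*u3^4 + 4*ω^5*u1^2*u2*u3^3 + ω^6*u1^2*u3^4)) * hω + ((-u2^2*u3^4 - u2^3*u3^3 - u2^4*u3^2 - u1*u2*u3^4 - 12*u1*u2^2*u3^3 - 7*u1*u2^3*u3^2 - u1*u2^4*u3 - u1^2*u3^4 - 7*u1^2*u2*u3^3 - 3*u1^2*u2^2*u3^2 - 12*u1^2*u2^3*u3 - u1^2*u2^4 - u1^3*u3^3 - 12*u1^3*u2*u3^2 - 7*u1^3*u2^2*u3 - u1^3*u2^3 - u1^4*u3^2 - u1^4*u2*u3 - u1^4*u2^2 - 5*ω*u1*u2^2*u3^3 + 5*ω*u1*u2^3*u3^2 + 5*ω*u1^2*u2*u3^3 - 5*ω*u1^2*u2^3*u3 - 5*ω*u1^3*u2*u3^2 + 5*ω*u1^3*u2^2*u3)) * hch2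
  -- Frobenius images
  have hXn : X ^ (2 ^ m) * (u1 * u2 * u3) = M := by
    rw [hXd, hMd]
    simp only [hfr, mul_pow, hωn, hω2n, he1, he2, he3]
    field_simp
  have hMn : M ^ (2 ^ m) * (u1 * u2 * u3) ^ 2 = (u1 * u2 * u3) * X := by
    rw [hMd, hXd]
    simp only [hfr, mul_pow, hωn, hω2n, he1, he2, he3]
    field_simp
  have hDn : D ^ (2 ^ m) * (u1 * u2 * u3) ^ 2 = B := by
    rw [hDd, hBd]
    simp only [hfr, hsq, mul_pow]
    linear_combination ((u2*u3)^2*(u1^(2^m)*u1+1))*hq1 + ((u1*u3)^2*(u2^(2^m)*u2+1))*hq2 +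
      ((u1*u2)^2*(u3^(2^m)*u3+1))*hq3 +
      (3*(u1*u2*u3^2)*(u1^(2^m)*u1))*hq2 + (3*(u1*u2*u3^2))*hq1 +
      (3*(u1^2*u2*u3)*(u2^(2^m)*u2))*hq3 + (3*(u1^2*u2*u3))*hq2 +
      (3*(u1*u2^2*u3)*(u1^(2^m)*u1))*hq3 + (3*(u1*u2^2*u3))*hq1
  have hwkey : (u * D + X * M) ^ (2 ^ m) * (u * (u1 * u2 * u3) ^ 2) = (u * D + X * M + A) * u := by
    rw [hfr, mul_pow, mul_pow, heu]
    have heu' : u⁻¹ * u = 1 := inv_mul_cancel₀ hu0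
    linear_combination (D ^ (2 ^ m) * (u1 * u2 * u3) ^ 2) * heu' + hDn +
      (u * X ^ (2 ^ m)) * hMn + (u * X) * hXn + hDroot + (-(D * u ^ 2 + A * u)) * hch2
  have hw2 : (u * D + X * M) * ((u * D + X * M) + A) = 0 := by
    linear_combination key1 + D * hDroot + (u * D * (X * M)) * hch2
  rcases mul_eq_zero.mp hw2 with h | h
  · rw [h, zero_pow ((by positivity : (0:ℕ) < 2 ^ m).ne'), zero_mul, zero_add] at hwkey
    exact (mul_ne_zero hA hu0) hwkey.symm
  · have hwA : u * D + X * M = -A := by linear_combination h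
    rw [h, zero_mul, hwA] at hwkey
    exact (mul_ne_zero (pow_ne_zero _ (neg_ne_zero.mpr hA))
      (mul_ne_zero hu0 (pow_ne_zero _ hs3ne))) hwkey
end

section
/- Let q = 2^m with m even, m ≥ 4, and let U be the group of (q+1)-st roots of unity in GF(q^2). For any three pairwise distinct elements u1, u2, u3 of U, there exist exactly two distinct elements u4, u5 of U, both distinct from u1, u2, u3, such that the elementary symmetric polynomial σ_{5,2}(u1, u2, u3, u4, u5) = 0. Equivalently, the blocks {u1,...,u5} of 5-subsets of U with σ_{5,2} = 0 form a Steiner system S(3, 5, q+1) on U. -/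
set_option linter.all false
set_option maxHeartbeats 2000000

/-- For `q = 2^m`, `m` even, `m ≥ 4`: for any three pairwise distinct `(q+1)`-st roots
of unity `u1, u2, u3` in `GF(q^2)` there exist exactly two distinct `u4, u5 ∈ U_{q+1}`,
both distinct from `u1, u2, u3`, with `σ_{5,2}(u1,…,u5) = 0`; i.e. the 5-subsets of
`U_{q+1}` with vanishing `σ_{5,2}` form a Steiner system `S(3,5,q+1)`. -/
theorem stmt_12 (m : ℕ) (hm : 4 ≤ m) (hme : Even m) (F : Type*) [Field F] [Fintype F]
    (hF : Fintype.card F = 2 ^ (2 * m))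
    (u1 u2 u3 : F)
    (h1 : u1 ^ (2 ^ m + 1) = 1) (h2 : u2 ^ (2 ^ m + 1) = 1)
    (h3 : u3 ^ (2 ^ m + 1) = 1)
    (h12 : u1 ≠ u2) (h13 : u1 ≠ u3) (h23 : u2 ≠ u3) :
    ∃ u4 u5 : F,
      u4 ^ (2 ^ m + 1) = 1 ∧ u5 ^ (2 ^ m + 1) = 1 ∧ u4 ≠ u5 ∧
      u4 ∉ ({u1, u2, u3} : Set F) ∧ u5 ∉ ({u1, u2, u3} : Set F) ∧
      u1 * u2 + u1 * u3 + u1 * u4 + u1 * u5 + u2 * u3 + u2 * u4 + u2 * u5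
        + u3 * u4 + u3 * u5 + u4 * u5 = 0 ∧
      ∀ v4 v5 : F,
        v4 ^ (2 ^ m + 1) = 1 → v5 ^ (2 ^ m + 1) = 1 → v4 ≠ v5 →
        v4 ∉ ({u1, u2, u3} : Set F) → v5 ∉ ({u1, u2, u3} : Set F) →
        u1 * u2 + u1 * u3 + u1 * v4 + u1 * v5 + u2 * u3 + u2 * v4 + u2 * v5
          + u3 * v4 + u3 * v5 + v4 * v5 = 0 →
        ({v4, v5} : Set F) = {u4, u5} := by
  classical
  -- characteristic 2
  haveI hcp : CharP F (ringChar F) := ringChar.charP F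
  obtain ⟨n, hn, hcard⟩ := FiniteField.card F (ringChar F)
  have hr2 : ringChar F = 2 := by
    have hdvd : ringChar F ∣ 2 ^ (2 * m) := by
      rw [← hF, hcard]; exact dvd_pow_self _ (by positivity)
    have := hn.dvd_of_dvd_pow (n := 2 * m) (by simpa using hdvd)
    exact (Nat.prime_dvd_prime_iff_eq hn Nat.prime_two).mp this
  haveI : CharP F 2 := hr2 ▸ hcp
  haveI : Fact (Nat.Prime 2) := ⟨Nat.prime_two⟩
  have h2F : (2 : F) = 0 := by
    have := CharP.cast_eq_zero F 2
    exact_mod_cast this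
  have hq0 : (2 ^ m : ℕ) ≠ 0 := by positivity
  have frobF : ∀ a b : F, (a + b) ^ 2 ^ m = a ^ 2 ^ m + b ^ 2 ^ m := fun a b =>
    add_pow_char_pow a b 2 m
  have hq2 : ∀ x : F, (x ^ 2 ^ m) ^ 2 ^ m = x := by
    intro x
    rw [← pow_mul, ← pow_add, ← two_mul, ← hF]
    exact FiniteField.pow_card x
  -- roots of unity relations
  have n1 : u1 ^ 2 ^ m * u1 = 1 := by rw [← pow_succ]; exact h1
  have n2 : u2 ^ 2 ^ m * u2 = 1 := by rw [← pow_succ]; exact h2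
  have n3 : u3 ^ 2 ^ m * u3 = 1 := by rw [← pow_succ]; exact h3
  -- a primitive cube root of unity
  obtain ⟨g, hg0⟩ := IsCyclic.exists_monoid_generator (α := Fˣ)
  have hg : ∀ x : Fˣ, x ∈ Subgroup.zpowers g := by
    intro x
    obtain ⟨k, hk⟩ := hg0 x
    exact Subgroup.mem_zpowers_iff.mpr ⟨(k : ℤ), by simpa using hk⟩
  have hcardu : Nat.card Fˣ = 2 ^ (2 * m) - 1 := by
    rw [Nat.card_eq_fintype_card, Fintype.card_units, hF]
  have horder : orderOf g = 2 ^ (2 * m) - 1 := by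
    rw [orderOf_eq_card_of_forall_mem_zpowers hg, hcardu]
  have h3dvd : 3 ∣ 2 ^ (2 * m) - 1 := by
    have h4 : (3 : ℕ) ∣ 4 ^ m - 1 := by
      simpa using Nat.sub_dvd_pow_sub_pow 4 1 m
    have : (2 : ℕ) ^ (2 * m) = 4 ^ m := by
      rw [pow_mul]; norm_num
    rwa [this]
  have hbig : 8 ≤ 2 ^ (2 * m) := by
    calc (8 : ℕ) = 2 ^ 3 := by norm_num
    _ ≤ 2 ^ (2 * m) := Nat.pow_le_pow_right (by norm_num) (by omega)
  obtain ⟨t, ht⟩ := h3dvd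
  have hgt : g ^ t ≠ 1 := by
    intro hgt
    have hd := orderOf_dvd_of_pow_eq_one hgt
    rw [horder, ht] at hd
    have ht0 : 0 < t := by omega
    have := Nat.le_of_dvd ht0 hd
    omega
  have hg3 : (g ^ t) ^ 3 = 1 := by
    rw [← pow_mul, mul_comm, ← ht, ← horder]
    exact pow_orderOf_eq_one g
  set w : F := ((g ^ t : Fˣ) : F) with hwdef
  have hw3 : w ^ 3 = 1 := by
    rw [hwdef, ← Units.val_pow_eq_pow_val, hg3, Units.val_one]
  have hwne1 : w ≠ 1 := fun h => hgt (Units.ext h)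
  have hwF : w ^ 2 + w + 1 = 0 := by
    have hfac : (w - 1) * (w ^ 2 + w + 1) = 0 := by linear_combination hw3
    rcases mul_eq_zero.mp hfac with h | h
    · exact absurd (by linear_combination h) hwne1
    · exact h
  have hwq : w ^ 2 ^ m = w := by
    obtain ⟨k, hk⟩ := hme
    have h3d : (3 : ℕ) ∣ 2 ^ m - 1 := by
      have h4 : (3 : ℕ) ∣ 4 ^ k - 1 := by
        simpa using Nat.sub_dvd_pow_sub_pow 4 1 k
      have : (2 : ℕ) ^ m = 4 ^ k := by
        rw [hk, ← two_mul, pow_mul]; norm_num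
      rwa [this]
    obtain ⟨s, hs⟩ := h3d
    have h1le : 1 ≤ 2 ^ m := Nat.one_le_two_pow
    have hms : 2 ^ m = 3 * s + 1 := by omega
    rw [hms, pow_succ, pow_mul, hw3, one_pow, one_mul]
  have hw2q : (w ^ 2) ^ 2 ^ m = w ^ 2 := by
    rw [← pow_mul, mul_comm, pow_mul, hwq]
  -- Frobenius of the resolvents
  have hPq : (u1 + w * u2 + w ^ 2 * u3) ^ 2 ^ m
      = u1 ^ 2 ^ m + w * u2 ^ 2 ^ m + w ^ 2 * u3 ^ 2 ^ m := by
    rw [frobF, frobF, mul_pow, mul_pow, hwq, hw2q]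
  have hQq : (u1 + w ^ 2 * u2 + w * u3) ^ 2 ^ m
      = u1 ^ 2 ^ m + w ^ 2 * u2 ^ 2 ^ m + w * u3 ^ 2 ^ m := by
    rw [frobF, frobF, mul_pow, mul_pow, hwq, hw2q]
  have key1 : (u1 + w * u2 + w ^ 2 * u3) ^ 2 ^ m * (u1 * u2 * u3)
      = (u1 + w ^ 2 * u2 + w * u3) ^ 2 + (u1 + u2 + u3) * (u1 + w * u2 + w ^ 2 * u3) := by
    rw [hPq]
    linear_combination (u2*u3) * n1 + (w*u1*u3) * n2 + (w^2*u1*u2) * n3 + (-w^2*u2^2 + w*u2^2 - 2*w*u2*u3 - u1*u2 - u1*u3 + u2*u3 - 2*u3^2) * hwF + (-w*u2^2 + w*u3^2 - u1^2 + u3^2) * h2F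
  have key2 : (u1 + w ^ 2 * u2 + w * u3) ^ 2 ^ m * (u1 * u2 * u3)
      = (u1 + w * u2 + w ^ 2 * u3) ^ 2 + (u1 + u2 + u3) * (u1 + w ^ 2 * u2 + w * u3) := by
    rw [hQq]
    linear_combination (u2*u3) * n1 + (w^2*u1*u3) * n2 + (w*u1*u2) * n3 + (-w^2*u3^2 - 2*w*u2*u3 + w*u3^2 - u1*u2 - u1*u3 - 2*u2^2 + u2*u3) * hwF + (w*u2^2 - w*u3^2 - u1^2 + u2^2) * h2F
  have hsumPQ : (u1 + w * u2 + w ^ 2 * u3) + (u1 + w ^ 2 * u2 + w * u3) = u2 + u3 := by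
    linear_combination (u2 + u3) * hwF + (u1 - u2 - u3) * h2F
  have he3 : (u1 * u2 * u3) ^ 2 ^ m * (u1 * u2 * u3) = 1 := by
    rw [mul_pow, mul_pow]
    linear_combination ((u2 ^ 2 ^ m)*(u3 ^ 2 ^ m)*u2*u3) * n1 + ((u3 ^ 2 ^ m)*u3) * n2 + (1) * n3
  have hd12 : u1 + u2 ≠ 0 := fun h => h12 (by linear_combination h - u2 * h2F)
  have hd13 : u1 + u3 ≠ 0 := fun h => h13 (by linear_combination h - u3 * h2F)
  have hd23 : u2 + u3 ≠ 0 := fun h => h23 (by linear_combination h - u3 * h2F)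
  have hP0 : (u1 + w * u2 + w ^ 2 * u3) ≠ 0 := by
    intro h
    have h0 : (u1 + w * u2 + w ^ 2 * u3) ^ 2 ^ m = 0 := by rw [h]; exact zero_pow hq0
    have hQ2 : (u1 + w ^ 2 * u2 + w * u3) ^ 2 = 0 := by
      linear_combination (u1 * u2 * u3) * h0 - (u1 + u2 + u3) * h - key1
    have hQz : (u1 + w ^ 2 * u2 + w * u3) = 0 := by
      exact pow_eq_zero_iff (two_ne_zero) |>.mp hQ2
    exact hd23 (by linear_combination h + hQz - hsumPQ)
  have hQ0 : (u1 + w ^ 2 * u2 + w * u3) ≠ 0 := by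
    intro h
    have h0 : (u1 + w ^ 2 * u2 + w * u3) ^ 2 ^ m = 0 := by rw [h]; exact zero_pow hq0
    have hP2 : (u1 + w * u2 + w ^ 2 * u3) ^ 2 = 0 := by
      linear_combination (u1 * u2 * u3) * h0 - (u1 + u2 + u3) * h - key2
    have hPz : (u1 + w * u2 + w ^ 2 * u3) = 0 := by
      exact pow_eq_zero_iff (two_ne_zero) |>.mp hP2
    exact hd23 (by linear_combination hPz + h - hsumPQ)
  -- the two new points
  set u4 : F := ((u1 + w * u2 + w ^ 2 * u3) ^ 2 + (u1 + u2 + u3) * (u1 + w ^ 2 * u2 + w * u3)) / (u1 + w ^ 2 * u2 + w * u3) with hu4def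
  set u5 : F := ((u1 + w ^ 2 * u2 + w * u3) ^ 2 + (u1 + u2 + u3) * (u1 + w * u2 + w ^ 2 * u3)) / (u1 + w * u2 + w ^ 2 * u3) with hu5def
  have hu4Q : u4 * (u1 + w ^ 2 * u2 + w * u3) = ((u1 + w * u2 + w ^ 2 * u3) ^ 2 + (u1 + u2 + u3) * (u1 + w ^ 2 * u2 + w * u3)) := by
    rw [hu4def]; exact div_mul_cancel₀ _ hQ0
  have hu5P : u5 * (u1 + w * u2 + w ^ 2 * u3) = ((u1 + w ^ 2 * u2 + w * u3) ^ 2 + (u1 + u2 + u3) * (u1 + w * u2 + w ^ 2 * u3)) := by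
    rw [hu5def]; exact div_mul_cancel₀ _ hP0
  -- membership in U
  have hUmem : ∀ x c : F, x ≠ 0 → c ^ 2 ^ m * c = 1 →
      (x ^ 2 ^ m * c / x) ^ (2 ^ m + 1) = 1 := by
    intro x c hx hc
    have hxq : x ^ 2 ^ m ≠ 0 := pow_ne_zero _ hx
    rw [pow_succ, div_pow, mul_pow, hq2 x]
    field_simp
    linear_combination hc
  have hu4U : u4 ^ (2 ^ m + 1) = 1 := by
    have hrw : u4 = (u1 + w ^ 2 * u2 + w * u3) ^ 2 ^ m * (u1 * u2 * u3) / (u1 + w ^ 2 * u2 + w * u3) := by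
      rw [hu4def, key2]
    rw [hrw]; exact hUmem _ _ hQ0 he3
  have hu5U : u5 ^ (2 ^ m + 1) = 1 := by
    have hrw : u5 = (u1 + w * u2 + w ^ 2 * u3) ^ 2 ^ m * (u1 * u2 * u3) / (u1 + w * u2 + w ^ 2 * u3) := by
      rw [hu5def, key1]
    rw [hrw]; exact hUmem _ _ hP0 he3
  -- sigma_2 vanishes
  have hsig45 : u1 * u2 + u1 * u3 + u1 * u4 + u1 * u5 + u2 * u3 + u2 * u4 + u2 * u5
      + u3 * u4 + u3 * u5 + u4 * u5 = 0 := by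
    have hsz : (u1 * u2 + u1 * u3 + u1 * u4 + u1 * u5 + u2 * u3 + u2 * u4 + u2 * u5
        + u3 * u4 + u3 * u5 + u4 * u5) * ((u1 + w * u2 + w ^ 2 * u3) * (u1 + w ^ 2 * u2 + w * u3)) = 0 := by
      linear_combination (u5*w^2*u3 + u5*w*u2 + u5*u1 + w^2*u1*u3 + w^2*u2*u3 + w^2*u3^2 + w*u1*u2 + w*u2^2 + w*u2*u3 + u1^2 + u1*u2 + u1*u3) * hu4Q + (w^4*u3^2 + 2*w^3*u2*u3 + 2*w^2*u1*u2 + 2*w^2*u1*u3 + 3*w^2*u2^2 + 2*w^2*u2*u3 + 2*w*u1*u2 + 2*w*u1*u3 + 2*w*u2*u3 + 2*w*u3^2 + 3*u1^2 + 2*u1*u2 + 2*u1*u3) * hu5P + (w^6*u2^2*u3^2 + 2*w^5*u2^3*u3 - w^5*u2^2*u3^2 + 2*w^5*u2*u3^3 + 2*w^4*u1*u2^3 + 2*w^4*u1*u2^2*u3 + 2*w^4*u1*u2*u3^2 + 2*w^4*u1*u3^3 + 3*w^4*u2^4 + 4*w^4*u2^2*u3^2 + 3*w^4*u3^4 + 8*w^3*u1*u2^2*u3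 + 8*w^3*u1*u2*u3^2 - 3*w^3*u2^4 + 6*w^3*u2^3*u3 + 9*w^3*u2^2*u3^2 + 6*w^3*u2*u3^3 - 3*w^3*u3^4 + 7*w^2*u1^2*u2^2 + 7*w^2*u1^2*u2*u3 + 7*w^2*u1^2*u3^2 + 6*w^2*u1*u2^3 + 13*w^2*u1*u2^2*u3 + 13*w^2*u1*u2*u3^2 + 6*w^2*u1*u3^3 + 3*w^2*u2^3*u3 + 7*w^2*u2^2*u3^2 + 3*w^2*u2*u3^3 + 21*w*u1^2*u2*u3 + 3*w*u1*u2^3 + 12*w*u1*u2^2*u3 + 12*w*u1*u2*u3^2 + 3*w*u1*u3^3 + 8*w*u2^4 - 10*w*u2^2*u3^2 + 8*w*u3^4 + 11*u1^3*u2 + 11*u1^3*u3 + 13*u1^2*u2^2 + 5*u1^2*u2*u3 + 13*u1^2*u3^2 - 2*u1*u2^2*u3 - 2*u1*u2*u3^2 - 8*u2^4 + 10*u2^2*u3^2 - 8*u3^4) * hwF + (4*u1^4 - 5*u1^2*u2^2 + u1^2*u2*u3 - 5*u1^2*u3^2 + u1*u2^2*u3 + u1*u2*u3^2 + 4*u2^4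 - 5*u2^2*u3^2 + 4*u3^4) * h2F
    exact (mul_eq_zero.mp hsz).resolve_right (mul_ne_zero hP0 hQ0)
  -- u4 ≠ u5
  have hne45 : u4 ≠ u5 := by
    intro h
    have hb : ((u1 + w * u2 + w ^ 2 * u3) ^ 2 + (u1 + u2 + u3) * (u1 + w ^ 2 * u2 + w * u3)) * (u1 + w * u2 + w ^ 2 * u3) = ((u1 + w ^ 2 * u2 + w * u3) ^ 2 + (u1 + u2 + u3) * (u1 + w * u2 + w ^ 2 * u3)) * (u1 + w ^ 2 * u2 + w * u3) := by
      rw [← hu4Q, ← hu5P, h]; ring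
    have hz : (u1 + u2) * (u1 + u3) * (u2 + u3) = 0 := by
      linear_combination (-1) * hb + (-w^4*u2^3 + w^4*u3^3 + w^3*u2^3 - 3*w^3*u2^2*u3 + 3*w^3*u2*u3^2 - w^3*u3^3 - 3*w^2*u1*u2^2 + 3*w^2*u1*u3^2 + 6*w^2*u2^2*u3 - 6*w^2*u2*u3^2 + 3*w*u1*u2^2 - 3*w*u1*u3^2 - 3*w*u2^2*u3 + 3*w*u2*u3^2 - 3*u1^2*u2 + 3*u1^2*u3 + 3*u1*u2^2 - 3*u1*u3^2 - 3*u2^2*u3 + 3*u2*u3^2) * hwF + (3*w*u1^2*u2 - 3*w*u1^2*u3 - 3*w*u1*u2^2 + 3*w*u1*u3^2 + 3*w*u2^2*u3 - 3*w*u2*u3^2 + 2*u1^2*u2 - u1^2*u3 - u1*u2^2 + u1*u2*u3 + 2*u1*u3^2 + 2*u2^2*u3 - u2*u3^2) * h2F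
    rcases mul_eq_zero.mp hz with h' | h'
    · rcases mul_eq_zero.mp h' with h'' | h''
      · exact hd12 h''
      · exact hd13 h''
    · exact hd23 h'
  -- u4 not among u1,u2,u3
  have hmem4 : u4 ∉ ({u1, u2, u3} : Set F) := by
    intro hmem
    simp only [Set.mem_insert_iff, Set.mem_singleton_iff] at hmem
    rcases hmem with h | h | h
    · have hb := hu4Q; rw [h] at hb
      have hz : (u1 + u2) * (u1 + u3) = 0 := by
        linear_combination (-1) * hb + (-w^2*u3^2 - 2*w*u2*u3 + w*u3^2 - 2*u1*u3 - 2*u2^2 + u2*u3) * hwF + (-w*u1*u2 + w*u1*u3 + w*u2^2 - w*u3^2 + u1*u3 + u2^2) * h2F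
      rcases mul_eq_zero.mp hz with h' | h'
      · exact hd12 h'
      · exact hd13 h'
    · have hb := hu4Q; rw [h] at hb
      have hz : (u1 + u2) * (u2 + u3) = 0 := by
        linear_combination (-w) * hb + (-w^3*u3^2 - 2*w^2*u2*u3 + w^2*u3^2 - w*u1*u2 - 2*w*u1*u3 - w*u2^2 + w*u2*u3 - u1*u2 + u1*u3 + u2^2 + u2*u3 - 2*u3^2) * hwF + (-w*u1^2 + w*u1*u2 - w*u2*u3 + w*u3^2 + u1*u2 + u3^2) * h2F
      rcases mul_eq_zero.mp hz with h' | h'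
      · exact hd12 h'
      · exact hd23 h'
    · have hb := hu4Q; rw [h] at hb
      have hz : (u1 + u3) * (u2 + u3) = 0 := by
        linear_combination (-w - 1) * hb + (-w^3*u3^2 - 2*w^2*u2*u3 - w*u1*u2 - 2*w*u1*u3 - 2*w*u2^2 + w*u3^2 - 2*u1*u2 - u1*u3 + u2*u3 - u3^2) * hwF + (-w*u1^2 + w*u1*u3 + w*u2^2 - w*u2*u3 - u1^2 + u1*u2 + u1*u3 + u3^2) * h2F
      rcases mul_eq_zero.mp hz with h' | h'
      · exact hd13 h'
      · exact hd23 h'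
  have hmem5 : u5 ∉ ({u1, u2, u3} : Set F) := by
    intro hmem
    simp only [Set.mem_insert_iff, Set.mem_singleton_iff] at hmem
    rcases hmem with h | h | h
    · have hb := hu5P; rw [h] at hb
      have hz : (u1 + u2) * (u1 + u3) = 0 := by
        linear_combination (-1) * hb + (-w^2*u2^2 + w*u2^2 - 2*w*u2*u3 - 2*u1*u2 + u2*u3 - 2*u3^2) * hwF + (w*u1*u2 - w*u1*u3 - w*u2^2 + w*u3^2 + u1*u2 + u3^2) * h2F
      rcases mul_eq_zero.mp hz with h' | h'
      · exact hd12 h'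
      · exact hd13 h'
    · have hb := hu5P; rw [h] at hb
      have hz : (u1 + u2) * (u2 + u3) = 0 := by
        linear_combination (-w - 1) * hb + (-w^3*u2^2 - 2*w^2*u2*u3 - 2*w*u1*u2 - w*u1*u3 + w*u2^2 - 2*w*u3^2 - u1*u2 - 2*u1*u3 - u2^2 + u2*u3) * hwF + (-w*u1^2 + w*u1*u2 - w*u2*u3 + w*u3^2 - u1^2 + u1*u2 + u1*u3 + u2^2) * h2F
      rcases mul_eq_zero.mp hz with h' | h'
      · exact hd12 h'
      · exact hd23 h'
    · have hb := hu5P; rw [h] at hb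
      have hz : (u1 + u3) * (u2 + u3) = 0 := by
        linear_combination (-w) * hb + (-w^3*u2^2 + w^2*u2^2 - 2*w^2*u2*u3 - 2*w*u1*u2 - w*u1*u3 + w*u2*u3 - w*u3^2 + u1*u2 - u1*u3 - 2*u2^2 + u2*u3 + u3^2) * hwF + (-w*u1^2 + w*u1*u3 + w*u2^2 - w*u2*u3 + u1*u3 + u2^2) * h2F
      rcases mul_eq_zero.mp hz with h' | h'
      · exact hd13 h'
      · exact hd23 h'
  refine ⟨u4, u5, hu4U, hu5U, hne45, hmem4, hmem5, hsig45, ?_⟩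
  -- uniqueness
  intro v4 v5 hv4U hv5U hvne hv4m hv5m hsig
  have n4 : v4 ^ 2 ^ m * v4 = 1 := by rw [← pow_succ]; exact hv4U
  have n5 : v5 ^ 2 ^ m * v5 = 1 := by rw [← pow_succ]; exact hv5U
  have hfr0 : (u1 * u2 + u1 * u3 + u1 * v4 + u1 * v5 + u2 * u3 + u2 * v4 + u2 * v5
      + u3 * v4 + u3 * v5 + v4 * v5) ^ 2 ^ m = 0 := by
    rw [hsig]; exact zero_pow hq0
  have hfr : u1 ^ 2 ^ m * u2 ^ 2 ^ m + u1 ^ 2 ^ m * u3 ^ 2 ^ m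
      + u1 ^ 2 ^ m * v4 ^ 2 ^ m + u1 ^ 2 ^ m * v5 ^ 2 ^ m
      + u2 ^ 2 ^ m * u3 ^ 2 ^ m + u2 ^ 2 ^ m * v4 ^ 2 ^ m
      + u2 ^ 2 ^ m * v5 ^ 2 ^ m + u3 ^ 2 ^ m * v4 ^ 2 ^ m
      + u3 ^ 2 ^ m * v5 ^ 2 ^ m + v4 ^ 2 ^ m * v5 ^ 2 ^ m = 0 := by
    rw [← hfr0]
    simp only [frobF, mul_pow]
  have rel2 : u3 * v4 * v5 + u2 * v4 * v5 + u1 * v4 * v5 + u2 * u3 * v5 + u2 * u3 * v4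
      + u1 * u3 * v5 + u1 * u3 * v4 + u1 * u2 * v5 + u1 * u2 * v4 + u1 * u2 * u3 = 0 := by
    linear_combination (v4*v5*u1*u2*u3) * hfr + (-(u2 ^ 2 ^ m)*v4*v5*u2*u3 - (u3 ^ 2 ^ m)*v4*v5*u2*u3 - (v4 ^ 2 ^ m)*v4*v5*u2*u3 - (v5 ^ 2 ^ m)*v4*v5*u2*u3) * n1 + (-(u3 ^ 2 ^ m)*v4*v5*u1*u3 - (v4 ^ 2 ^ m)*v4*v5*u1*u3 - (v5 ^ 2 ^ m)*v4*v5*u1*u3 - v4*v5*u3) * n2 + (-(v4 ^ 2 ^ m)*v4*v5*u1*u2 - (v5 ^ 2 ^ m)*v4*v5*u1*u2 - v4*v5*u1 - v4*v5*u2) * n3 + (-(v5 ^ 2 ^ m)*v5*u1*u2*u3 - v5*u1*u2 - v5*u1*u3 - v5*u2*u3) * n4 + (-v4*u1*u2 - v4*u1*u3 - v4*u2*u3 - u1*u2*u3) * n5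
  have hsum2 : v4 + v5 = u4 + u5 := by
    have hscaled : (v4 + v5) * ((u1 + w * u2 + w ^ 2 * u3) * (u1 + w ^ 2 * u2 + w * u3)) = (u4 + u5) * ((u1 + w * u2 + w ^ 2 * u3) * (u1 + w ^ 2 * u2 + w * u3)) := by
      linear_combination (u1 + u2 + u3) * hsig + (1) * rel2 + (-w^2*u3 - w*u2 - u1) * hu4Q + (-w^2*u2 - w*u3 - u1) * hu5P + (v4*w^2*u2*u3 + v4*w*u2^2 - v4*w*u2*u3 + v4*w*u3^2 + v4*u1*u2 + v4*u1*u3 - v4*u2^2 + v4*u2*u3 - v4*u3^2 + v5*w^2*u2*u3 + v5*w*u2^2 - v5*w*u2*u3 + v5*w*u3^2 + v5*u1*u2 + v5*u1*u3 - v5*u2^2 + v5*u2*u3 - v5*u3^2 - w^4*u2^3 - w^4*u3^3 + w^3*u2^3 - 3*w^3*u2^2*u3 - 3*w^3*u2*u3^2 + w^3*u3^3 - 3*w^2*u1*u2^2 - 2*w^2*u1*u2*u3 - 3*w^2*u1*u3^2 - 2*w^2*u2^2*u3 - 2*w^2*u2*u3^2 + w*u1*u2^2 - 10*w*u1*u2*u3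 + w*u1*u3^2 - 4*w*u2^3 + 3*w*u2^2*u3 + 3*w*u2*u3^2 - 4*w*u3^3 - 5*u1^2*u2 - 5*u1^2*u3 - 3*u1*u2^2 + 6*u1*u2*u3 - 3*u1*u3^2 + 4*u2^3 - 3*u2^2*u3 - 3*u2*u3^2 + 4*u3^3) * hwF + (-v4*v5*u1 - v4*v5*u2 - v4*v5*u3 - 2*v4*u1*u2 - 2*v4*u1*u3 - 2*v4*u2*u3 - 2*v5*u1*u2 - 2*v5*u1*u3 - 2*v5*u2*u3 - 2*u1^3 + u1^2*u2 + u1^2*u3 + u1*u2^2 - 5*u1*u2*u3 + u1*u3^2 - 2*u2^3 + u2^2*u3 + u2*u3^2 - 2*u3^3) * h2F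
    exact mul_right_cancel₀ (mul_ne_zero hP0 hQ0) hscaled
  have hprod2 : v4 * v5 = u4 * u5 := by
    have hscaled : (v4 * v5) * ((u1 + w * u2 + w ^ 2 * u3) * (u1 + w ^ 2 * u2 + w * u3)) = (u4 * u5) * ((u1 + w * u2 + w ^ 2 * u3) * (u1 + w ^ 2 * u2 + w * u3)) := by
      linear_combination (w^4*u2*u3 + w^3*u2^2 + w^3*u3^2 + w^2*u1*u2 + w^2*u1*u3 + w^2*u2*u3 + w*u1*u2 + w*u1*u3 + u1^2) * hsig + (-w^4*u1*u2*u3 - w^4*u2^2*u3 - w^4*u2*u3^2 - w^3*u1*u2^2 - w^3*u1*u3^2 - w^3*u2^3 - w^3*u2^2*u3 - w^3*u2*u3^2 - w^3*u3^3 - w^2*u1^2*u2 - w^2*u1^2*u3 - w^2*u1*u2^2 - 3*w^2*u1*u2*u3 - w^2*u1*u3^2 - w^2*u2^2*u3 - w^2*u2*u3^2 - w*u1^2*u2 - w*u1^2*u3 - w*u1*u2^2 - 2*w*u1*u2*u3 - w*u1*u3^2 - u1^3 - u1^2*u2 - u1^2*u3) * hsum2 + (-u5*w^2*u3 - u5*w*u2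 - u5*u1 - w^2*u1*u3 - w^2*u2*u3 - w^2*u3^2 - w*u1*u2 - w*u2^2 - w*u2*u3 - u1^2 - u1*u2 - u1*u3) * hu4Q + (-w^4*u3^2 - 2*w^3*u2*u3 - 2*w^2*u1*u2 - 2*w^2*u1*u3 - 3*w^2*u2^2 - 2*w^2*u2*u3 - 2*w*u1*u2 - 2*w*u1*u3 - 2*w*u2*u3 - 2*w*u3^2 - 3*u1^2 - 2*u1*u2 - 2*u1*u3) * hu5P + (-w^6*u2^2*u3^2 - 2*w^5*u2^3*u3 + w^5*u2^2*u3^2 - 2*w^5*u2*u3^3 - 2*w^4*u1*u2^3 - 2*w^4*u1*u2^2*u3 - 2*w^4*u1*u2*u3^2 - 2*w^4*u1*u3^3 - 3*w^4*u2^4 - 4*w^4*u2^2*u3^2 - 3*w^4*u3^4 - 8*w^3*u1*u2^2*u3 - 8*w^3*u1*u2*u3^2 + 3*w^3*u2^4 - 6*w^3*u2^3*u3 - 9*w^3*u2^2*u3^2 - 6*w^3*u2*u3^3 + 3*w^3*u3^4 - 7*w^2*u1^2*u2^2 - 7*w^2*u1^2*u2*u3 - 7*w^2*u1^2*u3^2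 - 6*w^2*u1*u2^3 - 13*w^2*u1*u2^2*u3 - 13*w^2*u1*u2*u3^2 - 6*w^2*u1*u3^3 - 3*w^2*u2^3*u3 - 7*w^2*u2^2*u3^2 - 3*w^2*u2*u3^3 - 21*w*u1^2*u2*u3 - 3*w*u1*u2^3 - 12*w*u1*u2^2*u3 - 12*w*u1*u2*u3^2 - 3*w*u1*u3^3 - 8*w*u2^4 + 10*w*u2^2*u3^2 - 8*w*u3^4 - 11*u1^3*u2 - 11*u1^3*u3 - 13*u1^2*u2^2 - 5*u1^2*u2*u3 - 13*u1^2*u3^2 + 2*u1*u2^2*u3 + 2*u1*u2*u3^2 + 8*u2^4 - 10*u2^2*u3^2 + 8*u3^4) * hwF + (-4*u1^4 + 5*u1^2*u2^2 - u1^2*u2*u3 + 5*u1^2*u3^2 - u1*u2^2*u3 - u1*u2*u3^2 - 4*u2^4 + 5*u2^2*u3^2 - 4*u3^4) * h2F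
    exact mul_right_cancel₀ (mul_ne_zero hP0 hQ0) hscaled
  have hroot : (v4 + u4) * (v4 + u5) = 0 := by
    linear_combination (-v4) * hsum2 + (1) * hprod2 + (u4*u5 + v4^2) * h2F
  rcases mul_eq_zero.mp hroot with h | h
  · have hv4u4 : v4 = u4 := by linear_combination h - u4 * h2F
    have hv5u5 : v5 = u5 := by linear_combination hsum2 - hv4u4
    rw [hv4u4, hv5u5]
  · have hv4u5 : v4 = u5 := by linear_combination h - u5 * h2F
    have hv5u4 : v5 = u4 := by linear_combination hsum2 - hv4u5
    rw [hv4u5, hv5u4]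
    exact Set.pair_comm u5 u4
end

section
/- Let q = 2^m with m even and let U be the group of (q+1)-st roots of unity in GF(q^2). Suppose {u1,...,u6} is a 6-subset of U with σ_{6,3}(u1,...,u6) = 0 and suppose two 5-subsets A and A' of {u1,...,u6} both satisfy σ_{5,2} = 0. Then A = A'. -/
lemma esymm_cons_aux {F : Type*} [CommRing F] (a : F) (t : Multiset F) (n : ℕ) :
    (a ::ₘ t).esymm (n + 1) = t.esymm (n + 1) + a * t.esymm n := by
  unfold Multiset.esymm
  rw [Multiset.powersetCard_cons, Multiset.map_add, Multiset.sum_add, Multiset.map_map]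
  congr 1
  rw [← Multiset.sum_map_mul_left]
  congr 1
  simp [Function.comp_def]

lemma esymm_over_card {F : Type*} [CommRing F] (t : Multiset F) (n : ℕ)
    (h : Multiset.card t < n) : t.esymm n = 0 := by
  unfold Multiset.esymm
  rw [Multiset.powersetCard_eq_empty _ h]
  simp

lemma esymm_zero_aux {F : Type*} [CommRing F] (t : Multiset F) : t.esymm 0 = 1 := by
  unfold Multiset.esymm
  simp

lemma key4 {F : Type*} [CommRing F] (T : Multiset F) (hc : Multiset.card T = 4)
    (h1 : T.esymm 1 = 0) (h2 : T.esymm 2 = 0) (h3 : T.esymm 3 = 0)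
    (t : F) (ht : t ∈ T) : T.esymm 4 = -t ^ 4 := by
  classical
  have hT : T = t ::ₘ T.erase t := (Multiset.cons_erase ht).symm
  set R := T.erase t with hR
  have hcR : Multiset.card R = 3 := by
    have := congrArg Multiset.card hT
    simp at this
    omega
  rw [hT] at h1 h2 h3 ⊢
  rw [show (1:ℕ) = 0 + 1 from rfl, esymm_cons_aux, esymm_zero_aux] at h1
  rw [show (2:ℕ) = 1 + 1 from rfl, esymm_cons_aux] at h2
  rw [show (3:ℕ) = 2 + 1 from rfl, esymm_cons_aux] at h3
  rw [show (4:ℕ) = 3 + 1 from rfl, esymm_cons_aux, esymm_over_card R 4 (by omega)]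
  norm_num at h1 h2 h3 ⊢
  linear_combination t*h3 - t^2*h2 + t^3*h1

/-- For `q = 2^m`, `m` even: if a 6-subset `s` of `U_{q+1} ⊆ GF(q^2)` satisfies
`σ_{6,3} = 0` and two 5-subsets `A, A'` of `s` both satisfy `σ_{5,2} = 0`,
then `A = A'`. -/
theorem stmt_13 (m : ℕ) (hm : 0 < m) (hme : Even m) (F : Type*) [Field F] [Fintype F]
    (hF : Fintype.card F = 2 ^ (2 * m))
    (s : Finset F) (hscard : s.card = 6)
    (hsU : ∀ u ∈ s, u ^ (2 ^ m + 1) = 1)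
    (hs63 : Multiset.esymm s.val 3 = 0)
    (A A' : Finset F)
    (hA : A ⊆ s) (hAcard : A.card = 5) (hA52 : Multiset.esymm A.val 2 = 0)
    (hA' : A' ⊆ s) (hA'card : A'.card = 5) (hA'52 : Multiset.esymm A'.val 2 = 0) :
    A = A' := by
  classical
  -- characteristic 2
  have htwo : (2 : F) = 0 := by
    obtain ⟨p, -, n, hp, hcard⟩ := FiniteField.card' F
    have hdvd : p ∣ 2 ^ (2 * m) := by
      rw [← hF, hcard]
      exact dvd_pow_self p n.pos.ne'
    have hp2 : p = 2 := by
      have h := Nat.Prime.dvd_of_dvd_pow hp hdvd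
      exact (Nat.prime_dvd_prime_iff_eq hp Nat.prime_two).mp h
    haveI : CharP F p := by
      obtain ⟨p', hcp⟩ := CharP.exists F
      haveI := hcp
      obtain ⟨n', hp', hcard'⟩ := FiniteField.card F p'
      have : p' = p := by
        have h1 : p' ∣ p ^ (n : ℕ) := by
          rw [← hcard, hcard']
          exact dvd_pow_self p' n'.2.ne'
        have := Nat.Prime.dvd_of_dvd_pow hp' h1
        exact ((Nat.prime_dvd_prime_iff_eq hp' hp).mp this)
      rwa [this] at hcp
    subst hp2
    exact_mod_cast CharP.cast_eq_zero F 2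
  -- extract the omitted elements
  have hAle : A.val ≤ s.val := Finset.val_le_iff.mpr hA
  have hA'le : A'.val ≤ s.val := Finset.val_le_iff.mpr hA'
  have hcx : Multiset.card (s.val - A.val) = 1 := by
    rw [Multiset.card_sub hAle]
    rw [Finset.card_def] at hscard hAcard
    omega
  have hcy : Multiset.card (s.val - A'.val) = 1 := by
    rw [Multiset.card_sub hA'le]
    rw [Finset.card_def] at hscard hA'card
    omega
  obtain ⟨x, hx⟩ := Multiset.card_eq_one.mp hcx
  obtain ⟨y, hy⟩ := Multiset.card_eq_one.mp hcy
  have hsx : s.val = x ::ₘ A.val := by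
    rw [← tsub_add_cancel_of_le hAle, hx, Multiset.singleton_add]
  have hsy : s.val = y ::ₘ A'.val := by
    rw [← tsub_add_cancel_of_le hA'le, hy, Multiset.singleton_add]
  by_cases hxy : x = y
  · subst hxy
    apply Finset.eq_of_veq
    exact (Multiset.cons_inj_right x).mp (hsx ▸ hsy)
  exfalso
  -- esymm expansions along x
  have h1x : s.val.esymm 1 = A.val.esymm 1 + x := by
    rw [hsx, show (1:ℕ) = 0 + 1 from rfl, esymm_cons_aux, esymm_zero_aux]; ring
  have h2x : s.val.esymm 2 = x * A.val.esymm 1 := by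
    rw [hsx, show (2:ℕ) = 1 + 1 from rfl, esymm_cons_aux]; rw [hA52]; ring
  have h3x : A.val.esymm 3 = 0 := by
    have := hs63
    rw [hsx, show (3:ℕ) = 2 + 1 from rfl, esymm_cons_aux, hA52] at this
    norm_num at this
    linear_combination this
  have h1y : s.val.esymm 1 = A'.val.esymm 1 + y := by
    rw [hsy, show (1:ℕ) = 0 + 1 from rfl, esymm_cons_aux, esymm_zero_aux]; ring
  have h2y : s.val.esymm 2 = y * A'.val.esymm 1 := by
    rw [hsy, show (2:ℕ) = 1 + 1 from rfl, esymm_cons_aux]; rw [hA'52]; ring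
  -- quadratic relations
  have qx : x ^ 2 - s.val.esymm 1 * x + s.val.esymm 2 = 0 := by
    linear_combination h2x - x * h1x
  have qy : y ^ 2 - s.val.esymm 1 * y + s.val.esymm 2 = 0 := by
    linear_combination h2y - y * h1y
  have he1 : s.val.esymm 1 = x + y := by
    have h : (x - y) * (x + y - s.val.esymm 1) = 0 := by linear_combination qx - qy
    rcases mul_eq_zero.mp h with h' | h'
    · exact absurd (sub_eq_zero.mp h') hxy
    · linear_combination -h'
  -- A.val.esymm 1 = y
  have hA1 : A.val.esymm 1 = y := by
    have := h1x
    rw [he1] at this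
    linear_combination -this
  -- y is in A
  have hyA : y ∈ A.val := by
    have hys : y ∈ s.val := by rw [hsy]; exact Multiset.mem_cons_self y _
    rw [hsx] at hys
    rcases Multiset.mem_cons.mp hys with h | h
    · exact absurd h.symm hxy
    · exact h
  set T := A.val.erase y with hTdef
  have hAT : A.val = y ::ₘ T := (Multiset.cons_erase hyA).symm
  have hcT : Multiset.card T = 4 := by
    have := congrArg Multiset.card hAT
    rw [Multiset.card_cons] at this
    rw [Finset.card_def] at hAcard
    omega
  have hT1 : T.esymm 1 = 0 := by
    have := hA1
    rw [hAT, show (1:ℕ) = 0 + 1 from rfl, esymm_cons_aux, esymm_zero_aux] at this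
    norm_num at this
    linear_combination this
  have hT2 : T.esymm 2 = 0 := by
    have := hA52
    rw [hAT, show (2:ℕ) = 1 + 1 from rfl, esymm_cons_aux, hT1] at this
    norm_num at this
    linear_combination this
  have hT3 : T.esymm 3 = 0 := by
    have := h3x
    rw [hAT, show (3:ℕ) = 2 + 1 from rfl, esymm_cons_aux, hT2] at this
    norm_num at this
    linear_combination this
  -- two distinct elements of T
  have hTnodup : T.Nodup := (A.nodup).erase y
  obtain ⟨t1, ht1⟩ := Multiset.exists_mem_of_ne_zero
    (show T ≠ 0 by intro h; rw [h] at hcT; simp at hcT)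
  obtain ⟨t2, ht2e⟩ := Multiset.exists_mem_of_ne_zero
    (show T.erase t1 ≠ 0 by
      intro h
      have := congrArg Multiset.card h
      rw [Multiset.card_erase_of_mem ht1, hcT] at this
      simp at this)
  have ht2 : t2 ∈ T := Multiset.mem_of_mem_erase ht2e
  have hne : t1 ≠ t2 := by
    intro h
    subst h
    exact hTnodup.notMem_erase ht2e
  have ha := key4 T hcT hT1 hT2 hT3 t1 ht1
  have hb := key4 T hcT hT1 hT2 hT3 t2 ht2
  have heq : t1 ^ 4 = t2 ^ 4 := by
    have := ha.symm.trans hb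
    linear_combination -this
  have hfour : (t1 - t2) ^ 4 = 0 := by
    linear_combination heq + (-2*t1^3*t2 + 3*t1^2*t2^2 - 2*t1*t2^3 + t2^4) * htwo
  have := pow_eq_zero_iff (n := 4) (by norm_num) |>.mp hfour
  exact hne (sub_eq_zero.mp this)
end

section
/- Let q = 2^m and let U be the group of (q+1)-st roots of unity in GF(q^2). For any four pairwise distinct elements u1, u2, u3, u4 of U, the elementary symmetric polynomials σ_{4,1} = Σ u_i and σ_{4,3} = Σ_{i<j<k} u_i u_j u_k are both nonzero, and for each i ∈ {1,2,3,4}, both σ_{4,3} + u_i·σ_{4,2} and σ_{4,2} + u_i·σ_{4,1} are nonzero. -/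
section stmt14aux
variable {F : Type*} [Field F]

private lemma stmt14_char2 {m : ℕ} [Fintype F] (hF : Fintype.card F = 2 ^ (2*m)) : CharP F 2 := by
  have hc : (ringChar F) ∣ 2^(2*m) := by
    rw [← hF]
    exact (CharP.cast_eq_zero_iff F (ringChar F) _).mp (FiniteField.cast_card_eq_zero F)
  have hp : Nat.Prime (ringChar F) := CharP.char_is_prime F (ringChar F)
  have : ringChar F = 2 := (Nat.prime_dvd_prime_iff_eq hp Nat.prime_two).mp (hp.dvd_of_dvd_pow hc)
  exact this ▸ ringChar.charP F

private lemma stmt14_cube (two0 : (2:F) = 0) (a b c d : F) (hab : a ≠ b) (hcd : c ≠ d)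
    (h1 : b*c + b*d + c*d + a*a = 0) (h2 : b*c*d + a*a*(b+c+d) = 0) : False := by
  have kb : (b+a)^2*(c+d) = 0 := by
    linear_combination b*h1 + h2 + (a*b*c + a*b*d - a^2*b - b*c*d)*two0
  have hba : b + a ≠ 0 := fun h => hab ((show b = a by linear_combination h - a*two0).symm)
  have hcd' : c + d ≠ 0 := fun h => hcd (by linear_combination h - d*two0)
  rcases mul_eq_zero.mp kb with h | h
  · exact hba (pow_eq_zero_iff two_ne_zero |>.mp h)
  · exact hcd' h

private lemma stmt14_key (m : ℕ) [Fintype F] (hF : Fintype.card F = 2 ^ (2*m))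
    (a b c d : F)
    (ha : a ^ (2^m+1) = 1) (hb : b ^ (2^m+1) = 1) (hc : c ^ (2^m+1) = 1) (hd : d ^ (2^m+1) = 1)
    (hab : a ≠ b) (hcd : c ≠ d) :
    b*c + b*d + c*d + a*a ≠ 0 ∧ b*c*d + a*a*(b+c+d) ≠ 0 := by
  haveI : CharP F 2 := stmt14_char2 hF
  haveI : Fact (Nat.Prime 2) := ⟨Nat.prime_two⟩
  have two0 : (2:F) = 0 := CharP.cast_eq_zero F 2
  have frob : ∀ x y : F, (x+y)^(2^m) = x^(2^m)+y^(2^m) := fun x y => add_pow_char_pow x y 2 m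
  rw [pow_succ] at ha hb hc hd
  obtain ⟨A, hA⟩ : ∃ x, a^(2^m) = x := ⟨_, rfl⟩
  obtain ⟨B, hB⟩ : ∃ x, b^(2^m) = x := ⟨_, rfl⟩
  obtain ⟨C, hC⟩ : ∃ x, c^(2^m) = x := ⟨_, rfl⟩
  obtain ⟨D, hD⟩ : ∃ x, d^(2^m) = x := ⟨_, rfl⟩
  rw [hA] at ha; rw [hB] at hb; rw [hC] at hc; rw [hD] at hd
  have dir1 : b*c + b*d + c*d + a*a = 0 → b*c*d + a*a*(b+c+d) = 0 := by
    intro E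
    have e : (b*c + b*d + c*d + a*a)^(2^m) = 0 := by
      rw [E]; exact zero_pow (by positivity)
    simp only [frob, mul_pow, hA, hB, hC, hD] at e
    linear_combination (a*a*b*c*d)*e - (a*a*d*c*C + a*a*c*d*D)*hb - (a*a*d + a*a*b*d*D)*hc
      - (a*a*c + a*a*b)*hd - (b*c*d*(a*A+1))*ha
  have dir2 : b*c*d + a*a*(b+c+d) = 0 → b*c + b*d + c*d + a*a = 0 := by
    intro E
    have e : (b*c*d + a*a*(b+c+d))^(2^m) = 0 := by
      rw [E]; exact zero_pow (by positivity)
    simp only [frob, mul_pow, hA, hB, hC, hD] at e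
    linear_combination (a*a*b*c*d)*e - ((c*d+b*d+b*c)*(a*A+1))*ha - (a*a + c*d*a*a*A*A)*hb
      - (a*a*b*B + b*d*a*a*A*A)*hc - (a*a*b*B*c*C + b*c*a*a*A*A)*hd
  exact ⟨fun E => stmt14_cube two0 a b c d hab hcd E (dir1 E),
         fun E => stmt14_cube two0 a b c d hab hcd (dir2 E) E⟩

private lemma stmt14_s1 (m : ℕ) [Fintype F] (hF : Fintype.card F = 2 ^ (2*m))
    (a b c d : F)
    (ha : a ^ (2^m+1) = 1) (hb : b ^ (2^m+1) = 1) (hc : c ^ (2^m+1) = 1) (hd : d ^ (2^m+1) = 1)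
    (hab : a ≠ b) (hac : a ≠ c) (hbc : b ≠ c) :
    a + b + c + d ≠ 0 := by
  haveI : CharP F 2 := stmt14_char2 hF
  haveI : Fact (Nat.Prime 2) := ⟨Nat.prime_two⟩
  have two0 : (2:F) = 0 := CharP.cast_eq_zero F 2
  have frob : ∀ x y : F, (x+y)^(2^m) = x^(2^m)+y^(2^m) := fun x y => add_pow_char_pow x y 2 m
  rw [pow_succ] at ha hb hc hd
  obtain ⟨A, hA⟩ : ∃ x, a^(2^m) = x := ⟨_, rfl⟩
  obtain ⟨B, hB⟩ : ∃ x, b^(2^m) = x := ⟨_, rfl⟩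
  obtain ⟨C, hC⟩ : ∃ x, c^(2^m) = x := ⟨_, rfl⟩
  obtain ⟨D, hD⟩ : ∃ x, d^(2^m) = x := ⟨_, rfl⟩
  rw [hA] at ha; rw [hB] at hb; rw [hC] at hc; rw [hD] at hd
  intro E
  have e : (a+b+c+d)^(2^m) = 0 := by rw [E]; exact zero_pow (by positivity)
  simp only [frob, hA, hB, hC, hD] at e
  have E3 : a*b*c + a*b*d + a*c*d + b*c*d = 0 := by
    linear_combination (a*b*c*d)*e - (b*c*d)*ha - (a*c*d)*hb - (a*b*d)*hc - (a*b*c)*hd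
  have key : (a+b)*(a+c)*(b+c) = 0 := by
    linear_combination (a*b+a*c+b*c)*E - E3
  have nab : a + b ≠ 0 := fun h => hab (by linear_combination h - b*two0)
  have nac : a + c ≠ 0 := fun h => hac (by linear_combination h - c*two0)
  have nbc : b + c ≠ 0 := fun h => hbc (by linear_combination h - c*two0)
  rcases mul_eq_zero.mp key with h | h
  · rcases mul_eq_zero.mp h with h | h
    · exact nab h
    · exact nac h
  · exact nbc h

private lemma stmt14_s3 (m : ℕ) [Fintype F] (hF : Fintype.card F = 2 ^ (2*m))
    (a b c d : F)
    (ha : a ^ (2^m+1) = 1) (hb : b ^ (2^m+1) = 1) (hc : c ^ (2^m+1) = 1) (hd : d ^ (2^m+1) = 1)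
    (hab : a ≠ b) (hac : a ≠ c) (hbc : b ≠ c) :
    a*b*c + a*b*d + a*c*d + b*c*d ≠ 0 := by
  haveI : CharP F 2 := stmt14_char2 hF
  haveI : Fact (Nat.Prime 2) := ⟨Nat.prime_two⟩
  have frob : ∀ x y : F, (x+y)^(2^m) = x^(2^m)+y^(2^m) := fun x y => add_pow_char_pow x y 2 m
  have ha' := ha; have hb' := hb; have hc' := hc; have hd' := hd
  rw [pow_succ] at ha' hb' hc' hd'
  obtain ⟨A, hA⟩ : ∃ x, a^(2^m) = x := ⟨_, rfl⟩
  obtain ⟨B, hB⟩ : ∃ x, b^(2^m) = x := ⟨_, rfl⟩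
  obtain ⟨C, hC⟩ : ∃ x, c^(2^m) = x := ⟨_, rfl⟩
  obtain ⟨D, hD⟩ : ∃ x, d^(2^m) = x := ⟨_, rfl⟩
  rw [hA] at ha'; rw [hB] at hb'; rw [hC] at hc'; rw [hD] at hd'
  intro E
  have e : (a*b*c + a*b*d + a*c*d + b*c*d)^(2^m) = 0 := by
    rw [E]; exact zero_pow (by positivity)
  simp only [frob, mul_pow, hA, hB, hC, hD] at e
  have E1 : a + b + c + d = 0 := by
    linear_combination (a*b*c*d)*e - (b+c+d)*ha' - (a + a*A*(c+d))*hb'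
      - (a*A*b*B*d + a*A*b + a*b*B)*hc' - (a*A*b*B*c + a*A*c*C*b + b*B*c*C*a)*hd'
  exact stmt14_s1 m hF a b c d ha hb hc hd hab hac hbc E1

end stmt14aux

/-- For four pairwise distinct `(q+1)`-st roots of unity `u1, u2, u3, u4` in `GF(q^2)`,
`q = 2^m`: `σ_{4,1} ≠ 0`, `σ_{4,3} ≠ 0`, and for each `u ∈ {u1,u2,u3,u4}` both
`σ_{4,3} + u·σ_{4,2}` and `σ_{4,2} + u·σ_{4,1}` are nonzero. -/
theorem stmt_14 (m : ℕ) (hm : 0 < m) (F : Type*) [Field F] [Fintype F]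
    (hF : Fintype.card F = 2 ^ (2 * m))
    (u1 u2 u3 u4 : F)
    (h1 : u1 ^ (2 ^ m + 1) = 1) (h2 : u2 ^ (2 ^ m + 1) = 1)
    (h3 : u3 ^ (2 ^ m + 1) = 1) (h4 : u4 ^ (2 ^ m + 1) = 1)
    (h12 : u1 ≠ u2) (h13 : u1 ≠ u3) (h14 : u1 ≠ u4)
    (h23 : u2 ≠ u3) (h24 : u2 ≠ u4) (h34 : u3 ≠ u4)
    (s1 s2 s3 : F)
    (hs1 : s1 = u1 + u2 + u3 + u4)
    (hs2 : s2 = u1 * u2 + u1 * u3 + u1 * u4 + u2 * u3 + u2 * u4 + u3 * u4)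
    (hs3 : s3 = u1 * u2 * u3 + u1 * u2 * u4 + u1 * u3 * u4 + u2 * u3 * u4) :
    s1 ≠ 0 ∧ s3 ≠ 0 ∧
    ∀ u ∈ ({u1, u2, u3, u4} : Set F), s3 + u * s2 ≠ 0 ∧ s2 + u * s1 ≠ 0 := by
  haveI : CharP F 2 := stmt14_char2 hF
  have two0 : (2:F) = 0 := CharP.cast_eq_zero F 2
  refine ⟨?_, ?_, ?_⟩
  · rw [hs1]
    exact stmt14_s1 m hF u1 u2 u3 u4 h1 h2 h3 h4 h12 h13 h23
  · rw [hs3]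
    exact stmt14_s3 m hF u1 u2 u3 u4 h1 h2 h3 h4 h12 h13 h23
  · intro u hu
    simp only [Set.mem_insert_iff, Set.mem_singleton_iff] at hu
    rcases hu with h | h | h | h
    · subst h
      obtain ⟨k1, k2⟩ := stmt14_key m hF u u2 u3 u4 h1 h2 h3 h4 h12 h34
      constructor
      · intro h; apply k2
        linear_combination h - hs3 - u*hs2 - (u*(u2*u3 + u2*u4 + u3*u4))*two0
      · intro h; apply k1
        linear_combination h - hs2 - u*hs1 - (u*(u2 + u3 + u4))*two0
    · subst h
      obtain ⟨k1, k2⟩ := stmt14_key m hF u u1 u3 u4 h2 h1 h3 h4 (Ne.symm h12) h34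
      constructor
      · intro h; apply k2
        linear_combination h - hs3 - u*hs2 - (u*(u1*u3 + u1*u4 + u3*u4))*two0
      · intro h; apply k1
        linear_combination h - hs2 - u*hs1 - (u*(u1 + u3 + u4))*two0
    · subst h
      obtain ⟨k1, k2⟩ := stmt14_key m hF u u1 u2 u4 h3 h1 h2 h4 (Ne.symm h13) h24
      constructor
      · intro h; apply k2
        linear_combination h - hs3 - u*hs2 - (u*(u1*u2 + u1*u4 + u2*u4))*two0
      · intro h; apply k1
        linear_combination h - hs2 - u*hs1 - (u*(u1 + u2 + u4))*two0
    · subst h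
      obtain ⟨k1, k2⟩ := stmt14_key m hF u u1 u2 u3 h4 h1 h2 h3 (Ne.symm h14) h23
      constructor
      · intro h; apply k2
        linear_combination h - hs3 - u*hs2 - (u*(u1*u2 + u1*u3 + u2*u3))*two0
      · intro h; apply k1
        linear_combination h - hs2 - u*hs1 - (u*(u1 + u2 + u3))*two0
end

section
/- Let q = 2^m and let U be the group of (q+1)-st roots of unity in GF(q^2). For any four pairwise distinct elements u1, u2, u3, u4 of U and each i ∈ {1,2,3,4}, the square root of σ_{4,3}/σ_{4,1} lies in U, and (σ_{4,3} + u_i·σ_{4,2})/(σ_{4,2} + u_i·σ_{4,1}) lies in U. -/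
section Aux

private theorem char_two_of_card {F : Type*} [Field F] [Fintype F] {m : ℕ}
    (hm : 0 < m) (hF : Fintype.card F = 2 ^ (2 * m)) : CharP F 2 := by
  obtain ⟨p, hcp⟩ := CharP.exists F
  haveI := hcp
  have hpp : p.Prime := CharP.char_is_prime F p
  obtain ⟨n, -, hn⟩ := FiniteField.card F p
  have hdvd : p ∣ 2 ^ (2 * m) := by
    rw [← hF, hn]; exact dvd_pow_self p n.pos.ne'
  have hp2 : p = 2 :=
    (Nat.prime_dvd_prime_iff_eq hpp Nat.prime_two).mp (hpp.dvd_of_dvd_pow hdvd)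
  rwa [hp2] at hcp

private theorem aux_part2 (m : ℕ) (hm : 0 < m) (F : Type*) [Field F] [Fintype F]
    (hF : Fintype.card F = 2 ^ (2 * m))
    (u v x y : F)
    (hu : u ^ (2 ^ m + 1) = 1) (hv : v ^ (2 ^ m + 1) = 1)
    (hx : x ^ (2 ^ m + 1) = 1) (hy : y ^ (2 ^ m + 1) = 1)
    (hvx : v ≠ x) (hvy : v ≠ y) (hxy : x ≠ y)
    (s1 s2 s3 : F)
    (hs1 : s1 = u + v + x + y)
    (hs2 : s2 = u * v + u * x + u * y + v * x + v * y + x * y)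
    (hs3 : s3 = u * v * x + u * v * y + u * x * y + v * x * y) :
    ((s3 + u * s2) / (s2 + u * s1)) ^ (2 ^ m + 1) = 1 := by
  haveI : CharP F 2 := char_two_of_card hm hF
  haveI : Fact (Nat.Prime 2) := ⟨Nat.prime_two⟩
  have htwo : (2 : F) = 0 := by exact_mod_cast CharP.cast_eq_zero F 2
  have hu0 : u ≠ 0 := by rintro rfl; rw [zero_pow (by positivity)] at hu; exact one_ne_zero hu.symm
  have hv0 : v ≠ 0 := by rintro rfl; rw [zero_pow (by positivity)] at hv; exact one_ne_zero hv.symm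
  have hx0 : x ≠ 0 := by rintro rfl; rw [zero_pow (by positivity)] at hx; exact one_ne_zero hx.symm
  have hy0 : y ≠ 0 := by rintro rfl; rw [zero_pow (by positivity)] at hy; exact one_ne_zero hy.symm
  have hue : u ^ 2 ^ m * u = 1 := by rw [← pow_succ]; exact hu
  have hve : v ^ 2 ^ m * v = 1 := by rw [← pow_succ]; exact hv
  have hxe : x ^ 2 ^ m * x = 1 := by rw [← pow_succ]; exact hx
  have hye : y ^ 2 ^ m * y = 1 := by rw [← pow_succ]; exact hy
  have hexp1 : s1 ^ 2 ^ m = u ^ 2 ^ m + v ^ 2 ^ m + x ^ 2 ^ m + y ^ 2 ^ m := by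
    simp only [hs1, add_pow_char_pow]
  have hexp2 : s2 ^ 2 ^ m = u ^ 2 ^ m * v ^ 2 ^ m + u ^ 2 ^ m * x ^ 2 ^ m
      + u ^ 2 ^ m * y ^ 2 ^ m + v ^ 2 ^ m * x ^ 2 ^ m + v ^ 2 ^ m * y ^ 2 ^ m
      + x ^ 2 ^ m * y ^ 2 ^ m := by
    simp only [hs2, add_pow_char_pow, mul_pow]
  have hexp3 : s3 ^ 2 ^ m = u ^ 2 ^ m * v ^ 2 ^ m * x ^ 2 ^ m
      + u ^ 2 ^ m * v ^ 2 ^ m * y ^ 2 ^ m + u ^ 2 ^ m * x ^ 2 ^ m * y ^ 2 ^ m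
      + v ^ 2 ^ m * x ^ 2 ^ m * y ^ 2 ^ m := by
    simp only [hs3, add_pow_char_pow, mul_pow]
  have hA : s1 ^ 2 ^ m * (u * v * x * y) = s3 := by
    rw [hexp1, hs3]
    linear_combination (v * x * y) * hue + (u * x * y) * hve + (u * v * y) * hxe
      + (u * v * x) * hye
  have hB : s2 ^ 2 ^ m * (u * v * x * y) = s2 := by
    rw [hexp2, hs2]
    linear_combination (v * x * y * v ^ 2 ^ m + v * x * y * x ^ 2 ^ m + v * x * y * y ^ 2 ^ m) * hue
      + (u * x * y * x ^ 2 ^ m + u * x * y * y ^ 2 ^ m + x * y) * hve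
      + (u * v * y * y ^ 2 ^ m + u * y + v * y) * hxe
      + (u * v + u * x + v * x) * hye
  have hC : s3 ^ 2 ^ m * (u * v * x * y) = s1 := by
    rw [hexp3, hs1]
    linear_combination
      (v * x * y * (v ^ 2 ^ m * x ^ 2 ^ m) + v * x * y * (v ^ 2 ^ m * y ^ 2 ^ m)
        + v * x * y * (x ^ 2 ^ m * y ^ 2 ^ m)) * hue
      + (u * x * y * (x ^ 2 ^ m * y ^ 2 ^ m) + x * y * x ^ 2 ^ m + x * y * y ^ 2 ^ m) * hve
      + (u * y * y ^ 2 ^ m + v * y * y ^ 2 ^ m + y) * hxe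
      + (u + v + x) * hye
  have hDN : (s2 + u * s1) ^ 2 ^ m * (u * (u * v * x * y)) = s3 + u * s2 := by
    rw [add_pow_char_pow, mul_pow]
    linear_combination u * hB + (s1 ^ 2 ^ m * (u * v * x * y)) * hue + hA
  have hND : (s3 + u * s2) ^ 2 ^ m * (u * (u * v * x * y)) = s2 + u * s1 := by
    rw [add_pow_char_pow, mul_pow]
    linear_combination u * hC + (s2 ^ 2 ^ m * (u * v * x * y)) * hue + hB
  have hD0 : s2 + u * s1 ≠ 0 := by
    intro hD
    have hN : s3 + u * s2 = 0 := by
      rw [← hDN, hD, zero_pow (by positivity), zero_mul]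
    simp only [hs1, hs2, hs3] at hD hN
    have hzero : (v + x) * ((v + y) * (x + y)) = 0 := by
      linear_combination hN + (v + x + y) * hD
        + (-(u ^ 2 * v) - u ^ 2 * x - u ^ 2 * y - u * v ^ 2 - 3 * (u * v * x) - 3 * (u * v * y)
          - u * x ^ 2 - 3 * (u * x * y) - u * y ^ 2 - v * x * y) * htwo
    rcases mul_eq_zero.mp hzero with h' | h'
    · exact hvx (by linear_combination h' - x * htwo)
    · rcases mul_eq_zero.mp h' with h'' | h''
      · exact hvy (by linear_combination h'' - y * htwo)
      · exact hxy (by linear_combination h'' - y * htwo)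
  have hue0 : u * (u * v * x * y) ≠ 0 :=
    mul_ne_zero hu0 (mul_ne_zero (mul_ne_zero (mul_ne_zero hu0 hv0) hx0) hy0)
  rw [div_pow, div_eq_one_iff_eq (pow_ne_zero _ hD0)]
  have hcancel : (s3 + u * s2) ^ (2 ^ m + 1) * (u * (u * v * x * y))
      = (s2 + u * s1) ^ (2 ^ m + 1) * (u * (u * v * x * y)) := by
    rw [pow_succ, pow_succ]
    linear_combination (s3 + u * s2) * hND - (s2 + u * s1) * hDN
  exact mul_right_cancel₀ hue0 hcancel

end Aux

/-- For four pairwise distinct `(q+1)`-st roots of unity `u1, u2, u3, u4` in `GF(q^2)`,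
`q = 2^m`: the square root of `σ_{4,3}/σ_{4,1}` lies in `U_{q+1}`, and for each
`u ∈ {u1,u2,u3,u4}`, `(σ_{4,3} + u·σ_{4,2})/(σ_{4,2} + u·σ_{4,1})` lies in `U_{q+1}`. -/
theorem stmt_15 (m : ℕ) (hm : 0 < m) (F : Type*) [Field F] [Fintype F]
    (hF : Fintype.card F = 2 ^ (2 * m))
    (u1 u2 u3 u4 : F)
    (h1 : u1 ^ (2 ^ m + 1) = 1) (h2 : u2 ^ (2 ^ m + 1) = 1)
    (h3 : u3 ^ (2 ^ m + 1) = 1) (h4 : u4 ^ (2 ^ m + 1) = 1)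
    (h12 : u1 ≠ u2) (h13 : u1 ≠ u3) (h14 : u1 ≠ u4)
    (h23 : u2 ≠ u3) (h24 : u2 ≠ u4) (h34 : u3 ≠ u4)
    (s1 s2 s3 : F)
    (hs1 : s1 = u1 + u2 + u3 + u4)
    (hs2 : s2 = u1 * u2 + u1 * u3 + u1 * u4 + u2 * u3 + u2 * u4 + u3 * u4)
    (hs3 : s3 = u1 * u2 * u3 + u1 * u2 * u4 + u1 * u3 * u4 + u2 * u3 * u4) :
    (∀ w : F, w ^ 2 = s3 / s1 → w ^ (2 ^ m + 1) = 1) ∧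
    ∀ u ∈ ({u1, u2, u3, u4} : Set F),
      ((s3 + u * s2) / (s2 + u * s1)) ^ (2 ^ m + 1) = 1 := by
  haveI : CharP F 2 := char_two_of_card hm hF
  haveI : Fact (Nat.Prime 2) := ⟨Nat.prime_two⟩
  have htwo : (2 : F) = 0 := by exact_mod_cast CharP.cast_eq_zero F 2
  have hu10 : u1 ≠ 0 := by rintro rfl; rw [zero_pow (by positivity)] at h1; exact one_ne_zero h1.symm
  have hu20 : u2 ≠ 0 := by rintro rfl; rw [zero_pow (by positivity)] at h2; exact one_ne_zero h2.symm
  have hu30 : u3 ≠ 0 := by rintro rfl; rw [zero_pow (by positivity)] at h3; exact one_ne_zero h3.symm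
  have hu40 : u4 ≠ 0 := by rintro rfl; rw [zero_pow (by positivity)] at h4; exact one_ne_zero h4.symm
  have hue1 : u1 ^ 2 ^ m * u1 = 1 := by rw [← pow_succ]; exact h1
  have hue2 : u2 ^ 2 ^ m * u2 = 1 := by rw [← pow_succ]; exact h2
  have hue3 : u3 ^ 2 ^ m * u3 = 1 := by rw [← pow_succ]; exact h3
  have hue4 : u4 ^ 2 ^ m * u4 = 1 := by rw [← pow_succ]; exact h4
  have hexp1 : s1 ^ 2 ^ m = u1 ^ 2 ^ m + u2 ^ 2 ^ m + u3 ^ 2 ^ m + u4 ^ 2 ^ m := by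
    simp only [hs1, add_pow_char_pow]
  have hexp3 : s3 ^ 2 ^ m = u1 ^ 2 ^ m * u2 ^ 2 ^ m * u3 ^ 2 ^ m
      + u1 ^ 2 ^ m * u2 ^ 2 ^ m * u4 ^ 2 ^ m + u1 ^ 2 ^ m * u3 ^ 2 ^ m * u4 ^ 2 ^ m
      + u2 ^ 2 ^ m * u3 ^ 2 ^ m * u4 ^ 2 ^ m := by
    simp only [hs3, add_pow_char_pow, mul_pow]
  have hA : s1 ^ 2 ^ m * (u1 * u2 * u3 * u4) = s3 := by
    rw [hexp1, hs3]
    linear_combination (u2 * u3 * u4) * hue1 + (u1 * u3 * u4) * hue2 + (u1 * u2 * u4) * hue3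
      + (u1 * u2 * u3) * hue4
  have hC : s3 ^ 2 ^ m * (u1 * u2 * u3 * u4) = s1 := by
    rw [hexp3, hs1]
    linear_combination
      (u2 * u3 * u4 * (u2 ^ 2 ^ m * u3 ^ 2 ^ m) + u2 * u3 * u4 * (u2 ^ 2 ^ m * u4 ^ 2 ^ m)
        + u2 * u3 * u4 * (u3 ^ 2 ^ m * u4 ^ 2 ^ m)) * hue1
      + (u1 * u3 * u4 * (u3 ^ 2 ^ m * u4 ^ 2 ^ m) + u3 * u4 * u3 ^ 2 ^ m
        + u3 * u4 * u4 ^ 2 ^ m) * hue2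
      + (u1 * u4 * u4 ^ 2 ^ m + u2 * u4 * u4 ^ 2 ^ m + u4) * hue3
      + (u1 + u2 + u3) * hue4
  have hs1ne : s1 ≠ 0 := by
    intro hz1
    have hz3 : s3 = 0 := by rw [← hA, hz1, zero_pow (by positivity), zero_mul]
    have hq1 : u1 ^ 4 + s1 * u1 ^ 3 + s2 * u1 ^ 2 + s3 * u1 + u1 * u2 * u3 * u4 = 0 := by
      rw [hs1, hs2, hs3]
      linear_combination (u1 ^ 4 + u1 ^ 3 * u2 + u1 ^ 3 * u3 + u1 ^ 3 * u4 + u1 ^ 2 * u2 * u3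
        + u1 ^ 2 * u2 * u4 + u1 ^ 2 * u3 * u4 + u1 * u2 * u3 * u4) * htwo
    have hq2 : u2 ^ 4 + s1 * u2 ^ 3 + s2 * u2 ^ 2 + s3 * u2 + u1 * u2 * u3 * u4 = 0 := by
      rw [hs1, hs2, hs3]
      linear_combination (u1 * u2 ^ 3 + u1 * u2 ^ 2 * u3 + u1 * u2 ^ 2 * u4 + u1 * u2 * u3 * u4
        + u2 ^ 4 + u2 ^ 3 * u3 + u2 ^ 3 * u4 + u2 ^ 2 * u3 * u4) * htwo
    have hq3 : u3 ^ 4 + s1 * u3 ^ 3 + s2 * u3 ^ 2 + s3 * u3 + u1 * u2 * u3 * u4 = 0 := by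
      rw [hs1, hs2, hs3]
      linear_combination (u1 * u2 * u3 ^ 2 + u1 * u2 * u3 * u4 + u1 * u3 ^ 3 + u1 * u3 ^ 2 * u4
        + u2 * u3 ^ 3 + u2 * u3 ^ 2 * u4 + u3 ^ 4 + u3 ^ 3 * u4) * htwo
    have hnn : 2 ^ (2 * m - 1) * 2 = 2 ^ (2 * m) := by
      rw [← pow_succ]; congr 1; omega
    have ha2 : (s2 ^ 2 ^ (2 * m - 1)) ^ 2 = s2 := by
      rw [← pow_mul, hnn, ← hF, FiniteField.pow_card]
    have hb2 : ((u1 * u2 * u3 * u4) ^ 2 ^ (2 * m - 1)) ^ 2 = u1 * u2 * u3 * u4 := by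
      rw [← pow_mul, hnn, ← hF, FiniteField.pow_card]
    set aa := s2 ^ 2 ^ (2 * m - 1) with haa
    set bb := (u1 * u2 * u3 * u4) ^ 2 ^ (2 * m - 1) with hbb
    have hQ1 : u1 ^ 2 + aa * u1 + bb = 0 := by
      have hsq : (u1 ^ 2 + aa * u1 + bb) ^ 2 = 0 := by
        linear_combination hq1 - u1 ^ 3 * hz1 - u1 * hz3 + u1 ^ 2 * ha2 + hb2
          + (aa * u1 ^ 3 + bb * u1 ^ 2 + aa * bb * u1) * htwo
      exact pow_eq_zero_iff (by norm_num) |>.mp hsq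
    have hQ2 : u2 ^ 2 + aa * u2 + bb = 0 := by
      have hsq : (u2 ^ 2 + aa * u2 + bb) ^ 2 = 0 := by
        linear_combination hq2 - u2 ^ 3 * hz1 - u2 * hz3 + u2 ^ 2 * ha2 + hb2
          + (aa * u2 ^ 3 + bb * u2 ^ 2 + aa * bb * u2) * htwo
      exact pow_eq_zero_iff (by norm_num) |>.mp hsq
    have hQ3 : u3 ^ 2 + aa * u3 + bb = 0 := by
      have hsq : (u3 ^ 2 + aa * u3 + bb) ^ 2 = 0 := by
        linear_combination hq3 - u3 ^ 3 * hz1 - u3 * hz3 + u3 ^ 2 * ha2 + hb2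
          + (aa * u3 ^ 3 + bb * u3 ^ 2 + aa * bb * u3) * htwo
      exact pow_eq_zero_iff (by norm_num) |>.mp hsq
    have h12a : (u1 - u2) * (u1 + u2 + aa) = 0 := by linear_combination hQ1 - hQ2
    have h13a : (u1 - u3) * (u1 + u3 + aa) = 0 := by linear_combination hQ1 - hQ3
    have hA12 : u1 + u2 + aa = 0 := by
      rcases mul_eq_zero.mp h12a with h | h
      · exact absurd (sub_eq_zero.mp h) h12
      · exact h
    have hA13 : u1 + u3 + aa = 0 := by
      rcases mul_eq_zero.mp h13a with h | h
      · exact absurd (sub_eq_zero.mp h) h13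
      · exact h
    exact h23 (by linear_combination hA12 - hA13)
  constructor
  · intro w hw
    have hw2 : w ^ 2 * s1 = s3 := by rw [hw]; field_simp
    have hv : (w ^ 2) ^ 2 ^ m * s1 ^ 2 ^ m = s3 ^ 2 ^ m := by rw [← mul_pow, hw2]
    have hne : s1 ^ 2 ^ m * s1 * (u1 * u2 * u3 * u4) ≠ 0 :=
      mul_ne_zero (mul_ne_zero (pow_ne_zero _ hs1ne) hs1ne)
        (mul_ne_zero (mul_ne_zero (mul_ne_zero hu10 hu20) hu30) hu40)
    have hX : (w ^ 2) ^ (2 ^ m + 1) = 1 := by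
      have hcalc : ((w ^ 2) ^ 2 ^ m * w ^ 2) * (s1 ^ 2 ^ m * s1 * (u1 * u2 * u3 * u4))
          = 1 * (s1 ^ 2 ^ m * s1 * (u1 * u2 * u3 * u4)) := by
        linear_combination (w ^ 2 * s1 * (u1 * u2 * u3 * u4)) * hv
          + (s3 ^ 2 ^ m * (u1 * u2 * u3 * u4)) * hw2 + s3 * hC - s1 * hA
      rw [pow_succ]
      exact mul_right_cancel₀ hne hcalc
    have hsq : (w ^ (2 ^ m + 1)) ^ 2 = 1 := by rw [pow_right_comm]; exact hX
    have hz : (w ^ (2 ^ m + 1) - 1) ^ 2 = 0 := by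
      linear_combination hsq + (1 - w ^ (2 ^ m + 1)) * htwo
    exact sub_eq_zero.mp (pow_eq_zero_iff (by norm_num) |>.mp hz)
  · intro u hu
    simp only [Set.mem_insert_iff, Set.mem_singleton_iff] at hu
    rcases hu with rfl | rfl | rfl | rfl
    · exact aux_part2 m hm F hF u u2 u3 u4 h1 h2 h3 h4 h23 h24 h34 s1 s2 s3 hs1 hs2 hs3
    · exact aux_part2 m hm F hF u u1 u3 u4 h2 h1 h3 h4 h13 h14 h34 s1 s2 s3
        (by rw [hs1]; ring) (by rw [hs2]; ring) (by rw [hs3]; ring)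
    · exact aux_part2 m hm F hF u u1 u2 u4 h3 h1 h2 h4 h12 h14 h24 s1 s2 s3
        (by rw [hs1]; ring) (by rw [hs2]; ring) (by rw [hs3]; ring)
    · exact aux_part2 m hm F hF u u1 u2 u3 h4 h1 h2 h3 h12 h13 h23 s1 s2 s3
        (by rw [hs1]; ring) (by rw [hs2]; ring) (by rw [hs3]; ring)
end

section
/- Let q = 2^m and let u1, u2, u3, u4 be four pairwise distinct elements of the group U of (q+1)-st roots of unity in GF(q^2). Set w = sqrt(σ_{4,3}/σ_{4,1}) and, for i ∈ {1,2,3,4}, v_i = (σ_{4,3} + u_i·σ_{4,2})/(σ_{4,2} + u_i·σ_{4,1}). Then σ_{6,3}(u1, u2, u3, u4, w, w) = 0 and σ_{6,3}(u1, u2, u3, u4, v_i, u_i) = 0. -/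
lemma esymm6_aux {F : Type*} [CommRing F] (a b c d e f : F) :
    Multiset.esymm ({a, b, c, d, e, f} : Multiset F) 3 =
      a*b*c + a*b*d + a*b*e + a*b*f + a*c*d + a*c*e + a*c*f + a*d*e + a*d*f + a*e*f
      + b*c*d + b*c*e + b*c*f + b*d*e + b*d*f + b*e*f + c*d*e + c*d*f + c*e*f + d*e*f := by
  simp [Multiset.esymm, Multiset.powersetCard_cons, Multiset.insert_eq_cons,
    Multiset.powersetCard_one]
  ring

/-- For four pairwise distinct `(q+1)`-st roots of unity `u1, u2, u3, u4` in `GF(q^2)`,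
`q = 2^m`, with `w = sqrt(σ_{4,3}/σ_{4,1})` and
`v_i = (σ_{4,3} + u_i·σ_{4,2})/(σ_{4,2} + u_i·σ_{4,1})`:
`σ_{6,3}(u1,u2,u3,u4,w,w) = 0` and `σ_{6,3}(u1,u2,u3,u4,v_i,u_i) = 0`. -/
theorem stmt_16 (m : ℕ) (hm : 0 < m) (F : Type*) [Field F] [Fintype F]
    (hF : Fintype.card F = 2 ^ (2 * m))
    (u1 u2 u3 u4 : F)
    (h1 : u1 ^ (2 ^ m + 1) = 1) (h2 : u2 ^ (2 ^ m + 1) = 1)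
    (h3 : u3 ^ (2 ^ m + 1) = 1) (h4 : u4 ^ (2 ^ m + 1) = 1)
    (h12 : u1 ≠ u2) (h13 : u1 ≠ u3) (h14 : u1 ≠ u4)
    (h23 : u2 ≠ u3) (h24 : u2 ≠ u4) (h34 : u3 ≠ u4)
    (s1 s2 s3 : F)
    (hs1 : s1 = u1 + u2 + u3 + u4)
    (hs2 : s2 = u1 * u2 + u1 * u3 + u1 * u4 + u2 * u3 + u2 * u4 + u3 * u4)
    (hs3 : s3 = u1 * u2 * u3 + u1 * u2 * u4 + u1 * u3 * u4 + u2 * u3 * u4)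
    (w : F) (hw : w ^ 2 = s3 / s1) :
    Multiset.esymm ({u1, u2, u3, u4, w, w} : Multiset F) 3 = 0 ∧
    ∀ u ∈ ({u1, u2, u3, u4} : Set F),
      Multiset.esymm ({u1, u2, u3, u4, (s3 + u * s2) / (s2 + u * s1), u} : Multiset F) 3
        = 0 := by
  subst hs1 hs2 hs3
  -- characteristic 2
  haveI hchar : CharP F 2 := by
    haveI := ringChar.charP F
    obtain ⟨n, hp, hcard⟩ := FiniteField.card F (ringChar F)
    have hdvd : ringChar F ∣ 2 ^ (2 * m) := by
      rw [← hF, hcard]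
      exact dvd_pow_self _ n.2.ne'
    have : ringChar F = 2 :=
      (Nat.prime_dvd_prime_iff_eq hp Nat.prime_two).mp (hp.dvd_of_dvd_pow hdvd)
    exact this ▸ ringChar.charP F
  have h2z : (2 : F) = 0 := CharTwo.two_eq_zero
  have frob : ∀ x y : F, (x + y) ^ 2 ^ m = x ^ 2 ^ m + y ^ 2 ^ m :=
    fun x y => add_pow_char_pow x y 2 m
  -- nonvanishing and inverse relations
  have hKpos : (2 : ℕ) ^ m ≠ 0 := by positivity
  have hne : ∀ u : F, u ^ (2 ^ m + 1) = 1 → u ≠ 0 := by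
    intro u hu h0
    rw [h0, zero_pow (by positivity)] at hu
    exact zero_ne_one hu
  have hinv : ∀ u : F, u ^ (2 ^ m + 1) = 1 → u ^ 2 ^ m * u = 1 := by
    intro u hu
    rw [← pow_succ]; exact hu
  have hu10 := hne u1 h1
  have hu20 := hne u2 h2
  have hu30 := hne u3 h3
  have hu40 := hne u4 h4
  have hK1 := hinv u1 h1
  have hK2 := hinv u2 h2
  have hK3 := hinv u3 h3
  have hK4 := hinv u4 h4
  -- Frobenius identities for the symmetric functions
  have hA : (u1 + u2 + u3 + u4) ^ 2 ^ m * (u1 * u2 * u3 * u4)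
      = u1 * u2 * u3 + u1 * u2 * u4 + u1 * u3 * u4 + u2 * u3 * u4 := by
    simp only [frob]
    linear_combination u2*u3*u4*hK1 + u1*u3*u4*hK2 + u1*u2*u4*hK3 + u1*u2*u3*hK4
  have hB : (u1 * u2 + u1 * u3 + u1 * u4 + u2 * u3 + u2 * u4 + u3 * u4) ^ 2 ^ m
      * (u1 * u2 * u3 * u4)
      = u1 * u2 + u1 * u3 + u1 * u4 + u2 * u3 + u2 * u4 + u3 * u4 := by
    simp only [frob, mul_pow]
    linear_combination
      (u3*u4*(u1^2^m*u1))*hK2 + (u3*u4)*hK1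
      + (u2*u4*(u1^2^m*u1))*hK3 + (u2*u4)*hK1
      + (u2*u3*(u1^2^m*u1))*hK4 + (u2*u3)*hK1
      + (u1*u4*(u2^2^m*u2))*hK3 + (u1*u4)*hK2
      + (u1*u3*(u2^2^m*u2))*hK4 + (u1*u3)*hK2
      + (u1*u2*(u3^2^m*u3))*hK4 + (u1*u2)*hK3
  constructor
  · by_cases hz : u1 + u2 + u3 + u4 = 0
    · have h3z : u1 * u2 * u3 + u1 * u2 * u4 + u1 * u3 * u4 + u2 * u3 * u4 = 0 := by
        rw [← hA, hz, zero_pow hKpos, zero_mul]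
      have hw0 : w = 0 := by
        have : w ^ 2 = 0 := by rw [hw, hz, div_zero]
        exact pow_eq_zero_iff two_ne_zero |>.mp this
      rw [hw0, esymm6_aux]
      linear_combination h3z
    · have hww : (u1 + u2 + u3 + u4) * w ^ 2
          = u1 * u2 * u3 + u1 * u2 * u4 + u1 * u3 * u4 + u2 * u3 * u4 := by
        rw [hw]
        field_simp
      rw [esymm6_aux]
      linear_combination hww + (u1*u2*u3 + u1*u2*u4 + u1*u3*u4 + u2*u3*u4
        + (u1*u2 + u1*u3 + u1*u4 + u2*u3 + u2*u4 + u3*u4) * w) * h2z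
  · have key : ∀ u : F, u ^ (2 ^ m + 1) = 1 →
        Multiset.esymm ({u1, u2, u3, u4,
          ((u1 * u2 * u3 + u1 * u2 * u4 + u1 * u3 * u4 + u2 * u3 * u4)
            + u * (u1 * u2 + u1 * u3 + u1 * u4 + u2 * u3 + u2 * u4 + u3 * u4)) /
          ((u1 * u2 + u1 * u3 + u1 * u4 + u2 * u3 + u2 * u4 + u3 * u4)
            + u * (u1 + u2 + u3 + u4)), u} : Multiset F) 3 = 0 := by
      intro u hu
      have hu0 := hne u hu
      have huK := hinv u hu
      by_cases hd : (u1 * u2 + u1 * u3 + u1 * u4 + u2 * u3 + u2 * u4 + u3 * u4)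
          + u * (u1 + u2 + u3 + u4) = 0
      · have hv : ((u1 * u2 * u3 + u1 * u2 * u4 + u1 * u3 * u4 + u2 * u3 * u4)
            + u * (u1 * u2 + u1 * u3 + u1 * u4 + u2 * u3 + u2 * u4 + u3 * u4)) /
            ((u1 * u2 + u1 * u3 + u1 * u4 + u2 * u3 + u2 * u4 + u3 * u4)
            + u * (u1 + u2 + u3 + u4)) = 0 := by rw [hd, div_zero]
        have hs2e : u1 * u2 + u1 * u3 + u1 * u4 + u2 * u3 + u2 * u4 + u3 * u4
            = u * (u1 + u2 + u3 + u4) := by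
          linear_combination hd - u * (u1 + u2 + u3 + u4) * h2z
        have hpow : (u1 * u2 + u1 * u3 + u1 * u4 + u2 * u3 + u2 * u4 + u3 * u4) ^ 2 ^ m
            = u ^ 2 ^ m * (u1 + u2 + u3 + u4) ^ 2 ^ m := by
          rw [hs2e, mul_pow]
        have hgoal : u * (u1 * u2 + u1 * u3 + u1 * u4 + u2 * u3 + u2 * u4 + u3 * u4)
            = u1 * u2 * u3 + u1 * u2 * u4 + u1 * u3 * u4 + u2 * u3 * u4 := by
          calc u * (u1 * u2 + u1 * u3 + u1 * u4 + u2 * u3 + u2 * u4 + u3 * u4)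
              = u * ((u1 * u2 + u1 * u3 + u1 * u4 + u2 * u3 + u2 * u4 + u3 * u4) ^ 2 ^ m
                * (u1 * u2 * u3 * u4)) := by rw [hB]
            _ = u * (u ^ 2 ^ m * (u1 + u2 + u3 + u4) ^ 2 ^ m * (u1 * u2 * u3 * u4)) := by
                rw [hpow]
            _ = (u ^ 2 ^ m * u) * ((u1 + u2 + u3 + u4) ^ 2 ^ m * (u1 * u2 * u3 * u4)) := by
                ring
            _ = u1 * u2 * u3 + u1 * u2 * u4 + u1 * u3 * u4 + u2 * u3 * u4 := by
                rw [huK, hA, one_mul]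
        rw [esymm6_aux, hv]
        linear_combination hgoal
          + (u1*u2*u3 + u1*u2*u4 + u1*u3*u4 + u2*u3*u4) * h2z
      · have hv : ((u1 * u2 * u3 + u1 * u2 * u4 + u1 * u3 * u4 + u2 * u3 * u4)
            + u * (u1 * u2 + u1 * u3 + u1 * u4 + u2 * u3 + u2 * u4 + u3 * u4)) /
            ((u1 * u2 + u1 * u3 + u1 * u4 + u2 * u3 + u2 * u4 + u3 * u4)
            + u * (u1 + u2 + u3 + u4)) *
            ((u1 * u2 + u1 * u3 + u1 * u4 + u2 * u3 + u2 * u4 + u3 * u4)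
            + u * (u1 + u2 + u3 + u4))
            = (u1 * u2 * u3 + u1 * u2 * u4 + u1 * u3 * u4 + u2 * u3 * u4)
            + u * (u1 * u2 + u1 * u3 + u1 * u4 + u2 * u3 + u2 * u4 + u3 * u4) :=
          div_mul_cancel₀ _ hd
        rw [esymm6_aux]
        linear_combination hv + ((u1*u2*u3 + u1*u2*u4 + u1*u3*u4 + u2*u3*u4)
          + u * (u1*u2 + u1*u3 + u1*u4 + u2*u3 + u2*u4 + u3*u4)) * h2z
    intro u hu
    simp only [Set.mem_insert_iff, Set.mem_singleton_iff] at hu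
    rcases hu with rfl | rfl | rfl | rfl
    exacts [key _ h1, key _ h2, key _ h3, key _ h4]
end

section
/- Let q = 2^m and let γ be a primitive (q+1)-st root of unity in GF(q^2). For (a, b, c) ∈ GF(q^2)^3 nonzero, let f(u) = Tr_{GF(q^2)/GF(q)}(a u^3 + b u^2 + c u) and let Z(f) = {u ∈ U_{q+1} : f(u) = 0}, where U_{q+1} is the set of (q+1)-st roots of unity. Then |Z(f)| ≤ 6. -/
open Polynomial

/-- For `q = 2^m` and `(a,b,c) ∈ GF(q^2)^3` nonzero, the function
`f(u) = Tr_{GF(q^2)/GF(q)}(a·u^3 + b·u^2 + c·u) = x + x^q` with `x = a·u^3+b·u^2+c·u`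
has at most 6 zeros among the `(q+1)`-st roots of unity. -/
theorem stmt_17 (m : ℕ) (hm : 0 < m) (F : Type*) [Field F] [Fintype F]
    (hF : Fintype.card F = 2 ^ (2 * m))
    (a b c : F) (habc : (a, b, c) ≠ (0, 0, 0)) :
    Set.ncard {u : F | u ^ (2 ^ m + 1) = 1 ∧
      (a * u ^ 3 + b * u ^ 2 + c * u) + (a * u ^ 3 + b * u ^ 2 + c * u) ^ (2 ^ m) = 0}
      ≤ 6 := by
  classical
  haveI : Fact (Nat.Prime 2) := ⟨Nat.prime_two⟩
  -- characteristic 2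
  have hdvd : (2 : ℕ) ∣ Fintype.card F := by
    rw [hF]
    exact dvd_pow_self 2 (by omega)
  have hr2 : ringChar F = 2 := by
    have h1 : (2 : ℕ) ∣ ringChar F := (prime_dvd_char_iff_dvd_card 2).mpr hdvd
    have h2 : (ringChar F).Prime := by
      haveI := ringChar.charP F
      exact CharP.char_is_prime F (ringChar F)
    exact ((Nat.prime_dvd_prime_iff_eq Nat.prime_two h2).mp h1).symm
  haveI hchar : CharP F 2 := hr2 ▸ ringChar.charP F
  haveI : ExpChar F 2 := ExpChar.prime Nat.prime_two
  set q : ℕ := 2 ^ m with hq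
  -- Frobenius is additive
  have hfrob : ∀ x y : F, (x + y) ^ q = x ^ q + y ^ q := fun x y => add_pow_char_pow (p := 2) (n := m) (x := x) (y := y)
  -- the key polynomial
  set P : F[X] := C a * X ^ 6 + C b * X ^ 5 + C c * X ^ 4 + C (c ^ q) * X ^ 2
      + C (b ^ q) * X + C (a ^ q) with hP
  have hPne : P ≠ 0 := by
    intro h
    apply habc
    have h6 : P.coeff 6 = a := by
      simp only [hP, coeff_add, coeff_C_mul, coeff_X_pow, coeff_C, coeff_X]
      norm_num
    have h5 : P.coeff 5 = b := by
      simp only [hP, coeff_add, coeff_C_mul, coeff_X_pow, coeff_C, coeff_X]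
      norm_num
    have h4 : P.coeff 4 = c := by
      simp only [hP, coeff_add, coeff_C_mul, coeff_X_pow, coeff_C, coeff_X]
      norm_num
    rw [h] at h6 h5 h4
    simp only [coeff_zero] at h6 h5 h4
    simp [← h6, ← h5, ← h4]
  have hsub : {u : F | u ^ (2 ^ m + 1) = 1 ∧
      (a * u ^ 3 + b * u ^ 2 + c * u) + (a * u ^ 3 + b * u ^ 2 + c * u) ^ (2 ^ m) = 0}
      ⊆ (P.roots.toFinset : Set F) := by
    intro u hu
    obtain ⟨h1, h2⟩ := hu
    have h1' : u ^ q * u = 1 := by rw [← pow_succ]; exact h1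
    have hx : (a * u ^ 3 + b * u ^ 2 + c * u) ^ q
        = a ^ q * (u ^ q) ^ 3 + b ^ q * (u ^ q) ^ 2 + c ^ q * u ^ q := by
      rw [hfrob, hfrob, mul_pow, mul_pow, mul_pow, pow_right_comm u 3 q,
        pow_right_comm u 2 q]
    rw [hx] at h2
    simp only [Finset.coe_sort_coe, Multiset.mem_toFinset, Set.mem_setOf_eq,
      Finset.mem_coe, mem_roots, hPne, ne_eq, not_false_eq_true, true_and]
    show P.IsRoot u
    simp only [IsRoot, hP, eval_add, eval_mul, eval_pow, eval_C, eval_X]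
    linear_combination u ^ 3 * h2 +
      (- a ^ q * ((u ^ q * u) ^ 2 + u ^ q * u + 1) - b ^ q * u * (u ^ q * u + 1)
        - c ^ q * u ^ 2) * h1'
  calc Set.ncard {u : F | u ^ (2 ^ m + 1) = 1 ∧
      (a * u ^ 3 + b * u ^ 2 + c * u) + (a * u ^ 3 + b * u ^ 2 + c * u) ^ (2 ^ m) = 0}
      ≤ P.roots.toFinset.card := by
        rw [← Set.ncard_coe_finset]
        exact Set.ncard_le_ncard hsub (P.roots.toFinset.finite_toSet)
    _ ≤ Multiset.card P.roots := Multiset.toFinset_card_le _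
    _ ≤ P.natDegree := P.card_roots'
    _ ≤ 6 := by
        rw [hP]
        compute_degree
end
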